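/- arXiv:2101.00541 — 11 statements merged into one kernel-verified Lean document; each statement's English description precedes it below -/
import Mathlib

section
/- Let α ∈ (0,1), p ∈ [1,∞), T > 0, and let 𝓗 be a real normed space. If q > p/α (in particular q > p), then for every measurable function w : (0,T) → 𝓗 and every t ∈ [0,T], ∫_0^t (t−s)^{α−1} ‖w(s)‖^p ds ≤ ((q−p)/(qα−p))^{(q−p)/q} · t^{α − p/q} · ( ∫_0^t ‖w(s)‖^q ds )^{p/q}. In particular, L^q(0,T;𝓗) embeds continuously into L^p_α(0,T;𝓗). -/
open MeasureTheory Set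
open scoped ENNReal NNReal

/-- `L^q(0,T;𝓗)` embeds continuously into `L^p_α(0,T;𝓗)` for `q > p/α`:
for every measurable `w` and `t ∈ [0,T]`,
`∫_0^t (t-s)^{α-1} ‖w(s)‖^p ds ≤ ((q-p)/(qα-p))^{(q-p)/q} t^{α-p/q} (∫_0^t ‖w(s)‖^q ds)^{p/q}`. -/
theorem stmt1 (α p q T : ℝ) (hα : α ∈ Set.Ioo (0 : ℝ) 1) (hp : 1 ≤ p) (hq : p / α < q)
    (hT : 0 < T) {𝓗 : Type*} [NormedAddCommGroup 𝓗] (w : ℝ → 𝓗)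
    (hw : AEStronglyMeasurable w (volume.restrict (Set.Ioc 0 T))) :
    ∀ t ∈ Set.Icc (0 : ℝ) T,
      ∫⁻ s in Set.Ioc (0 : ℝ) t,
          ENNReal.ofReal ((t - s) ^ (α - 1)) * (‖w s‖₊ : ℝ≥0∞) ^ p
        ≤ ENNReal.ofReal (((q - p) / (q * α - p)) ^ ((q - p) / q) * t ^ (α - p / q)) *
            (∫⁻ s in Set.Ioc (0 : ℝ) t, (‖w s‖₊ : ℝ≥0∞) ^ q) ^ (p / q) := by
  obtain ⟨hα0, hα1⟩ := hα
  intro t ht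
  obtain ⟨ht0, htT⟩ := ht
  have hp0 : 0 < p := lt_of_lt_of_le one_pos hp
  have hpαq : p < q * α := (div_lt_iff₀ hα0).mp hq
  have hq0 : 0 < q := lt_trans (div_pos hp0 hα0) hq
  have hpq : p < q := by nlinarith
  have hqp0 : 0 < q - p := by linarith
  have hqαp0 : 0 < q * α - p := by linarith
  set r : ℝ := q / (q - p) with hr_def
  have hr0 : 0 < r := div_pos hq0 hqp0
  have hconj : r.HolderConjugate (q / p) := by
    refine Real.holderConjugate_iff.mpr ⟨?_, ?_⟩
    · rw [hr_def, lt_div_iff₀ hqp0]; linarith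
    · rw [hr_def, inv_div, inv_div, ← add_div, sub_add_cancel, div_self hq0.ne']
  set β : ℝ := (α - 1) * r with hβ_def
  have hβ1 : -1 < β := by
    rw [hβ_def, hr_def, show (α - 1) * (q / (q - p)) = (α * q - q) / (q - p) by
      field_simp, lt_div_iff₀ hqp0]
    nlinarith
  have hβadd : β + 1 = (q * α - p) / (q - p) := by
    rw [hβ_def, hr_def]; field_simp; ring
  have hβadd0 : 0 < β + 1 := by rw [hβadd]; positivity
  -- measurability
  have hw' : AEStronglyMeasurable w (volume.restrict (Set.Ioc 0 t)) :=
    hw.mono_measure (Measure.restrict_mono (Set.Ioc_subset_Ioc_right htT) le_rfl)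
  have hf : AEMeasurable (fun s : ℝ => ENNReal.ofReal ((t - s) ^ (α - 1)))
      (volume.restrict (Set.Ioc 0 t)) := by fun_prop
  have hg : AEMeasurable (fun s : ℝ => (‖w s‖₊ : ℝ≥0∞) ^ p)
      (volume.restrict (Set.Ioc 0 t)) := by
    have := hw'.nnnorm.aemeasurable.coe_nnreal_ennreal
    fun_prop
  -- Hölder
  have key := ENNReal.lintegral_mul_le_Lp_mul_Lq (volume.restrict (Set.Ioc 0 t)) hconj hf hg
  simp only [Pi.mul_apply] at key
  refine le_trans key ?_
  -- the g-part
  have hgpart : (∫⁻ s in Set.Ioc (0:ℝ) t, ((‖w s‖₊ : ℝ≥0∞) ^ p) ^ (q / p))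
      = ∫⁻ s in Set.Ioc (0:ℝ) t, (‖w s‖₊ : ℝ≥0∞) ^ q := by
    refine lintegral_congr fun s => ?_
    rw [← ENNReal.rpow_mul, mul_div_cancel₀ _ (ne_of_gt hp0)]
  have hexp2 : 1 / (q / p) = p / q := one_div_div q p
  rw [hgpart, hexp2]
  -- the f-part
  have hfpart : (∫⁻ s in Set.Ioc (0:ℝ) t, (ENNReal.ofReal ((t - s) ^ (α - 1))) ^ r)
      = ∫⁻ s in Set.Ioc (0:ℝ) t, ENNReal.ofReal ((t - s) ^ β) := by
    refine setLIntegral_congr_fun measurableSet_Ioc (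
      fun s hs => ?_)
    rw [ENNReal.ofReal_rpow_of_nonneg (Real.rpow_nonneg (by linarith [hs.2]) _) hr0.le,
      ← Real.rpow_mul (by linarith [hs.2])]
  rw [hfpart]
  -- compute the beta integral
  have hint : IntegrableOn (fun s : ℝ => (t - s) ^ β) (Set.Ioc 0 t) := by
    have h1 := (intervalIntegral.intervalIntegrable_rpow' hβ1 (a := 0) (b := t)).comp_sub_left t
    rw [sub_zero, sub_self] at h1
    exact (intervalIntegrable_iff_integrableOn_Ioc_of_le ht0).mp h1.symm
  have hnn : 0 ≤ᵐ[volume.restrict (Set.Ioc 0 t)] fun s : ℝ => (t - s) ^ β :=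
    ae_restrict_of_forall_mem measurableSet_Ioc fun s hs =>
      Real.rpow_nonneg (by linarith [hs.2]) _
  have hval : (∫ s in Set.Ioc (0:ℝ) t, (t - s) ^ β) = t ^ (β + 1) / (β + 1) := by
    rw [← intervalIntegral.integral_of_le ht0]
    have h2 := intervalIntegral.integral_comp_sub_left (a := 0) (b := t)
      (fun x : ℝ => x ^ β) t
    rw [sub_zero, sub_self] at h2
    rw [h2, intervalIntegral.integral_symm, integral_rpow (Or.inl hβ1),
      Real.zero_rpow (ne_of_gt hβadd0)]
    ring
  have hbetaint : (∫⁻ s in Set.Ioc (0:ℝ) t, ENNReal.ofReal ((t - s) ^ β))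
      = ENNReal.ofReal (t ^ (β + 1) / (β + 1)) := by
    rw [← ofReal_integral_eq_lintegral_ofReal hint hnn, hval]
  rw [hbetaint]
  -- final arithmetic
  have hrinv : 1 / r = (q - p) / q := by rw [hr_def, one_div_div]
  have hreal : (t ^ (β + 1) / (β + 1)) ^ ((q - p) / q)
      = ((q - p) / (q * α - p)) ^ ((q - p) / q) * t ^ (α - p / q) := by
    have h1 : t ^ (β + 1) / (β + 1) = t ^ (β + 1) * ((q - p) / (q * α - p)) := by
      rw [hβadd, div_div_eq_mul_div, mul_div_assoc]
    rw [h1, Real.mul_rpow (Real.rpow_nonneg ht0 _) (by positivity),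
      ← Real.rpow_mul ht0, show (β + 1) * ((q - p) / q) = α - p / q by
        rw [hβadd]; field_simp, mul_comm]
  rw [hrinv, ENNReal.ofReal_rpow_of_nonneg
    (div_nonneg (Real.rpow_nonneg ht0 _) hβadd0.le) (by positivity), hreal]
end

section
/- Let α ∈ (0,1) and p ∈ [1,∞). There exists a constant C > 0, depending only on p and α, with the following property: for every T > 0, every real Banach space 𝓗, every partition 𝒫 of [0,T], and every Bochner-integrable f : (0,T) → 𝓗 with ‖f‖_{L^p_α(0,T;𝓗)} < ∞, the piecewise constant average F̄ of f satisfies, for all t ∈ [0,T], ∫_0^t (t−s)^{α−1} ‖F̄(s)‖^p ds ≤ C^p ‖f‖_{L^p_α(0,T;𝓗)}^p, i.e. ‖F̄‖_{L^p_α(0,T;𝓗)} ≤ C ‖f‖_{L^p_α(0,T;𝓗)}. -/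
universe u

open MeasureTheory Set
open scoped ENNReal NNReal

lemma holderA {p : ℝ} (hp : 1 ≤ p) {α : Type*} [MeasurableSpace α] (μ : Measure α) (G : α → ℝ≥0∞)
    (hG : AEMeasurable G μ) :
    (∫⁻ x, G x ∂μ) ^ p ≤ (μ Set.univ) ^ (p - 1) * ∫⁻ x, G x ^ p ∂μ := by
  rcases eq_or_lt_of_le hp with h1 | h1
  · simp [← h1]
  · have hpq : p.HolderConjugate (p / (p - 1)) := Real.HolderConjugate.conjExponent h1
    have h := ENNReal.lintegral_mul_le_Lp_mul_Lq μ hpq hG aemeasurable_const (g := fun _ => 1)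
    simp only [mul_one, ENNReal.one_rpow, lintegral_const, one_mul] at h
    have h2 := ENNReal.rpow_le_rpow h (le_of_lt (lt_of_lt_of_le one_pos hp))
    rw [ENNReal.mul_rpow_of_nonneg _ _ (le_of_lt (lt_of_lt_of_le one_pos hp)),
      ← ENNReal.rpow_mul, ← ENNReal.rpow_mul] at h2
    have hp0 : p ≠ 0 := by positivity
    rw [one_div, inv_mul_cancel₀ hp0, ENNReal.rpow_one] at h2
    have : 1 / (p / (p - 1)) * p = p - 1 := by
      field_simp
    rw [this] at h2
    simpa [one_mul, mul_comm] using h2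

lemma jensenAvg {p : ℝ} (hp : 1 ≤ p) {𝓗 : Type*} [NormedAddCommGroup 𝓗] [NormedSpace ℝ 𝓗]
    {a b : ℝ} (hab : a < b) {f : ℝ → 𝓗} (hf : IntegrableOn f (Set.Ioc a b)) :
    (‖(b - a)⁻¹ • ∫ u in Set.Ioc a b, f u‖₊ : ℝ≥0∞) ^ p
      ≤ ENNReal.ofReal (b - a)⁻¹ * ∫⁻ u in Set.Ioc a b, (‖f u‖₊ : ℝ≥0∞) ^ p := by
  have hτ : (0:ℝ) < b - a := sub_pos.mpr hab
  have hp0 : (0:ℝ) ≤ p := le_trans zero_le_one hp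
  have hnorm : ‖(b - a)⁻¹ • ∫ u in Set.Ioc a b, f u‖
      ≤ (b - a)⁻¹ * ∫ u in Set.Ioc a b, ‖f u‖ := by
    rw [norm_smul, Real.norm_eq_abs, abs_of_pos (inv_pos.mpr hτ)]
    exact mul_le_mul_of_nonneg_left (norm_integral_le_integral_norm f)
      (le_of_lt (inv_pos.mpr hτ))
  have h1 : ((‖(b - a)⁻¹ • ∫ u in Set.Ioc a b, f u‖₊ : ℝ≥0∞))
      ≤ ENNReal.ofReal (b - a)⁻¹ * ∫⁻ u in Set.Ioc a b, (‖f u‖₊ : ℝ≥0∞) := by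
    rw [← show ENNReal.ofReal (∫ u in Set.Ioc a b, ‖f u‖) = ∫⁻ u in Set.Ioc a b, (‖f u‖₊ : ℝ≥0∞) from ofReal_integral_norm_eq_lintegral_enorm hf, ← ENNReal.ofReal_mul
      (le_of_lt (inv_pos.mpr hτ)), ← show ENNReal.ofReal ‖(b - a)⁻¹ • ∫ u in Set.Ioc a b, f u‖ = (‖(b - a)⁻¹ • ∫ u in Set.Ioc a b, f u‖₊ : ℝ≥0∞) from ofReal_norm _]
    exact ENNReal.ofReal_le_ofReal hnorm
  calc (‖(b - a)⁻¹ • ∫ u in Set.Ioc a b, f u‖₊ : ℝ≥0∞) ^ p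
      ≤ (ENNReal.ofReal (b - a)⁻¹ * ∫⁻ u in Set.Ioc a b, (‖f u‖₊ : ℝ≥0∞)) ^ p :=
        ENNReal.rpow_le_rpow h1 hp0
    _ = ENNReal.ofReal (b - a)⁻¹ ^ p * (∫⁻ u in Set.Ioc a b, (‖f u‖₊ : ℝ≥0∞)) ^ p := by
        rw [ENNReal.mul_rpow_of_nonneg _ _ hp0]
    _ ≤ ENNReal.ofReal (b - a)⁻¹ ^ p *
        ((volume (Set.Ioc a b)) ^ (p - 1) * ∫⁻ u in Set.Ioc a b, (‖f u‖₊ : ℝ≥0∞) ^ p) := by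
        refine mul_le_mul_right ?_ _
        have := holderA hp (volume.restrict (Set.Ioc a b)) (fun u => (‖f u‖₊ : ℝ≥0∞))
          hf.aestronglyMeasurable.enorm
        rwa [Measure.restrict_apply_univ] at this
    _ = ENNReal.ofReal (b - a)⁻¹ * ∫⁻ u in Set.Ioc a b, (‖f u‖₊ : ℝ≥0∞) ^ p := by
        rw [← mul_assoc]
        congr 1
        rw [Real.volume_Ioc, ENNReal.ofReal_rpow_of_pos (inv_pos.mpr hτ),
          ENNReal.ofReal_rpow_of_pos hτ, ← ENNReal.ofReal_mul (by positivity)]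
        congr 1
        rw [Real.inv_rpow (le_of_lt hτ), ← Real.rpow_neg (le_of_lt hτ),
          ← Real.rpow_add hτ, ← Real.rpow_neg_one (b - a)]
        congr 1
        ring

lemma kernelInt {α : ℝ} (hα : α ∈ Set.Ioo (0:ℝ) 1) {t a b : ℝ} (hab : a ≤ b) (hbt : b ≤ t) :
    ∫⁻ s in Set.Ioc a b, ENNReal.ofReal ((t - s) ^ (α - 1))
      = ENNReal.ofReal (((t - a) ^ α - (t - b) ^ α) / α) := by
  have h1 : (-1:ℝ) < α - 1 := by linarith [hα.1]
  have hII : IntervalIntegrable (fun s => (t - s) ^ (α - 1)) volume a b := by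
    have := (intervalIntegral.intervalIntegrable_rpow' (a := t - a) (b := t - b) h1).comp_sub_left t
    simpa using this
  have hInt : IntegrableOn (fun s => (t - s) ^ (α - 1)) (Set.Ioc a b) := by
    simpa [intervalIntegrable_iff_integrableOn_Ioc_of_le hab] using hII
  rw [← ofReal_integral_eq_lintegral_ofReal hInt ?_]
  · congr 1
    rw [← intervalIntegral.integral_of_le hab,
      intervalIntegral.integral_comp_sub_left (fun x => x ^ (α - 1)) t, integral_rpow (Or.inl h1)]
    norm_num
  · filter_upwards [ae_restrict_mem measurableSet_Ioc] with s hs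
    exact Real.rpow_nonneg (by linarith [hs.2]) _

lemma avg_le {α : ℝ} (hα : α ∈ Set.Ioo (0:ℝ) 1) {X Y : ℝ} (hY : 0 < Y) (hXY : Y ≤ X) :
    (X ^ α - Y ^ α) / α ≤ (X - Y) * α⁻¹ * X ^ (α - 1) := by
  have hX : 0 < X := lt_of_lt_of_le hY hXY
  have key : X ^ α - Y ^ α ≤ (X - Y) * X ^ (α - 1) := by
    have k : X ^ (α - 1) ≤ Y ^ (α - 1) :=
      Real.rpow_le_rpow_of_nonpos hY hXY (by linarith [hα.2])
    have e1 : X * X ^ (α - 1) = X ^ α := by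
      rw [← Real.rpow_one_add' (le_of_lt hX) (by linarith [hα.1])]
      ring_nf
    have e2 : Y * Y ^ (α - 1) = Y ^ α := by
      rw [← Real.rpow_one_add' (le_of_lt hY) (by linarith [hα.1])]
      ring_nf
    nlinarith [mul_le_mul_of_nonneg_left k (le_of_lt hY)]
  calc (X ^ α - Y ^ α) / α ≤ ((X - Y) * X ^ (α - 1)) / α := by
        exact (div_le_div_iff_of_pos_right hα.1).mpr key
    _ = (X - Y) * α⁻¹ * X ^ (α - 1) := by ring

lemma intervalTerm {α p : ℝ} (hα : α ∈ Set.Ioo (0:ℝ) 1) (hp : 1 ≤ p)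
    {𝓗 : Type*} [NormedAddCommGroup 𝓗] [NormedSpace ℝ 𝓗]
    {a b t : ℝ} (hab : a < b) (hbt : b < t)
    {f : ℝ → 𝓗} (hf : IntegrableOn f (Set.Ioc a b)) :
    ∫⁻ s in Set.Ioc a b, ENNReal.ofReal ((t - s) ^ (α - 1)) *
        (‖(b - a)⁻¹ • ∫ u in Set.Ioc a b, f u‖₊ : ℝ≥0∞) ^ p
      ≤ ENNReal.ofReal α⁻¹ *
        ∫⁻ u in Set.Ioc a b, ENNReal.ofReal ((t - u) ^ (α - 1)) * (‖f u‖₊ : ℝ≥0∞) ^ p := by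
  set K : ℝ≥0∞ := (‖(b - a)⁻¹ • ∫ u in Set.Ioc a b, f u‖₊ : ℝ≥0∞) ^ p with hK
  have hτ : (0:ℝ) < b - a := sub_pos.mpr hab
  have step1 : ∫⁻ s in Set.Ioc a b, ENNReal.ofReal ((t - s) ^ (α - 1)) * K
      = (∫⁻ s in Set.Ioc a b, ENNReal.ofReal ((t - s) ^ (α - 1))) * K := by
    apply lintegral_mul_const'
    exact ENNReal.rpow_ne_top_of_nonneg (le_trans zero_le_one hp) ENNReal.coe_ne_top
  rw [step1, kernelInt hα (le_of_lt hab) (le_of_lt hbt)]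
  have hkb : ENNReal.ofReal (((t - a) ^ α - (t - b) ^ α) / α)
      ≤ ENNReal.ofReal ((b - a) * α⁻¹ * (t - a) ^ (α - 1)) := by
    apply ENNReal.ofReal_le_ofReal
    have := avg_le hα (X := t - a) (Y := t - b) (by linarith) (by linarith)
    calc ((t - a) ^ α - (t - b) ^ α) / α ≤ ((t-a) - (t-b)) * α⁻¹ * (t - a) ^ (α - 1) := this
      _ = (b - a) * α⁻¹ * (t - a) ^ (α - 1) := by ring_nf
  have hKb : K ≤ ENNReal.ofReal (b - a)⁻¹ * ∫⁻ u in Set.Ioc a b, (‖f u‖₊ : ℝ≥0∞) ^ p :=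
    jensenAvg hp hab hf
  calc ENNReal.ofReal (((t - a) ^ α - (t - b) ^ α) / α) * K
      ≤ ENNReal.ofReal ((b - a) * α⁻¹ * (t - a) ^ (α - 1)) *
        (ENNReal.ofReal (b - a)⁻¹ * ∫⁻ u in Set.Ioc a b, (‖f u‖₊ : ℝ≥0∞) ^ p) :=
        mul_le_mul' hkb hKb
    _ = ENNReal.ofReal α⁻¹ * (ENNReal.ofReal ((t - a) ^ (α - 1)) *
          ∫⁻ u in Set.Ioc a b, (‖f u‖₊ : ℝ≥0∞) ^ p) := by
        have h0 : (0:ℝ) ≤ (b - a) * α⁻¹ * (t - a) ^ (α - 1) :=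
          mul_nonneg (mul_nonneg hτ.le (inv_nonneg.mpr hα.1.le))
            (Real.rpow_nonneg (by linarith) _)
        rw [← mul_assoc, ← ENNReal.ofReal_mul h0, ← mul_assoc,
          ← ENNReal.ofReal_mul (inv_nonneg.mpr hα.1.le)]
        congr 1
        rw [show (b - a) * α⁻¹ * (t - a) ^ (α - 1) * (b - a)⁻¹
            = ((b - a) * (b - a)⁻¹) * (α⁻¹ * (t - a) ^ (α - 1)) by ring,
          mul_inv_cancel₀ (ne_of_gt hτ), one_mul]
    _ ≤ ENNReal.ofReal α⁻¹ *
        ∫⁻ u in Set.Ioc a b, ENNReal.ofReal ((t - u) ^ (α - 1)) * (‖f u‖₊ : ℝ≥0∞) ^ p := by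
        refine mul_le_mul_right ?_ _
        rw [← lintegral_const_mul' _ _ ENNReal.ofReal_ne_top]
        apply lintegral_mono_ae
        filter_upwards [ae_restrict_mem measurableSet_Ioc] with u hu
        refine mul_le_mul_left (ENNReal.ofReal_le_ofReal ?_) _
        exact Real.rpow_le_rpow_of_nonpos (by linarith [hu.2]) (by linarith [hu.1])
          (by linarith [hα.2])

lemma lastTerm {α p : ℝ} (hα : α ∈ Set.Ioo (0:ℝ) 1) (hp : 1 ≤ p)
    {𝓗 : Type*} [NormedAddCommGroup 𝓗] [NormedSpace ℝ 𝓗]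
    {a b t : ℝ} (hab : a < b) (hat : a < t) (htb : t ≤ b)
    {f : ℝ → 𝓗} (hf : IntegrableOn f (Set.Ioc a b)) :
    ∫⁻ s in Set.Ioc a t, ENNReal.ofReal ((t - s) ^ (α - 1)) *
        (‖(b - a)⁻¹ • ∫ u in Set.Ioc a b, f u‖₊ : ℝ≥0∞) ^ p
      ≤ ENNReal.ofReal α⁻¹ *
        ∫⁻ u in Set.Ioc a b, ENNReal.ofReal ((b - u) ^ (α - 1)) * (‖f u‖₊ : ℝ≥0∞) ^ p := by
  set K : ℝ≥0∞ := (‖(b - a)⁻¹ • ∫ u in Set.Ioc a b, f u‖₊ : ℝ≥0∞) ^ p with hK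
  have hτ : (0:ℝ) < b - a := sub_pos.mpr hab
  have step1 : ∫⁻ s in Set.Ioc a t, ENNReal.ofReal ((t - s) ^ (α - 1)) * K
      = (∫⁻ s in Set.Ioc a t, ENNReal.ofReal ((t - s) ^ (α - 1))) * K :=
    lintegral_mul_const' _ _ (ENNReal.rpow_ne_top_of_nonneg (le_trans zero_le_one hp)
      ENNReal.coe_ne_top)
  rw [step1, kernelInt hα (le_of_lt hat) le_rfl]
  have hker : ENNReal.ofReal (((t - a) ^ α - (t - t) ^ α) / α)
      ≤ ENNReal.ofReal ((b - a) ^ α * α⁻¹) := by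
    apply ENNReal.ofReal_le_ofReal
    rw [sub_self, Real.zero_rpow (ne_of_gt hα.1), sub_zero, div_eq_mul_inv]
    exact mul_le_mul_of_nonneg_right
      (Real.rpow_le_rpow (by linarith) (by linarith) hα.1.le) (inv_nonneg.mpr hα.1.le)
  have hKb : K ≤ ENNReal.ofReal (b - a)⁻¹ * ∫⁻ u in Set.Ioc a b, (‖f u‖₊ : ℝ≥0∞) ^ p :=
    jensenAvg hp hab hf
  have hne : ∀ᵐ u ∂(volume.restrict (Set.Ioc a b)), u ≠ b := by
    apply ae_restrict_of_ae
    simp [ae_iff, Set.setOf_eq_eq_singleton', measure_singleton]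
  have hEb : (∫⁻ u in Set.Ioc a b, (‖f u‖₊ : ℝ≥0∞) ^ p)
      ≤ ENNReal.ofReal ((b - a) ^ ((1:ℝ) - α)) *
        ∫⁻ u in Set.Ioc a b, ENNReal.ofReal ((b - u) ^ (α - 1)) * (‖f u‖₊ : ℝ≥0∞) ^ p := by
    rw [← lintegral_const_mul' _ _ ENNReal.ofReal_ne_top]
    apply lintegral_mono_ae
    filter_upwards [ae_restrict_mem measurableSet_Ioc, hne] with u hu hub
    have hbu : 0 < b - u := sub_pos.mpr (lt_of_le_of_ne hu.2 hub)
    have h1 : (1:ℝ) ≤ (b - a) ^ ((1:ℝ) - α) * (b - u) ^ (α - 1) := by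
      have : (b - a) ^ (α - 1) ≤ (b - u) ^ (α - 1) :=
        Real.rpow_le_rpow_of_nonpos hbu (by linarith [hu.1]) (by linarith [hα.2])
      calc (1:ℝ) = (b - a) ^ ((1:ℝ) - α) * (b - a) ^ (α - 1) := by
            rw [← Real.rpow_add hτ]; norm_num
        _ ≤ (b - a) ^ ((1:ℝ) - α) * (b - u) ^ (α - 1) :=
            mul_le_mul_of_nonneg_left this (Real.rpow_nonneg hτ.le _)
    calc (‖f u‖₊ : ℝ≥0∞) ^ p = 1 * (‖f u‖₊ : ℝ≥0∞) ^ p := (one_mul _).symm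
      _ ≤ (ENNReal.ofReal ((b - a) ^ ((1:ℝ) - α)) * ENNReal.ofReal ((b - u) ^ (α - 1))) *
          (‖f u‖₊ : ℝ≥0∞) ^ p := by
          refine mul_le_mul_left ?_ _
          rw [← ENNReal.ofReal_mul (Real.rpow_nonneg hτ.le _)]
          exact ENNReal.one_le_ofReal.mpr h1
      _ = ENNReal.ofReal ((b - a) ^ ((1:ℝ) - α)) *
          (ENNReal.ofReal ((b - u) ^ (α - 1)) * (‖f u‖₊ : ℝ≥0∞) ^ p) := by rw [mul_assoc]
  calc ENNReal.ofReal (((t - a) ^ α - (t - t) ^ α) / α) * K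
      ≤ ENNReal.ofReal ((b - a) ^ α * α⁻¹) * (ENNReal.ofReal (b - a)⁻¹ *
          (ENNReal.ofReal ((b - a) ^ ((1:ℝ) - α)) *
          ∫⁻ u in Set.Ioc a b, ENNReal.ofReal ((b - u) ^ (α - 1)) * (‖f u‖₊ : ℝ≥0∞) ^ p)) :=
        mul_le_mul' hker (le_trans hKb (mul_le_mul_right hEb _))
    _ = ENNReal.ofReal ((b - a) ^ α * α⁻¹ * (b - a)⁻¹ * (b - a) ^ ((1:ℝ) - α)) *
          ∫⁻ u in Set.Ioc a b, ENNReal.ofReal ((b - u) ^ (α - 1)) * (‖f u‖₊ : ℝ≥0∞) ^ p := by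
        have n1 : (0:ℝ) ≤ (b - a) ^ α * α⁻¹ :=
          mul_nonneg (Real.rpow_nonneg hτ.le _) (inv_nonneg.mpr hα.1.le)
        rw [← mul_assoc, ← mul_assoc, ← ENNReal.ofReal_mul n1,
          ← ENNReal.ofReal_mul (mul_nonneg n1 (inv_nonneg.mpr hτ.le))]
    _ = ENNReal.ofReal α⁻¹ *
          ∫⁻ u in Set.Ioc a b, ENNReal.ofReal ((b - u) ^ (α - 1)) * (‖f u‖₊ : ℝ≥0∞) ^ p := by
        congr 2
        rw [show (b - a) ^ α * α⁻¹ * (b - a)⁻¹ * (b - a) ^ ((1:ℝ) - α)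
            = ((b - a) ^ α * (b - a)⁻¹ * (b - a) ^ ((1:ℝ) - α)) * α⁻¹ by ring,
          ← Real.rpow_neg_one (b - a), ← Real.rpow_add hτ, ← Real.rpow_add hτ,
          show α + -1 + (1 - α) = 0 by ring, Real.rpow_zero, one_mul]

/-- continuity of averaging: there is a constant `C > 0` depending only on
`p` and `α` such that for every final time `T`, Banach space `𝓗`, partition `𝒫` of `[0,T]`,
and Bochner-integrable `f` with `‖f‖_{L^p_α} ≤ M`, the piecewise constant average `F̄`
satisfies `∫_0^t (t-s)^{α-1} ‖F̄(s)‖^p ds ≤ C^p M^p` for all `t ∈ [0,T]`,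
i.e. `‖F̄‖_{L^p_α} ≤ C ‖f‖_{L^p_α}`. -/
theorem stmt2 (α p : ℝ) (hα : α ∈ Set.Ioo (0 : ℝ) 1) (hp : 1 ≤ p) :
    ∃ C : ℝ, 0 < C ∧
      ∀ (T : ℝ), 0 < T →
      ∀ (𝓗 : Type u) [NormedAddCommGroup 𝓗] [NormedSpace ℝ 𝓗] [CompleteSpace 𝓗],
      ∀ (N : ℕ), 1 ≤ N →
      ∀ (tP : ℕ → ℝ), tP 0 = 0 → tP N = T → (∀ n < N, tP n < tP (n + 1)) →
      ∀ (nidx : ℝ → ℕ),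
        (∀ s ∈ Set.Ioc (0 : ℝ) T,
          1 ≤ nidx s ∧ nidx s ≤ N ∧ tP (nidx s - 1) < s ∧ s ≤ tP (nidx s)) →
      ∀ (f Fbar : ℝ → 𝓗), IntegrableOn f (Set.Ioc 0 T) →
        (∀ s ∈ Set.Ioc (0 : ℝ) T,
          Fbar s = (tP (nidx s) - tP (nidx s - 1))⁻¹ •
            ∫ u in Set.Ioc (tP (nidx s - 1)) (tP (nidx s)), f u) →
      ∀ (M : ℝ), 0 ≤ M →
        (∀ r ∈ Set.Icc (0 : ℝ) T,
          ∫⁻ s in Set.Ioc (0 : ℝ) r,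
              ENNReal.ofReal ((r - s) ^ (α - 1)) * (‖f s‖₊ : ℝ≥0∞) ^ p
            ≤ ENNReal.ofReal (M ^ p)) →
      ∀ t ∈ Set.Icc (0 : ℝ) T,
        ∫⁻ s in Set.Ioc (0 : ℝ) t,
            ENNReal.ofReal ((t - s) ^ (α - 1)) * (‖Fbar s‖₊ : ℝ≥0∞) ^ p
          ≤ ENNReal.ofReal (C ^ p * M ^ p) := by
  obtain ⟨hα0, hα1⟩ := hα
  have hp0 : (0:ℝ) < p := lt_of_lt_of_le one_pos hp
  refine ⟨(2 * α⁻¹) ^ p⁻¹, Real.rpow_pos_of_pos (by positivity) _, ?_⟩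
  have hCp : ((2 * α⁻¹ : ℝ) ^ (p⁻¹ : ℝ)) ^ p = 2 * α⁻¹ := by
    rw [← Real.rpow_mul (by positivity), inv_mul_cancel₀ (ne_of_gt hp0), Real.rpow_one]
  intro T hT 𝓗 _ _ _ N hN tP htP0 htPN hstep nidx hnidx f Fbar hfInt hFbar M hM hbound t ht
  have hmono : ∀ j, j ≤ N → ∀ i, i ≤ j → tP i ≤ tP j := by
    intro j
    induction j with
    | zero => intro _ i hi; simp [Nat.le_zero.mp hi]
    | succ k ih =>
      intro hkN i hi
      rcases Nat.eq_or_lt_of_le hi with h | h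
      · rw [h]
      · exact le_trans (ih (by omega) i (by omega)) (le_of_lt (hstep k (by omega)))
  have huniq : ∀ s : ℝ, ∀ j k : ℕ, 1 ≤ j → j ≤ N → 1 ≤ k → k ≤ N →
      tP (j-1) < s → s ≤ tP j → tP (k-1) < s → s ≤ tP k → j = k := by
    intro s j k hj1 hjN hk1 hkN hj2 hj3 hk2 hk3
    by_contra hne
    rcases Nat.lt_or_ge j k with h | h
    · have : tP j ≤ tP (k-1) := hmono (k-1) (by omega) j (by omega)
      linarith
    · have : tP k ≤ tP (j-1) := hmono (j-1) (by omega) k (by omega)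
      have hkj : k < j := by omega
      linarith [hmono (j-1) (by omega) k (by omega)]
  have hFconst : ∀ n : ℕ, 1 ≤ n → n ≤ N → ∀ s ∈ Set.Ioc (tP (n-1)) (tP n),
      Fbar s = (tP n - tP (n-1))⁻¹ • ∫ u in Set.Ioc (tP (n-1)) (tP n), f u := by
    intro n hn1 hnN s hs
    have hs0 : 0 < s := lt_of_le_of_lt (htP0 ▸ hmono (n-1) (by omega) 0 (Nat.zero_le _)) hs.1
    have hsT : s ≤ T := le_trans hs.2 (htPN ▸ hmono N le_rfl n hnN)
    obtain ⟨ha, hb, hc, hd⟩ := hnidx s ⟨hs0, hsT⟩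
    have he : nidx s = n := huniq s _ _ ha hb hn1 hnN hc hd hs.1 hs.2
    rw [hFbar s ⟨hs0, hsT⟩, he]
  have hIntSub : ∀ n : ℕ, n ≤ N → IntegrableOn f (Set.Ioc (tP (n-1)) (tP n)) := by
    intro n hnN
    exact hfInt.mono_set (Set.Ioc_subset_Ioc (htP0 ▸ hmono (n-1) (by omega) 0 (Nat.zero_le _))
      (htPN ▸ hmono N le_rfl n hnN))
  rcases eq_or_lt_of_le ht.1 with ht0 | ht0
  · rw [← ht0]
    simp
  obtain ⟨hm1, hmN, hml, hmr⟩ := hnidx t ⟨ht0, ht.2⟩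
  set m := nidx t with hm
  have claim : ∀ k : ℕ, k < m →
      ∫⁻ s in Set.Ioc 0 (tP k), ENNReal.ofReal ((t - s) ^ (α - 1)) * (‖Fbar s‖₊ : ℝ≥0∞) ^ p
        ≤ ENNReal.ofReal α⁻¹ *
          ∫⁻ s in Set.Ioc 0 (tP k), ENNReal.ofReal ((t - s) ^ (α - 1)) * (‖f s‖₊ : ℝ≥0∞) ^ p := by
    intro k
    induction k with
    | zero => intro _; simp [htP0]
    | succ k ih =>
      intro hkm
      have hkN : k < N := by omega
      have h0k : (0:ℝ) ≤ tP k := htP0 ▸ hmono k (by omega) 0 (Nat.zero_le _)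
      have hkk1 : tP k < tP (k+1) := hstep k hkN
      have hbt : tP (k+1) < t := lt_of_le_of_lt (hmono (m-1) (by omega) (k+1) (by omega)) hml
      rw [← Set.Ioc_union_Ioc_eq_Ioc h0k (le_of_lt hkk1),
        lintegral_union measurableSet_Ioc (Set.Ioc_disjoint_Ioc_of_le le_rfl),
        lintegral_union measurableSet_Ioc (Set.Ioc_disjoint_Ioc_of_le le_rfl), mul_add]
      refine add_le_add (ih (by omega)) ?_
      have hcong : ∫⁻ s in Set.Ioc (tP k) (tP (k+1)),
            ENNReal.ofReal ((t - s) ^ (α - 1)) * (‖Fbar s‖₊ : ℝ≥0∞) ^ p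
          = ∫⁻ s in Set.Ioc (tP k) (tP (k+1)), ENNReal.ofReal ((t - s) ^ (α - 1)) *
              (‖(tP (k+1) - tP k)⁻¹ • ∫ u in Set.Ioc (tP k) (tP (k+1)), f u‖₊ : ℝ≥0∞) ^ p := by
        apply setLIntegral_congr_fun measurableSet_Ioc
        intro s hs
        beta_reduce
        have := hFconst (k+1) (by omega) (by omega) s (by simpa using hs)
        simp only [Nat.add_sub_cancel] at this
        rw [this]
      rw [hcong]
      have := intervalTerm ⟨hα0, hα1⟩ hp hkk1 hbt
        (by simpa using hIntSub (k+1) (by omega))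
      exact this
  have h0m1 : (0:ℝ) ≤ tP (m-1) := htP0 ▸ hmono (m-1) (by omega) 0 (Nat.zero_le _)
  have hm1m : tP (m-1) < tP m := by
    have := hstep (m-1) (by omega)
    rwa [Nat.sub_add_cancel hm1] at this
  have hmT : tP m ≤ T := htPN ▸ hmono N le_rfl m hmN
  rw [← Set.Ioc_union_Ioc_eq_Ioc h0m1 (le_of_lt hml),
    lintegral_union measurableSet_Ioc (Set.Ioc_disjoint_Ioc_of_le le_rfl)]
  have hfirst : ∫⁻ s in Set.Ioc 0 (tP (m-1)),
        ENNReal.ofReal ((t - s) ^ (α - 1)) * (‖Fbar s‖₊ : ℝ≥0∞) ^ p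
      ≤ ENNReal.ofReal α⁻¹ * ENNReal.ofReal (M ^ p) := by
    refine le_trans (claim (m-1) (by omega)) (mul_le_mul_right ?_ _)
    refine le_trans (lintegral_mono_set (Set.Ioc_subset_Ioc_right (le_of_lt hml))) ?_
    exact hbound t ⟨le_of_lt ht0, ht.2⟩
  have hsecond : ∫⁻ s in Set.Ioc (tP (m-1)) t,
        ENNReal.ofReal ((t - s) ^ (α - 1)) * (‖Fbar s‖₊ : ℝ≥0∞) ^ p
      ≤ ENNReal.ofReal α⁻¹ * ENNReal.ofReal (M ^ p) := by
    have hcong : ∫⁻ s in Set.Ioc (tP (m-1)) t,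
          ENNReal.ofReal ((t - s) ^ (α - 1)) * (‖Fbar s‖₊ : ℝ≥0∞) ^ p
        = ∫⁻ s in Set.Ioc (tP (m-1)) t, ENNReal.ofReal ((t - s) ^ (α - 1)) *
            (‖(tP m - tP (m-1))⁻¹ • ∫ u in Set.Ioc (tP (m-1)) (tP m), f u‖₊ : ℝ≥0∞) ^ p := by
      apply setLIntegral_congr_fun measurableSet_Ioc
      intro s hs
      beta_reduce
      rw [hFconst m hm1 hmN s ⟨hs.1, le_trans hs.2 hmr⟩]
    rw [hcong]
    refine le_trans (lastTerm ⟨hα0, hα1⟩ hp hm1m hml hmr (hIntSub m hmN)) ?_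
    refine mul_le_mul_right ?_ _
    refine le_trans (lintegral_mono_set (Set.Ioc_subset_Ioc_left h0m1)) ?_
    exact hbound (tP m) ⟨le_trans h0m1 (le_of_lt hm1m), hmT⟩
  refine le_trans (add_le_add hfirst hsecond) ?_
  rw [hCp, show (2 * α⁻¹) * M ^ p = α⁻¹ * M ^ p + α⁻¹ * M ^ p by ring,
    ENNReal.ofReal_add (by positivity) (by positivity),
    ENNReal.ofReal_mul (by positivity)]
end

section
/- Let α, β ∈ (0,1). There exists a constant C > 0, depending only on α and β, such that for all real numbers s, r, τ, δ with 0 ≤ s < r, τ > 0 and 0 < δ ≤ τ, one has ∫_s^{min(s+δ, r)} (r−t)^{α−1} (t−s)^{β−1} dt ≤ C (r−s)^{α−1} τ^{β}. -/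
open MeasureTheory Set
open scoped ENNReal

lemma aux_left (a b γ : ℝ) (hab : a ≤ b) (hγ : 0 < γ) :
    ∫⁻ t in Set.Ioc a b, ENNReal.ofReal ((t - a) ^ (γ - 1)) = ENNReal.ofReal ((b - a) ^ γ / γ) := by
  have hint : IntervalIntegrable (fun t => (t - a) ^ (γ - 1)) volume a b := by
    have := (intervalIntegral.intervalIntegrable_rpow' (a := 0) (b := b - a) (r := γ - 1)
      (by linarith)).comp_sub_right a
    simpa using this
  rw [← ofReal_integral_eq_lintegral_ofReal hint.1 ?_]
  · congr 1
    rw [← intervalIntegral.integral_of_le hab,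
      intervalIntegral.integral_comp_sub_right (fun u => u ^ (γ - 1)) a,
      integral_rpow (Or.inl (by linarith))]
    rw [sub_self]
    rw [sub_add_cancel]
    rw [Real.zero_rpow hγ.ne']
    ring
  · filter_upwards [ae_restrict_mem measurableSet_Ioc] with t ht
    exact Real.rpow_nonneg (by linarith [ht.1]) _

lemma aux_right (a b γ : ℝ) (hab : a ≤ b) (hγ : 0 < γ) :
    ∫⁻ t in Set.Ioc a b, ENNReal.ofReal ((b - t) ^ (γ - 1)) = ENNReal.ofReal ((b - a) ^ γ / γ) := by
  have hint : IntervalIntegrable (fun t => (b - t) ^ (γ - 1)) volume a b := by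
    have := (intervalIntegral.intervalIntegrable_rpow' (a := 0) (b := b - a) (r := γ - 1)
      (by linarith)).comp_sub_left b |>.symm
    simpa using this
  rw [← ofReal_integral_eq_lintegral_ofReal hint.1 ?_]
  · congr 1
    rw [← intervalIntegral.integral_of_le hab,
      intervalIntegral.integral_comp_sub_left (fun u => u ^ (γ - 1)) b,
      integral_rpow (Or.inl (by linarith))]
    rw [sub_self, sub_add_cancel, Real.zero_rpow hγ.ne']
    ring
  · filter_upwards [ae_restrict_mem measurableSet_Ioc] with t ht
    exact Real.rpow_nonneg (by linarith [ht.2]) _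

/-- for `α, β ∈ (0,1)` there is `C > 0` depending only on `α, β` such that
for all `0 ≤ s < r`, `τ > 0` and `0 < δ ≤ τ`,
`∫_s^{min(s+δ,r)} (r-t)^{α-1} (t-s)^{β-1} dt ≤ C (r-s)^{α-1} τ^β`. -/
theorem stmt5 (α β : ℝ) (hα : α ∈ Set.Ioo (0 : ℝ) 1) (hβ : β ∈ Set.Ioo (0 : ℝ) 1) :
    ∃ C : ℝ, 0 < C ∧
      ∀ s r τ δ : ℝ, 0 ≤ s → s < r → 0 < τ → 0 < δ → δ ≤ τ →
        ∫⁻ t in Set.Ioc s (min (s + δ) r),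
            ENNReal.ofReal ((r - t) ^ (α - 1) * (t - s) ^ (β - 1))
          ≤ ENNReal.ofReal (C * (r - s) ^ (α - 1) * τ ^ β) := by
  obtain ⟨hα0, hα1⟩ := hα
  obtain ⟨hβ0, hβ1⟩ := hβ
  refine ⟨(2:ℝ) ^ (1 - α) * (1/α + 1/β), by positivity, ?_⟩
  intro s r τ δ hs hsr hτ hδ hδτ
  have hx : 0 < r - s := by linarith
  have hy : 0 < (r - s) / 2 := by linarith
  have hP : (0:ℝ) < (2:ℝ) ^ (1 - α) * (r - s) ^ (α - 1) := by positivity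
  have hpow : ((r - s) / 2) ^ (α - 1) = 2 ^ (1 - α) * (r - s) ^ (α - 1) := by
    rw [Real.div_rpow hx.le (by norm_num : (0:ℝ) ≤ 2)]
    rw [show (α - 1) = -(1 - α) by ring, Real.rpow_neg (by norm_num : (0:ℝ) ≤ 2)]
    field_simp
  have htb : (0:ℝ) < τ ^ β := Real.rpow_pos_of_pos hτ β
  have mb : Measurable fun t : ℝ => ENNReal.ofReal ((t - s) ^ (β - 1)) :=
    Measurable.ennreal_ofReal (by measurability)
  have hm0 : Measurable fun u : ℝ => u ^ (α - 1) := by measurability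
  have ma : Measurable fun t : ℝ => ENNReal.ofReal ((r - t) ^ (α - 1)) :=
    Measurable.ennreal_ofReal (hm0.comp (measurable_const.sub measurable_id))
  have meas1 : Measurable fun t : ℝ => ENNReal.ofReal (((r - s)/2) ^ (α - 1)) *
      ENNReal.ofReal ((t - s) ^ (β - 1)) := measurable_const.mul mb
  have meas2 : Measurable fun t : ℝ => ENNReal.ofReal (((r - s)/2) ^ (β - 1)) *
      ENNReal.ofReal ((r - t) ^ (α - 1)) := measurable_const.mul ma
  rcases le_or_gt (2 * δ) (r - s) with hcase | hcase
  · -- far from r : min = s + δ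
    have hm : min (s + δ) r = s + δ := min_eq_left (by linarith)
    rw [hm]
    calc ∫⁻ t in Set.Ioc s (s + δ),
            ENNReal.ofReal ((r - t) ^ (α - 1) * (t - s) ^ (β - 1))
        ≤ ∫⁻ t in Set.Ioc s (s + δ), ENNReal.ofReal (((r - s)/2) ^ (α - 1)) *
            ENNReal.ofReal ((t - s) ^ (β - 1)) := by
          refine setLIntegral_mono meas1 fun t ht => ?_
          rw [← ENNReal.ofReal_mul (Real.rpow_nonneg hy.le _)]
          refine ENNReal.ofReal_le_ofReal (mul_le_mul_of_nonneg_right ?_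
            (Real.rpow_nonneg (by linarith [ht.1]) _))
          exact Real.rpow_le_rpow_of_nonpos hy (by linarith [ht.2]) (by linarith)
      _ = ENNReal.ofReal (((r - s)/2) ^ (α - 1)) *
            ENNReal.ofReal ((s + δ - s) ^ β / β) := by
          rw [lintegral_const_mul _ mb, aux_left s (s + δ) β (by linarith) hβ0]
      _ ≤ ENNReal.ofReal ((2:ℝ) ^ (1 - α) * (1/α + 1/β) * (r - s) ^ (α - 1) * τ ^ β) := by
          rw [← ENNReal.ofReal_mul (Real.rpow_nonneg hy.le _)]
          refine ENNReal.ofReal_le_ofReal ?_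
          have hdb : δ ^ β ≤ τ ^ β := Real.rpow_le_rpow hδ.le hδτ hβ0.le
          rw [show s + δ - s = δ by ring, hpow]
          calc 2 ^ (1 - α) * (r - s) ^ (α - 1) * (δ ^ β / β)
              ≤ 2 ^ (1 - α) * (r - s) ^ (α - 1) * (τ ^ β / β) := by
                gcongr
            _ ≤ 2 ^ (1 - α) * (1/α + 1/β) * (r - s) ^ (α - 1) * τ ^ β := by
                have h2 : (0:ℝ) < 2 ^ (1 - α) * (r - s) ^ (α - 1) * τ ^ β * (1/α) := by
                  positivity
                rw [div_eq_mul_inv, ← one_div]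
                nlinarith [h2]
  · -- close to r
    have hmid1 : s ≤ s + (r - s)/2 := by linarith
    have hmid2 : s + (r - s)/2 ≤ r := by linarith
    have hsub : Set.Ioc s (min (s + δ) r) ⊆ Set.Ioc s r :=
      Set.Ioc_subset_Ioc_right (min_le_right _ _)
    calc ∫⁻ t in Set.Ioc s (min (s + δ) r),
            ENNReal.ofReal ((r - t) ^ (α - 1) * (t - s) ^ (β - 1))
        ≤ ∫⁻ t in Set.Ioc s r,
            ENNReal.ofReal ((r - t) ^ (α - 1) * (t - s) ^ (β - 1)) :=
          lintegral_mono_set hsub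
      _ = (∫⁻ t in Set.Ioc s (s + (r - s)/2),
            ENNReal.ofReal ((r - t) ^ (α - 1) * (t - s) ^ (β - 1))) +
          ∫⁻ t in Set.Ioc (s + (r - s)/2) r,
            ENNReal.ofReal ((r - t) ^ (α - 1) * (t - s) ^ (β - 1)) := by
          rw [← lintegral_union measurableSet_Ioc
            (Set.Ioc_disjoint_Ioc.mpr (by simp)),
            Set.Ioc_union_Ioc_eq_Ioc hmid1 hmid2]
      _ ≤ ENNReal.ofReal (((r - s)/2) ^ (α - 1)) * ENNReal.ofReal (((r - s)/2) ^ β / β) +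
          ENNReal.ofReal (((r - s)/2) ^ (β - 1)) * ENNReal.ofReal (((r - s)/2) ^ α / α) := by
          gcongr ?_ + ?_
          · calc ∫⁻ t in Set.Ioc s (s + (r - s)/2),
                  ENNReal.ofReal ((r - t) ^ (α - 1) * (t - s) ^ (β - 1))
                ≤ ∫⁻ t in Set.Ioc s (s + (r - s)/2), ENNReal.ofReal (((r - s)/2) ^ (α - 1)) *
                    ENNReal.ofReal ((t - s) ^ (β - 1)) := by
                  refine setLIntegral_mono meas1 fun t ht => ?_
                  rw [← ENNReal.ofReal_mul (Real.rpow_nonneg hy.le _)]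
                  refine ENNReal.ofReal_le_ofReal (mul_le_mul_of_nonneg_right ?_
                    (Real.rpow_nonneg (by linarith [ht.1]) _))
                  exact Real.rpow_le_rpow_of_nonpos hy (by linarith [ht.2]) (by linarith)
              _ = ENNReal.ofReal (((r - s)/2) ^ (α - 1)) *
                    ENNReal.ofReal (((r - s)/2) ^ β / β) := by
                  rw [lintegral_const_mul _ mb,
                    aux_left s (s + (r - s)/2) β hmid1 hβ0,
                    show s + (r - s)/2 - s = (r - s)/2 by ring]
          · calc ∫⁻ t in Set.Ioc (s + (r - s)/2) r,
                  ENNReal.ofReal ((r - t) ^ (α - 1) * (t - s) ^ (β - 1))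
                ≤ ∫⁻ t in Set.Ioc (s + (r - s)/2) r, ENNReal.ofReal (((r - s)/2) ^ (β - 1)) *
                    ENNReal.ofReal ((r - t) ^ (α - 1)) := by
                  refine setLIntegral_mono meas2 fun t ht => ?_
                  rw [← ENNReal.ofReal_mul (Real.rpow_nonneg hy.le _)]
                  refine ENNReal.ofReal_le_ofReal ?_
                  rw [mul_comm (((r - s)/2) ^ (β - 1))]
                  refine mul_le_mul_of_nonneg_left ?_
                    (Real.rpow_nonneg (by linarith [ht.2]) _)
                  exact Real.rpow_le_rpow_of_nonpos hy (by linarith [ht.1]) (by linarith)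
              _ = ENNReal.ofReal (((r - s)/2) ^ (β - 1)) *
                    ENNReal.ofReal (((r - s)/2) ^ α / α) := by
                  rw [lintegral_const_mul _ ma,
                    aux_right (s + (r - s)/2) r α hmid2 hα0,
                    show r - (s + (r - s)/2) = (r - s)/2 by ring]
      _ ≤ ENNReal.ofReal ((2:ℝ) ^ (1 - α) * (1/α + 1/β) * (r - s) ^ (α - 1) * τ ^ β) := by
          rw [← ENNReal.ofReal_mul (Real.rpow_nonneg hy.le _),
            ← ENNReal.ofReal_mul (Real.rpow_nonneg hy.le _),
            ← ENNReal.ofReal_add (by positivity) (by positivity)]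
          refine ENNReal.ofReal_le_ofReal ?_
          have key : ((r - s)/2) ^ (β - 1) * ((r - s)/2) ^ α
              = ((r - s)/2) ^ (α - 1) * ((r - s)/2) ^ β := by
            rw [← Real.rpow_add hy, ← Real.rpow_add hy]; ring_nf
          have hyb : ((r - s)/2) ^ β ≤ τ ^ β :=
            Real.rpow_le_rpow hy.le (by linarith) hβ0.le
          have e1 : ((r - s)/2) ^ (α - 1) * (((r - s)/2) ^ β / β) +
              ((r - s)/2) ^ (β - 1) * (((r - s)/2) ^ α / α)
              = (((r - s)/2) ^ (α - 1) * ((r - s)/2) ^ β) * (1/β + 1/α) := by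
            linear_combination (1/α) * key
          rw [e1, hpow]
          calc 2 ^ (1 - α) * (r - s) ^ (α - 1) * ((r - s)/2) ^ β * (1/β + 1/α)
              ≤ 2 ^ (1 - α) * (r - s) ^ (α - 1) * τ ^ β * (1/β + 1/α) := by
                refine mul_le_mul_of_nonneg_right ?_ (by positivity)
                exact mul_le_mul_of_nonneg_left hyb hP.le
            _ = 2 ^ (1 - α) * (1/α + 1/β) * (r - s) ^ (α - 1) * τ ^ β := by ring
end

section
/- Let α, β ∈ (0,1). There exists a constant C > 0, depending only on α and β, such that for all real numbers s, r, τ with 0 ≤ s < r and τ > 0, one has ∫_s^r (r−t)^{α−1} ( (t−s)^{β−1} − (t−s+τ)^{β−1} ) dt ≤ C τ^{β} (r−s)^{α−1}. -/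
open MeasureTheory Set
open scoped ENNReal

lemma stmt6_key {β : ℝ} (hβ0 : 0 < β) (hβ1 : β < 1) {x τ : ℝ} (hx : 0 < x) (hτ : 0 < τ) :
    x ^ (β - 1) - (x + τ) ^ (β - 1) ≤ τ ^ β / x := by
  have hxτ : 0 < x + τ := by linarith
  set f := x ^ (β - 1) - (x + τ) ^ (β - 1) with hf
  have hf0 : 0 ≤ f :=
    sub_nonneg.2 (Real.rpow_le_rpow_of_nonpos hx (by linarith) (by linarith))
  have h1 : f ≤ x ^ (β - 1) := by
    have := Real.rpow_nonneg hxτ.le (β - 1)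
    simp only [hf]; linarith
  have h2 : f ≤ τ * x ^ (β - 2) := by
    have hu0 : 0 < x / (x + τ) := div_pos hx hxτ
    have hu1 : x / (x + τ) ≤ 1 := by rw [div_le_one hxτ]; linarith
    have hkey : x ^ (β - 1) * (x / (x + τ)) ^ (1 - β) = (x + τ) ^ (β - 1) := by
      rw [Real.div_rpow hx.le hxτ.le, mul_div_assoc', ← Real.rpow_add hx,
        show β - 1 + (1 - β) = 0 by ring, Real.rpow_zero, one_div,
        ← Real.rpow_neg_one ((x + τ) ^ (1 - β)), ← Real.rpow_mul hxτ.le,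
        show (1 - β) * (-1) = β - 1 by ring]
    have hupow : x / (x + τ) ≤ (x / (x + τ)) ^ (1 - β) := by
      calc x / (x + τ) = (x / (x + τ)) ^ (1 : ℝ) := (Real.rpow_one _).symm
        _ ≤ _ := Real.rpow_le_rpow_of_exponent_ge hu0 hu1 (by linarith)
    have hxp : (0:ℝ) ≤ x ^ (β - 1) := Real.rpow_nonneg hx.le _
    have step : f ≤ x ^ (β - 1) * (1 - x / (x + τ)) := by
      calc f = x ^ (β - 1) * (1 - (x / (x + τ)) ^ (1 - β)) := by
              rw [mul_sub, mul_one, hkey]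
        _ ≤ x ^ (β - 1) * (1 - x / (x + τ)) := by
              apply mul_le_mul_of_nonneg_left _ hxp; linarith
    have h1mu : 1 - x / (x + τ) = τ / (x + τ) := by field_simp; ring
    rw [h1mu] at step
    refine step.trans ?_
    calc x ^ (β - 1) * (τ / (x + τ)) = x ^ (β - 1) * τ / (x + τ) := by ring
      _ ≤ x ^ (β - 1) * τ / x := by gcongr; linarith
      _ = τ * x ^ (β - 2) := by
          rw [show (β - 2 : ℝ) = (β - 1) - 1 by ring, Real.rpow_sub hx (β-1) 1, Real.rpow_one]; ring
  calc f = f ^ (1 : ℝ) := (Real.rpow_one f).symm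
    _ = f ^ ((1 - β) + β) := by rw [show (1 - β) + β = (1:ℝ) by ring]
    _ = f ^ (1 - β) * f ^ β := Real.rpow_add' hf0 (by intro h; linarith)
    _ ≤ (x ^ (β - 1)) ^ (1 - β) * (τ * x ^ (β - 2)) ^ β := by
        apply mul_le_mul (Real.rpow_le_rpow hf0 h1 (by linarith))
          (Real.rpow_le_rpow hf0 h2 hβ0.le) (Real.rpow_nonneg hf0 β)
          (Real.rpow_nonneg (Real.rpow_nonneg hx.le _) _)
    _ = x ^ ((β - 1) * (1 - β)) * (τ ^ β * x ^ ((β - 2) * β)) := by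
        rw [← Real.rpow_mul hx.le, Real.mul_rpow hτ.le (Real.rpow_nonneg hx.le _),
          ← Real.rpow_mul hx.le]
    _ = τ ^ β * (x ^ ((β - 1) * (1 - β)) * x ^ ((β - 2) * β)) := by ring
    _ = τ ^ β * x ^ ((β - 1) * (1 - β) + (β - 2) * β) := by rw [← Real.rpow_add hx]
    _ = τ ^ β * x ^ (-1 : ℝ) := by rw [show (β-1)*(1-β) + (β-2)*β = (-1:ℝ) by ring]
    _ = τ ^ β / x := by rw [Real.rpow_neg_one]; ring


-- region A integrability & integral bound
lemma stmt6_A {β : ℝ} (hβ0 : 0 < β) (hβ1 : β < 1) {s m τ : ℝ} (hsm : s < m) (hτ : 0 < τ) :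
    IntegrableOn (fun t => (t - s) ^ (β - 1) - (t - s + τ) ^ (β - 1)) (Set.Ioc s m) volume ∧
    ∫ t in Set.Ioc s m, ((t - s) ^ (β - 1) - (t - s + τ) ^ (β - 1)) ≤ τ ^ β / β := by
  have hI1 : IntervalIntegrable (fun t => (t - s) ^ (β - 1)) volume s m := by
    have := (intervalIntegral.intervalIntegrable_rpow' (a := 0) (b := m - s)
      (r := β - 1) (by linarith)).comp_sub_right s
    simpa using this
  have hI2 : IntervalIntegrable (fun t => (t - s + τ) ^ (β - 1)) volume s m := by
    have := (intervalIntegral.intervalIntegrable_rpow' (a := τ) (b := m - s + τ)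
      (r := β - 1) (by linarith)).comp_sub_right (s - τ)
    have h2 : ∀ t : ℝ, t - (s - τ) = t - s + τ := fun t => by ring
    simp only [h2] at this
    simpa using this
  have hIsub := hI1.sub hI2
  constructor
  · exact (intervalIntegrable_iff_integrableOn_Ioc_of_le hsm.le).1 hIsub
  · rw [← intervalIntegral.integral_of_le hsm.le]
    rw [intervalIntegral.integral_sub hI1 hI2]
    have e1 : (∫ t in s..m, (t - s) ^ (β - 1)) = (m - s) ^ β / β := by
      rw [intervalIntegral.integral_comp_sub_right (fun x => x ^ (β - 1)) s]
      rw [integral_rpow (Or.inl (by linarith))]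
      rw [show β - 1 + 1 = β by ring, sub_self, Real.zero_rpow (ne_of_gt hβ0), sub_zero]
    have e2 : (∫ t in s..m, (t - s + τ) ^ (β - 1)) = ((m - s + τ) ^ β - τ ^ β) / β := by
      have h2 : ∀ t : ℝ, t - s + τ = t - (s - τ) := fun t => by ring
      simp only [h2]
      rw [intervalIntegral.integral_comp_sub_right (fun x => x ^ (β - 1)) (s - τ)]
      rw [integral_rpow (Or.inl (by linarith))]
      rw [show β - 1 + 1 = β by ring, show s - (s - τ) = τ by ring, show m - (s - τ) = m - s + τ by ring]
    rw [e1, e2]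
    rw [div_sub_div_same]
    gcongr
    have : (m - s) ^ β ≤ (m - s + τ) ^ β :=
      Real.rpow_le_rpow (by linarith) (by linarith) hβ0.le
    linarith

-- region B integral computation
lemma stmt6_B {α : ℝ} (hα0 : 0 < α) (hα1 : α < 1) {m r : ℝ} (hmr : m < r) :
    IntegrableOn (fun t => (r - t) ^ (α - 1)) (Set.Ioc m r) volume ∧
    ∫ t in Set.Ioc m r, (r - t) ^ (α - 1) = (r - m) ^ α / α := by
  have hI : IntervalIntegrable (fun t => (r - t) ^ (α - 1)) volume m r := by
    have := (intervalIntegral.intervalIntegrable_rpow' (a := r - m) (b := 0)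
      (r := α - 1) (by linarith)).comp_sub_left r
    simpa using this
  constructor
  · exact (intervalIntegrable_iff_integrableOn_Ioc_of_le hmr.le).1 hI
  · rw [← intervalIntegral.integral_of_le hmr.le]
    rw [intervalIntegral.integral_comp_sub_left (fun x => x ^ (α - 1)) r]
    rw [integral_rpow (Or.inl (by linarith))]
    rw [show α - 1 + 1 = α by ring, sub_self, Real.zero_rpow (ne_of_gt hα0), sub_zero]

/-- for `α, β ∈ (0,1)` there is `C > 0` depending only on `α, β` such that
for all `0 ≤ s < r` and `τ > 0`,
`∫_s^r (r-t)^{α-1} ((t-s)^{β-1} - (t-s+τ)^{β-1}) dt ≤ C τ^β (r-s)^{α-1}`. -/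
theorem stmt6 (α β : ℝ) (hα : α ∈ Set.Ioo (0 : ℝ) 1) (hβ : β ∈ Set.Ioo (0 : ℝ) 1) :
    ∃ C : ℝ, 0 < C ∧
      ∀ s r τ : ℝ, 0 ≤ s → s < r → 0 < τ →
        ∫⁻ t in Set.Ioc s r,
            ENNReal.ofReal ((r - t) ^ (α - 1) * ((t - s) ^ (β - 1) - (t - s + τ) ^ (β - 1)))
          ≤ ENNReal.ofReal (C * τ ^ β * (r - s) ^ (α - 1)) := by
  obtain ⟨hα0, hα1⟩ := hα
  obtain ⟨hβ0, hβ1⟩ := hβ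
  refine ⟨(2:ℝ) ^ (1 - α) * (1/α + 1/β), by positivity, ?_⟩
  intro s r τ hs hsr hτ
  set m := (s + r) / 2 with hm
  have hsm : s < m := by rw [hm]; linarith
  have hmr : m < r := by rw [hm]; linarith
  have hR0 : (0:ℝ) < r - s := by linarith
  set R2 := (r - s) / 2 with hR2
  have hR2pos : 0 < R2 := by rw [hR2]; linarith
  have hms : m - s = R2 := by rw [hm, hR2]; ring
  have hrm : r - m = R2 := by rw [hm, hR2]; ring
  rw [← Set.Ioc_union_Ioc_eq_Ioc hsm.le hmr.le,
    lintegral_union measurableSet_Ioc (Set.Ioc_disjoint_Ioc_of_le le_rfl)]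
  obtain ⟨hAint, hAval⟩ := stmt6_A hβ0 hβ1 hsm hτ
  obtain ⟨hBint, hBval⟩ := stmt6_B hα0 hα1 hmr
  -- Part A
  have hA : (∫⁻ t in Set.Ioc s m,
      ENNReal.ofReal ((r - t) ^ (α - 1) * ((t - s) ^ (β - 1) - (t - s + τ) ^ (β - 1))))
      ≤ ENNReal.ofReal (R2 ^ (α - 1) * (τ ^ β / β)) := by
    have step1 : (∫⁻ t in Set.Ioc s m,
        ENNReal.ofReal ((r - t) ^ (α - 1) * ((t - s) ^ (β - 1) - (t - s + τ) ^ (β - 1))))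
        ≤ ∫⁻ t in Set.Ioc s m, ENNReal.ofReal (R2 ^ (α - 1)) *
            ENNReal.ofReal ((t - s) ^ (β - 1) - (t - s + τ) ^ (β - 1)) := by
      apply lintegral_mono_ae
      rw [ae_restrict_iff' measurableSet_Ioc]
      refine ae_of_all _ fun t ht => ?_
      obtain ⟨hts, htm⟩ := ht
      have hg0 : 0 ≤ (t - s) ^ (β - 1) - (t - s + τ) ^ (β - 1) :=
        sub_nonneg.2 (Real.rpow_le_rpow_of_nonpos (by linarith) (by linarith) (by linarith))
      have hle : (r - t) ^ (α - 1) ≤ R2 ^ (α - 1) :=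
        Real.rpow_le_rpow_of_nonpos hR2pos (by linarith [hrm]) (by linarith)
      rw [← ENNReal.ofReal_mul (Real.rpow_nonneg hR2pos.le _)]
      exact ENNReal.ofReal_le_ofReal (mul_le_mul_of_nonneg_right hle hg0)
    refine step1.trans ?_
    rw [lintegral_const_mul' _ _ ENNReal.ofReal_ne_top]
    have hae : 0 ≤ᵐ[volume.restrict (Set.Ioc s m)]
        fun t => (t - s) ^ (β - 1) - (t - s + τ) ^ (β - 1) := by
      filter_upwards [ae_restrict_mem measurableSet_Ioc] with t ht
      exact sub_nonneg.2 (Real.rpow_le_rpow_of_nonpos (by linarith [ht.1]) (by linarith) (by linarith))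
    rw [← ofReal_integral_eq_lintegral_ofReal hAint hae]
    rw [← ENNReal.ofReal_mul (Real.rpow_nonneg hR2pos.le _)]
    exact ENNReal.ofReal_le_ofReal
      (mul_le_mul_of_nonneg_left hAval (Real.rpow_nonneg hR2pos.le _))
  -- Part B
  have hB : (∫⁻ t in Set.Ioc m r,
      ENNReal.ofReal ((r - t) ^ (α - 1) * ((t - s) ^ (β - 1) - (t - s + τ) ^ (β - 1))))
      ≤ ENNReal.ofReal ((τ ^ β / R2) * ((r - m) ^ α / α)) := by
    have step1 : (∫⁻ t in Set.Ioc m r,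
        ENNReal.ofReal ((r - t) ^ (α - 1) * ((t - s) ^ (β - 1) - (t - s + τ) ^ (β - 1))))
        ≤ ∫⁻ t in Set.Ioc m r, ENNReal.ofReal (τ ^ β / R2) *
            ENNReal.ofReal ((r - t) ^ (α - 1)) := by
      apply lintegral_mono_ae
      rw [ae_restrict_iff' measurableSet_Ioc]
      refine ae_of_all _ fun t ht => ?_
      obtain ⟨hmt, htr⟩ := ht
      have hts : 0 < t - s := by linarith
      have hkey := stmt6_key hβ0 hβ1 hts hτ
      have hdiv : τ ^ β / (t - s) ≤ τ ^ β / R2 := by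
        apply div_le_div_of_nonneg_left (Real.rpow_nonneg hτ.le _) hR2pos
        linarith [hms]
      have hrt : (0:ℝ) ≤ (r - t) ^ (α - 1) := Real.rpow_nonneg (by linarith) _
      rw [← ENNReal.ofReal_mul (by positivity)]
      apply ENNReal.ofReal_le_ofReal
      calc (r - t) ^ (α - 1) * ((t - s) ^ (β - 1) - (t - s + τ) ^ (β - 1))
          ≤ (r - t) ^ (α - 1) * (τ ^ β / R2) :=
            mul_le_mul_of_nonneg_left (hkey.trans hdiv) hrt
        _ = τ ^ β / R2 * (r - t) ^ (α - 1) := by ring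
    refine step1.trans ?_
    rw [lintegral_const_mul' _ _ ENNReal.ofReal_ne_top]
    have hae : 0 ≤ᵐ[volume.restrict (Set.Ioc m r)] fun t => (r - t) ^ (α - 1) := by
      filter_upwards [ae_restrict_mem measurableSet_Ioc] with t ht
      exact Real.rpow_nonneg (by linarith [ht.2]) _
    rw [← ofReal_integral_eq_lintegral_ofReal hBint hae, hBval,
      ← ENNReal.ofReal_mul (div_nonneg (Real.rpow_nonneg hτ.le _) hR2pos.le)]
  refine (add_le_add hA hB).trans ?_
  rw [← ENNReal.ofReal_add
    (mul_nonneg (Real.rpow_nonneg hR2pos.le _) (div_nonneg (Real.rpow_nonneg hτ.le _) hβ0.le))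
    (mul_nonneg (div_nonneg (Real.rpow_nonneg hτ.le _) hR2pos.le)
      (div_nonneg (Real.rpow_nonneg (by linarith : (0:ℝ) ≤ r - m) _) hα0.le))]
  apply ENNReal.ofReal_le_ofReal
  apply le_of_eq
  have hRe : R2 ^ (α - 1) = (2:ℝ) ^ (1 - α) * (r - s) ^ (α - 1) := by
    rw [hR2, Real.div_rpow hR0.le (by norm_num), div_eq_mul_inv,
      ← Real.rpow_neg_one ((2:ℝ) ^ (α - 1)), ← Real.rpow_mul (by norm_num : (0:ℝ) ≤ 2),
      show (α - 1) * (-1) = 1 - α by ring]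
    ring
  have h1 : R2 ^ α / R2 = R2 ^ (α - 1) := by
    rw [Real.rpow_sub hR2pos, Real.rpow_one]
  rw [hrm]
  calc R2 ^ (α - 1) * (τ ^ β / β) + τ ^ β / R2 * (R2 ^ α / α)
      = R2 ^ (α - 1) * (τ ^ β / β) + τ ^ β * (R2 ^ α / R2) / α := by ring
    _ = R2 ^ (α - 1) * (τ ^ β / β) + τ ^ β * R2 ^ (α - 1) / α := by rw [h1]
    _ = (2:ℝ) ^ (1 - α) * (1/α + 1/β) * τ ^ β * (r - s) ^ (α - 1) := by rw [hRe]; ring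
end

section
/- Let T > 0, α ∈ (0,1), and let g_1, g_2 : [0,T] × ℝ → ℝ be nondecreasing in their second argument, with g_2 measurable. Let v, w ∈ C([0,T]; ℝ) satisfy v(0) < w(0), suppose that for every t ∈ [0,T] the functions s ↦ (t−s)^{α−1} g_2(s, v(s)) and s ↦ (t−s)^{α−1} g_2(s, w(s)) are Lebesgue integrable on (0,t), and assume that for every t ∈ [0,T]: v(t) ≤ g_1(t, v(t)) + (1/Γ(α)) ∫_0^t (t−s)^{α−1} g_2(s, v(s)) ds and w(t) > g_1(t, w(t)) + (1/Γ(α)) ∫_0^t (t−s)^{α−1} g_2(s, w(s)) ds. Then v(t) < w(t) for every t ∈ [0,T]. -/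
open MeasureTheory Set

/-- comparison principle: if `g₁, g₂` are nondecreasing in their second
argument, `g₂` is measurable, `v, w` are continuous on `[0,T]` with `v(0) < w(0)`, the
weighted compositions are integrable, and for every `t ∈ [0,T]`
`v(t) ≤ g₁(t,v(t)) + Γ(α)⁻¹ ∫_0^t (t-s)^{α-1} g₂(s,v(s)) ds` while
`w(t) > g₁(t,w(t)) + Γ(α)⁻¹ ∫_0^t (t-s)^{α-1} g₂(s,w(s)) ds`, then `v < w` on `[0,T]`. -/
theorem stmt8 (T α : ℝ) (hT : 0 < T) (hα : α ∈ Set.Ioo (0 : ℝ) 1)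
    (g₁ g₂ : ℝ → ℝ → ℝ)
    (hg₁ : ∀ t ∈ Set.Icc (0 : ℝ) T, ∀ x y : ℝ, x ≤ y → g₁ t x ≤ g₁ t y)
    (hg₂ : ∀ t ∈ Set.Icc (0 : ℝ) T, ∀ x y : ℝ, x ≤ y → g₂ t x ≤ g₂ t y)
    (hg₂m : Measurable (Function.uncurry g₂))
    (v w : ℝ → ℝ)
    (hv : ContinuousOn v (Set.Icc 0 T)) (hw : ContinuousOn w (Set.Icc 0 T))
    (h0 : v 0 < w 0)
    (hvint : ∀ t ∈ Set.Icc (0 : ℝ) T,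
      IntegrableOn (fun s => (t - s) ^ (α - 1) * g₂ s (v s)) (Set.Ioc 0 t))
    (hwint : ∀ t ∈ Set.Icc (0 : ℝ) T,
      IntegrableOn (fun s => (t - s) ^ (α - 1) * g₂ s (w s)) (Set.Ioc 0 t))
    (hvineq : ∀ t ∈ Set.Icc (0 : ℝ) T,
      v t ≤ g₁ t (v t) +
        (Real.Gamma α)⁻¹ * ∫ s in Set.Ioc (0 : ℝ) t, (t - s) ^ (α - 1) * g₂ s (v s))
    (hwineq : ∀ t ∈ Set.Icc (0 : ℝ) T,
      g₁ t (w t) +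
        (Real.Gamma α)⁻¹ * ∫ s in Set.Ioc (0 : ℝ) t, (t - s) ^ (α - 1) * g₂ s (w s) < w t) :
    ∀ t ∈ Set.Icc (0 : ℝ) T, v t < w t := by

  by_contra hcon
  push_neg at hcon
  obtain ⟨t₀, ht₀, hle0⟩ := hcon
  set S : Set ℝ := {t | t ∈ Set.Icc (0:ℝ) T ∧ w t ≤ v t} with hS
  have hSne : S.Nonempty := ⟨t₀, ht₀, hle0⟩
  have hSclosed : IsClosed S := by
    have hEq : S = Set.Icc 0 T ∩ (fun t => v t - w t) ⁻¹' Set.Ici 0 := by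
      ext t; simp [hS, sub_nonneg, and_comm]
    rw [hEq]
    exact ContinuousOn.preimage_isClosed_of_isClosed (hv.sub hw) isClosed_Icc isClosed_Ici
  have hbdd : BddBelow S := ⟨0, fun t ht => ht.1.1⟩
  set t₁ := sInf S with ht₁def
  have ht₁S : t₁ ∈ S := hSclosed.csInf_mem hSne hbdd
  obtain ⟨ht₁Icc, ht₁le⟩ := ht₁S
  have ht₁pos : 0 < t₁ := by
    rcases lt_or_eq_of_le ht₁Icc.1 with h | h
    · exact h
    · exfalso; rw [← h] at ht₁le; linarith
  have hlt : ∀ s ∈ Set.Ico (0:ℝ) t₁, v s < w s := by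
    intro s hs
    by_contra h
    push_neg at h
    have hmem : s ∈ S := ⟨⟨hs.1, hs.2.le.trans ht₁Icc.2⟩, h⟩
    exact absurd (csInf_le hbdd hmem) (not_le.mpr hs.2)
  have hsubIcc : Set.Ico (0:ℝ) t₁ ⊆ Set.Icc 0 T :=
    fun s hs => ⟨hs.1, hs.2.le.trans ht₁Icc.2⟩
  have hne : (nhdsWithin t₁ (Set.Ico 0 t₁)).NeBot := by
    rw [← mem_closure_iff_nhdsWithin_neBot, closure_Ico (ne_of_lt ht₁pos)]
    exact ⟨ht₁pos.le, le_rfl⟩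
  have hle' : v t₁ ≤ w t₁ := by
    have hten : Filter.Tendsto (fun s => w s - v s) (nhdsWithin t₁ (Set.Ico 0 t₁))
        (nhds (w t₁ - v t₁)) := ((hw.sub hv) t₁ ht₁Icc).mono hsubIcc
    have hnn : ∀ᶠ s in nhdsWithin t₁ (Set.Ico 0 t₁), 0 ≤ w s - v s := by
      filter_upwards [self_mem_nhdsWithin] with s hs
      linarith [hlt s hs]
    have := ge_of_tendsto hten hnn
    linarith
  have heq : v t₁ = w t₁ := le_antisymm hle' ht₁le
  have hΓ : 0 < Real.Gamma α := Real.Gamma_pos_of_pos hα.1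
  have hint : (∫ s in Set.Ioc (0:ℝ) t₁, (t₁ - s) ^ (α - 1) * g₂ s (v s)) ≤
      ∫ s in Set.Ioc (0:ℝ) t₁, (t₁ - s) ^ (α - 1) * g₂ s (w s) := by
    apply setIntegral_mono_on (hvint t₁ ht₁Icc) (hwint t₁ ht₁Icc) measurableSet_Ioc
    intro s hs
    have hsI : s ∈ Set.Icc (0:ℝ) T := ⟨hs.1.le, hs.2.trans ht₁Icc.2⟩
    have hvw : v s ≤ w s := by
      rcases lt_or_eq_of_le hs.2 with h | h
      · exact (hlt s ⟨hs.1.le, h⟩).le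
      · rw [h, heq]
    exact mul_le_mul_of_nonneg_left (hg₂ s hsI _ _ hvw)
      (Real.rpow_nonneg (by linarith [hs.2]) _)
  have h1 := hvineq t₁ ht₁Icc
  have h2 := hwineq t₁ ht₁Icc
  have hg1 : g₁ t₁ (v t₁) = g₁ t₁ (w t₁) := by rw [heq]
  have hmul : (Real.Gamma α)⁻¹ * (∫ s in Set.Ioc (0:ℝ) t₁, (t₁ - s) ^ (α - 1) * g₂ s (v s)) ≤
      (Real.Gamma α)⁻¹ * ∫ s in Set.Ioc (0:ℝ) t₁, (t₁ - s) ^ (α - 1) * g₂ s (w s) :=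
    mul_le_mul_of_nonneg_left hint (inv_nonneg.mpr hΓ.le)
  linarith [heq]
end

section
/- Let α ∈ (0,1), T > 0, and let 𝒫 be a partition of [0,T] with N ≥ 1 subintervals. Then the matrix K ∈ ℝ^{N×N} defined by K_{ni} = (1/Γ(α+1))((t_n − t_{i−1})^α − (t_n − t_i)^α) for 1 ≤ i ≤ n ≤ N and K_{ni} = 0 for i > n is invertible, and its inverse M = K^{−1} satisfies: (i) M_{ii} > 0 for every i ∈ {1,…,N}; (ii) M_{ni} < 0 whenever 1 ≤ i < n ≤ N; and (iii) Σ_{j=1}^n M_{nj} > 0 for every n ∈ {1,…,N}. -/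
open Matrix

private lemma stmt11_pos_of_mul_pos {a b : ℝ} (h : 0 < a * b) (ha : 0 < a) : 0 < b := by
  by_contra hb
  push_neg at hb
  nlinarith

private lemma stmt11_neg_of_mul_neg {a b : ℝ} (h : a * b < 0) (ha : 0 < a) : b < 0 := by
  by_contra hb
  push_neg at hb
  nlinarith

open Real Set in
/-- Same-column monotonicity: `(w-a)^α - (w-b)^α` strictly decreases in `w`. -/
private lemma stmt11_lemB {α : ℝ} (hα0 : 0 < α) (hα1 : α < 1) {a b y x : ℝ}
    (hab : a < b) (hby : b ≤ y) (hyx : y < x) :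
    (x - a) ^ α - (x - b) ^ α < (y - a) ^ α - (y - b) ^ α := by
  obtain ⟨ξ, hξ, hslope⟩ := exists_hasDerivAt_eq_slope
    (fun w => (w - a) ^ α - (w - b) ^ α)
    (fun w => 1 * α * (w - a) ^ (α - 1) - 1 * α * (w - b) ^ (α - 1)) hyx
    (((Real.continuous_rpow_const hα0.le).comp
        (continuous_id.sub continuous_const)).sub
      ((Real.continuous_rpow_const hα0.le).comp
        (continuous_id.sub continuous_const))).continuousOn
    (by
      intro w hw
      have hwa : w - a ≠ 0 := ne_of_gt (by have := hw.1; simp only [mem_Ioo] at hw; linarith [hw.1])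
      have hwb : w - b ≠ 0 := ne_of_gt (by simp only [mem_Ioo] at hw; linarith [hw.1])
      exact (((hasDerivAt_id w).sub_const a).rpow_const (Or.inl hwa)).sub
        (((hasDerivAt_id w).sub_const b).rpow_const (Or.inl hwb)))
  simp only [mem_Ioo] at hξ
  have hξb : 0 < ξ - b := by linarith [hξ.1]
  have h1 : (ξ - a) ^ (α - 1) < (ξ - b) ^ (α - 1) :=
    Real.rpow_lt_rpow_of_neg hξb (by linarith) (by linarith)
  have hxy : 0 < x - y := by linarith
  rw [eq_div_iff (ne_of_gt hxy)] at hslope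
  have hd : 1 * α * (ξ - a) ^ (α - 1) - 1 * α * (ξ - b) ^ (α - 1) < 0 := by
    nlinarith [mul_lt_mul_of_pos_left h1 hα0]
  have hd2 := mul_neg_of_neg_of_pos hd hxy
  linarith [hd2, hslope]

open Real Set in
/-- Two-row ratio inequality (reverse-TP₂) for increments of the concave power function. -/
private lemma stmt11_lemA {α : ℝ} (hα0 : 0 < α) (hα1 : α < 1) {a b c d y x : ℝ}
    (hab : a < b) (hbc : b ≤ c) (hcd : c < d) (hdy : d ≤ y) (hyx : y < x) :
    ((x - c) ^ α - (x - d) ^ α) * ((y - a) ^ α - (y - b) ^ α) <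
      ((x - a) ^ α - (x - b) ^ α) * ((y - c) ^ α - (y - d) ^ α) := by
  have hcontH : Continuous fun s : ℝ => (y - s) ^ α :=
    (Real.continuous_rpow_const hα0.le).comp (continuous_const.sub continuous_id)
  have hcontG : Continuous fun s : ℝ => (x - s) ^ α :=
    (Real.continuous_rpow_const hα0.le).comp (continuous_const.sub continuous_id)
  have hderivH : ∀ s : ℝ, s < y → HasDerivAt (fun s : ℝ => (y - s) ^ α)
      (-1 * α * (y - s) ^ (α - 1)) s := by
    intro s hs
    exact ((hasDerivAt_id s).const_sub y).rpow_const (Or.inl (ne_of_gt (by simp only [id_eq]; linarith)))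
  have hderivG : ∀ s : ℝ, s < x → HasDerivAt (fun s : ℝ => (x - s) ^ α)
      (-1 * α * (x - s) ^ (α - 1)) s := by
    intro s hs
    exact ((hasDerivAt_id s).const_sub x).rpow_const (Or.inl (ne_of_gt (by simp only [id_eq]; linarith)))
  obtain ⟨ξ, hξ, raw1⟩ := exists_ratio_hasDerivAt_eq_ratio_slope
    (fun s : ℝ => (y - s) ^ α) (fun s : ℝ => -1 * α * (y - s) ^ (α - 1)) hab
    hcontH.continuousOn
    (fun s hs => hderivH s (by simp only [mem_Ioo] at hs; linarith [hs.2]))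
    (fun s : ℝ => (x - s) ^ α) (fun s : ℝ => -1 * α * (x - s) ^ (α - 1))
    hcontG.continuousOn
    (fun s hs => hderivG s (by simp only [mem_Ioo] at hs; linarith [hs.2]))
  obtain ⟨η, hη, raw2⟩ := exists_ratio_hasDerivAt_eq_ratio_slope
    (fun s : ℝ => (y - s) ^ α) (fun s : ℝ => -1 * α * (y - s) ^ (α - 1)) hcd
    hcontH.continuousOn
    (fun s hs => hderivH s (by simp only [mem_Ioo] at hs; linarith [hs.2]))
    (fun s : ℝ => (x - s) ^ α) (fun s : ℝ => -1 * α * (x - s) ^ (α - 1))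
    hcontG.continuousOn
    (fun s hs => hderivG s (by simp only [mem_Ioo] at hs; linarith [hs.2]))
  simp only [mem_Ioo] at hξ hη
  obtain ⟨hξ1, hξ2⟩ := hξ
  obtain ⟨hη1, hη2⟩ := hη
  have hyξ : 0 < y - ξ := by linarith
  have hyη : 0 < y - η := by linarith
  have hxξ : 0 < x - ξ := by linarith
  have hxη : 0 < x - η := by linarith
  have hP : 0 < (y - ξ) ^ (α - 1) := Real.rpow_pos_of_pos hyξ _
  have hQ : 0 < (x - ξ) ^ (α - 1) := Real.rpow_pos_of_pos hxξ _
  have hR : 0 < (y - η) ^ (α - 1) := Real.rpow_pos_of_pos hyη _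
  have hS : 0 < (x - η) ^ (α - 1) := Real.rpow_pos_of_pos hxη _
  have hDg1 : 0 < (x - a) ^ α - (x - b) ^ α :=
    sub_pos.mpr (Real.rpow_lt_rpow (by linarith) (by linarith) hα0)
  have hDg2 : 0 < (x - c) ^ α - (x - d) ^ α :=
    sub_pos.mpr (Real.rpow_lt_rpow (by linarith) (by linarith) hα0)
  have eq1 : ((x - a) ^ α - (x - b) ^ α) * (y - ξ) ^ (α - 1)
      = ((y - a) ^ α - (y - b) ^ α) * (x - ξ) ^ (α - 1) := by
    have e : α * (((x - a) ^ α - (x - b) ^ α) * (y - ξ) ^ (α - 1))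
        = α * (((y - a) ^ α - (y - b) ^ α) * (x - ξ) ^ (α - 1)) := by
      linear_combination raw1
    exact mul_left_cancel₀ (ne_of_gt hα0) e
  have eq2 : ((x - c) ^ α - (x - d) ^ α) * (y - η) ^ (α - 1)
      = ((y - c) ^ α - (y - d) ^ α) * (x - η) ^ (α - 1) := by
    have e : α * (((x - c) ^ α - (x - d) ^ α) * (y - η) ^ (α - 1))
        = α * (((y - c) ^ α - (y - d) ^ α) * (x - η) ^ (α - 1)) := by
      linear_combination raw2
    exact mul_left_cancel₀ (ne_of_gt hα0) e
  have hξη : ξ < η := by linarith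
  have hprod : (y - η) * (x - ξ) < (y - ξ) * (x - η) := by nlinarith
  have hPSRQ : (y - ξ) ^ (α - 1) * (x - η) ^ (α - 1)
      < (y - η) ^ (α - 1) * (x - ξ) ^ (α - 1) := by
    have h5 : ((y - ξ) * (x - η)) ^ (α - 1) < ((y - η) * (x - ξ)) ^ (α - 1) :=
      Real.rpow_lt_rpow_of_neg (mul_pos hyη hxξ) hprod (by linarith)
    rwa [Real.mul_rpow hyξ.le hxη.le, Real.mul_rpow hyη.le hxξ.le] at h5
  have lhs_eq : ((x - c) ^ α - (x - d) ^ α) * ((y - a) ^ α - (y - b) ^ α)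
        * ((x - ξ) ^ (α - 1) * (x - η) ^ (α - 1))
      = (((x - a) ^ α - (x - b) ^ α) * ((x - c) ^ α - (x - d) ^ α))
        * ((y - ξ) ^ (α - 1) * (x - η) ^ (α - 1)) := by
    linear_combination (-(((x - c) ^ α - (x - d) ^ α) * (x - η) ^ (α - 1))) * eq1
  have rhs_eq : ((x - a) ^ α - (x - b) ^ α) * ((y - c) ^ α - (y - d) ^ α)
        * ((x - ξ) ^ (α - 1) * (x - η) ^ (α - 1))
      = (((x - a) ^ α - (x - b) ^ α) * ((x - c) ^ α - (x - d) ^ α))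
        * ((y - η) ^ (α - 1) * (x - ξ) ^ (α - 1)) := by
    linear_combination (-(((x - a) ^ α - (x - b) ^ α) * (x - ξ) ^ (α - 1))) * eq2
  have final : ((x - c) ^ α - (x - d) ^ α) * ((y - a) ^ α - (y - b) ^ α)
        * ((x - ξ) ^ (α - 1) * (x - η) ^ (α - 1))
      < ((x - a) ^ α - (x - b) ^ α) * ((y - c) ^ α - (y - d) ^ α)
        * ((x - ξ) ^ (α - 1) * (x - η) ^ (α - 1)) := by
    rw [lhs_eq, rhs_eq]
    exact mul_lt_mul_of_pos_left hPSRQ (mul_pos hDg1 hDg2)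
  exact lt_of_mul_lt_mul_right final (le_of_lt (mul_pos hQ hS))

/-- properties of `K_𝒫⁻¹`: the lower triangular matrix
`K_{ni} = Γ(α+1)⁻¹((t_n - t_{i-1})^α - (t_n - t_i)^α)` (here `0`-indexed: row `n`
and column `i` of the Lean matrix correspond to the paper's indices `n+1`, `i+1`)
is invertible, its inverse has positive diagonal entries, strictly negative strictly
lower triangular entries, and positive row sums `Σ_{j=1}^n (K⁻¹)_{nj} > 0`
(equivalently `K⁻¹_{n0} := -Σ_{j=1}^n (K⁻¹)_{nj} < 0`). -/
theorem stmt11 (α T : ℝ) (hα : α ∈ Set.Ioo (0 : ℝ) 1) (hT : 0 < T)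
    (N : ℕ) (hN : 1 ≤ N) (tP : ℕ → ℝ) (htP0 : tP 0 = 0) (htPN : tP N = T)
    (hmono : ∀ n < N, tP n < tP (n + 1))
    (K : Matrix (Fin N) (Fin N) ℝ)
    (hK : ∀ n i : Fin N, K n i =
      if (i : ℕ) ≤ (n : ℕ) then
        (Real.Gamma (α + 1))⁻¹ *
          ((tP ((n : ℕ) + 1) - tP (i : ℕ)) ^ α - (tP ((n : ℕ) + 1) - tP ((i : ℕ) + 1)) ^ α)
      else 0) :
    IsUnit K ∧
    (∀ i : Fin N, 0 < K⁻¹ i i) ∧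
    (∀ i n : Fin N, i < n → K⁻¹ n i < 0) ∧
    (∀ n : Fin N, 0 < ∑ j ∈ Finset.Iic n, K⁻¹ n j) := by
  obtain ⟨hα0, hα1⟩ := hα
  set Γi : ℝ := (Real.Gamma (α + 1))⁻¹ with hΓidef
  have hΓ : 0 < Γi := inv_pos.mpr (Real.Gamma_pos_of_pos (by linarith))
  -- strict monotonicity of the partition
  have htlt : ∀ a b : ℕ, a < b → b ≤ N → tP a < tP b := by
    intro a b h hb
    induction b with
    | zero => omega
    | succ b ih =>
      rcases Nat.lt_or_ge a b with h' | h'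
      · exact (ih h' (by omega)).trans (hmono b (by omega))
      · have hab : a = b := by omega
        subst hab; exact hmono a (by omega)
  have htle : ∀ a b : ℕ, a ≤ b → b ≤ N → tP a ≤ tP b := by
    intro a b h hb
    rcases Nat.lt_or_ge a b with h' | h'
    · exact (htlt a b h' hb).le
    · have : a = b := by omega
      subst this; exact le_rfl
  -- entries
  have hKval : ∀ n i : Fin N, (i : ℕ) ≤ (n : ℕ) → K n i =
      Γi * ((tP ((n : ℕ) + 1) - tP (i : ℕ)) ^ α - (tP ((n : ℕ) + 1) - tP ((i : ℕ) + 1)) ^ α) := by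
    intro n i h
    rw [hK n i, if_pos h]
  have hKzero : ∀ n i : Fin N, (n : ℕ) < (i : ℕ) → K n i = 0 := by
    intro n i h
    rw [hK n i, if_neg (by omega)]
  have hKpos : ∀ n i : Fin N, (i : ℕ) ≤ (n : ℕ) → 0 < K n i := by
    intro n i h
    have hnN : (n : ℕ) < N := n.isLt
    have hiN : (i : ℕ) < N := i.isLt
    rw [hKval n i h]
    apply mul_pos hΓ
    have h2 : tP ((i : ℕ) + 1) ≤ tP ((n : ℕ) + 1) := htle _ _ (by omega) (by omega)
    have h3 : tP (i : ℕ) < tP ((i : ℕ) + 1) := hmono _ (by omega)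
    have h4 : (tP ((n : ℕ) + 1) - tP ((i : ℕ) + 1)) ^ α < (tP ((n : ℕ) + 1) - tP (i : ℕ)) ^ α :=
      Real.rpow_lt_rpow (by linarith) (by linarith) hα0
    linarith
  -- triangularity and invertibility
  have htri : K.BlockTriangular OrderDual.toDual := by
    intro a b h
    exact hKzero a b (Fin.lt_def.mp (OrderDual.toDual_lt_toDual.mp h))
  have hdetpos : 0 < K.det := by
    rw [Matrix.det_of_lowerTriangular K htri]
    exact Finset.prod_pos fun i _ => hKpos i i le_rfl
  have hdetu : IsUnit K.det := isUnit_iff_ne_zero.mpr (ne_of_gt hdetpos)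
  have hunit : IsUnit K := (Matrix.isUnit_iff_isUnit_det K).mpr hdetu
  have hKM : K * K⁻¹ = 1 := Matrix.mul_nonsing_inv K hdetu
  have hMzero : ∀ a b : Fin N, a < b → K⁻¹ a b = 0 := by
    haveI := K.invertibleOfIsUnitDet hdetu
    intro a b h
    exact Matrix.blockTriangular_inv_of_blockTriangular htri
      (OrderDual.toDual_lt_toDual.mpr h)
  -- row equations of K * K⁻¹ = 1, for a fixed column i
  have hrow : ∀ l i : Fin N, ∑ j ∈ Finset.Icc i l, K l j * K⁻¹ j i
      = if l = i then 1 else 0 := by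
    intro l i
    have h0 : (K * K⁻¹) l i = if l = i then 1 else 0 := by
      rw [hKM]; exact Matrix.one_apply
    rw [← h0, Matrix.mul_apply]
    apply Finset.sum_subset (Finset.subset_univ _)
    intro j _ hj
    rw [Finset.mem_Icc] at hj
    rcases le_or_gt i j with h1 | h1
    · have h2 : ¬ j ≤ l := fun hc => hj ⟨h1, hc⟩
      rw [hKzero l j (Fin.lt_def.mp (lt_of_not_ge h2)), zero_mul]
    · rw [hMzero j i h1, mul_zero]
  -- diagonal entries of the inverse
  have hdiagM : ∀ i : Fin N, K i i * K⁻¹ i i = 1 := by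
    intro i
    have h := hrow i i
    rw [if_pos rfl] at h
    simpa using h
  have hMdiagpos : ∀ i : Fin N, 0 < K⁻¹ i i := by
    intro i
    have h := hdiagM i
    exact stmt11_pos_of_mul_pos (by rw [h]; exact one_pos) (hKpos i i le_rfl)
  -- strictly negative below-diagonal entries of the inverse
  have hneg : ∀ m : ℕ, ∀ n i : Fin N, (n : ℕ) ≤ m → i < n → K⁻¹ n i < 0 := by
    intro m
    induction m with
    | zero =>
      intro n i hn hi
      exact absurd (Fin.lt_def.mp hi) (by omega)
    | succ m ih =>
      intro n i hn hi
      rcases Nat.lt_or_ge (n : ℕ) (m + 1) with hcase | hcase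
      · exact ih n i (by omega) hi
      have hival : (i : ℕ) < (n : ℕ) := Fin.lt_def.mp hi
      have hnN : (n : ℕ) < N := n.isLt
      have hiN : (i : ℕ) < N := i.isLt
      have hn1 : 1 ≤ (n : ℕ) := by omega
      set p : Fin N := ⟨(n : ℕ) - 1, by omega⟩ with hpdef
      have hpval : (p : ℕ) = (n : ℕ) - 1 := rfl
      have hip : i ≤ p := Fin.le_def.mpr (by simp only [hpval]; omega)
      have hpn : p < n := Fin.lt_def.mpr (by simp only [hpval]; omega)
      have hKpipos := hKpos p i (Fin.le_def.mp hip)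
      -- split row n
      have h1 := hrow n i
      rw [if_neg (ne_of_gt hi)] at h1
      have hIcc : (Finset.Icc i n).erase n = Finset.Icc i p := by
        rw [Finset.Icc_erase_right]
        ext j
        simp only [Finset.mem_Ico, Finset.mem_Icc, Fin.lt_def, Fin.le_def, hpval]
        omega
      have h2 := Finset.add_sum_erase (Finset.Icc i n)
        (fun j => K n j * K⁻¹ j i) (Finset.mem_Icc.mpr ⟨le_of_lt hi, le_rfl⟩)
      rw [hIcc] at h2
      have eqn : K n n * K⁻¹ n i + ∑ j ∈ Finset.Icc i p, K n j * K⁻¹ j i = 0 := h2.trans h1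
      have eqp : ∑ j ∈ Finset.Icc i p, K p j * K⁻¹ j i = if p = i then 1 else 0 := hrow p i
      set cst : ℝ := K n i / K p i with hcstdef
      have hcst : 0 < cst := div_pos (hKpos n i (by omega)) hKpipos
      have hcancel : K n i - cst * K p i = 0 := by
        rw [hcstdef, div_mul_cancel₀ _ (ne_of_gt hKpipos), sub_self]
      -- coefficient inequality from lemma A
      have hcoef : ∀ j : Fin N, i < j → j ≤ p → K n j - cst * K p j < 0 := by
        intro j hij hjp
        have hijval : (i : ℕ) < (j : ℕ) := Fin.lt_def.mp hij
        have hjpval : (j : ℕ) ≤ (p : ℕ) := Fin.le_def.mp hjp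
        have hjN : (j : ℕ) < N := j.isLt
        have hA := stmt11_lemA hα0 hα1
          (a := tP (i : ℕ)) (b := tP ((i : ℕ) + 1)) (c := tP (j : ℕ)) (d := tP ((j : ℕ) + 1))
          (y := tP ((p : ℕ) + 1)) (x := tP ((n : ℕ) + 1))
          (hmono _ (by omega)) (htle _ _ (by omega) (by omega))
          (hmono _ (by omega)) (htle _ _ (by omega) (by omega))
          (by have he : ((p : ℕ) + 1) = (n : ℕ) := by omega
              rw [he]; exact hmono _ (by omega))
        have hKnj := hKval n j (by omega)
        have hKpj := hKval p j (by omega)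
        have hKni := hKval n i (by omega)
        have hKpi := hKval p i (by omega)
        have hmul : K n j * K p i < K n i * K p j := by
          rw [hKnj, hKpj, hKni, hKpi]
          have h6 := mul_lt_mul_of_pos_left hA (mul_pos hΓ hΓ)
          linarith [h6]
        rw [sub_neg, hcstdef, div_mul_eq_mul_div, lt_div_iff₀ hKpipos]
        linarith [hmul]
      -- positivity of the correction sum
      have key : 0 < ∑ j ∈ Finset.Icc i p, (K n j - cst * K p j) * K⁻¹ j i
          + cst * (if p = i then 1 else 0) := by
        rcases eq_or_lt_of_le hip with heq | hlt
        · rw [← heq] at hcancel ⊢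
          rw [if_pos rfl, Finset.Icc_self, Finset.sum_singleton, hcancel, zero_mul, zero_add,
            mul_one]
          exact hcst
        · rw [if_neg (ne_of_gt hlt), mul_zero, add_zero]
          have hsplit := Finset.add_sum_erase (Finset.Icc i p)
            (fun j => (K n j - cst * K p j) * K⁻¹ j i)
            (Finset.mem_Icc.mpr ⟨le_rfl, hip⟩)
          rw [Finset.Icc_erase_left] at hsplit
          rw [← hsplit]
          show 0 < (K n i - cst * K p i) * K⁻¹ i i
            + ∑ j ∈ Finset.Ioc i p, (K n j - cst * K p j) * K⁻¹ j i
          have hz : (K n i - cst * K p i) * K⁻¹ i i = 0 := by rw [hcancel, zero_mul]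
          rw [hz, zero_add]
          apply Finset.sum_pos
          · intro j hj
            rw [Finset.mem_Ioc] at hj
            have hjpv : (j : ℕ) ≤ (p : ℕ) := Fin.le_def.mp hj.2
            have hMj : K⁻¹ j i < 0 := ih j i (by omega) hj.1
            exact mul_pos_of_neg_of_neg (hcoef j hj.1 hj.2) hMj
          · exact ⟨p, Finset.mem_Ioc.mpr ⟨hlt, le_rfl⟩⟩
      have hsum_eq : ∑ j ∈ Finset.Icc i p, K n j * K⁻¹ j i
          = ∑ j ∈ Finset.Icc i p, (K n j - cst * K p j) * K⁻¹ j i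
            + cst * (if p = i then 1 else 0) := by
        rw [← eqp, Finset.mul_sum, ← Finset.sum_add_distrib]
        apply Finset.sum_congr rfl
        intro j _
        ring
      have hfin : K n n * K⁻¹ n i < 0 := by
        rw [hsum_eq] at eqn
        linarith [key]
      exact stmt11_neg_of_mul_neg hfin (hKpos n n le_rfl)
  -- positive row sums of the inverse
  set Sfun : Fin N → ℝ := fun q => ∑ r, K⁻¹ q r with hSdef
  have hSrow : ∀ l : Fin N, ∑ j ∈ Finset.Iic l, K l j * Sfun j = 1 := by
    intro l
    have h0 : ∑ j, K l j * Sfun j = 1 := by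
      simp only [hSdef]
      have h1 : ∑ j, K l j * (∑ r, K⁻¹ j r) = ∑ r, (K * K⁻¹) l r := by
        simp_rw [Matrix.mul_apply, Finset.mul_sum]
        exact Finset.sum_comm
      rw [h1, hKM]
      simp [Matrix.one_apply]
    rw [← h0]
    apply Finset.sum_subset (Finset.subset_univ _)
    intro j _ hj
    rw [Finset.mem_Iic] at hj
    rw [hKzero l j (Fin.lt_def.mp (lt_of_not_ge hj)), zero_mul]
  have hSpos : ∀ m : ℕ, ∀ n : Fin N, (n : ℕ) ≤ m → 0 < Sfun n := by
    intro m
    induction m with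
    | zero =>
      intro n hn
      have h := hSrow n
      have hIic : Finset.Iic n = {n} := by
        ext j
        simp only [Finset.mem_Iic, Finset.mem_singleton, Fin.le_def]
        constructor
        · intro hj; exact Fin.ext (by omega)
        · intro hj; rw [hj]
      rw [hIic, Finset.sum_singleton] at h
      exact stmt11_pos_of_mul_pos (by rw [h]; exact one_pos) (hKpos n n le_rfl)
    | succ m ih =>
      intro n hn
      rcases Nat.lt_or_ge (n : ℕ) (m + 1) with hcase | hcase
      · exact ih n (by omega)
      have hnN : (n : ℕ) < N := n.isLt
      have hn1 : 1 ≤ (n : ℕ) := by omega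
      set p : Fin N := ⟨(n : ℕ) - 1, by omega⟩ with hpdef
      have hpval : (p : ℕ) = (n : ℕ) - 1 := rfl
      have hpn : p < n := Fin.lt_def.mpr (by simp only [hpval]; omega)
      have h1 := hSrow n
      have hIic : (Finset.Iic n).erase n = Finset.Iic p := by
        rw [Finset.Iic_erase]
        ext j
        simp only [Finset.mem_Iio, Finset.mem_Iic, Fin.lt_def, Fin.le_def, hpval]
        omega
      have h2 := Finset.add_sum_erase (Finset.Iic n) (fun j => K n j * Sfun j)
        (Finset.mem_Iic.mpr le_rfl)
      rw [hIic] at h2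
      have eqn : K n n * Sfun n + ∑ j ∈ Finset.Iic p, K n j * Sfun j = 1 := h2.trans h1
      have eqp : ∑ j ∈ Finset.Iic p, K p j * Sfun j = 1 := hSrow p
      have hpos : 0 < ∑ j ∈ Finset.Iic p, (K p j - K n j) * Sfun j := by
        apply Finset.sum_pos
        · intro j hj
          rw [Finset.mem_Iic] at hj
          have hjval : (j : ℕ) ≤ (p : ℕ) := Fin.le_def.mp hj
          have hjN : (j : ℕ) < N := j.isLt
          have hB := stmt11_lemB hα0 hα1 (a := tP (j : ℕ)) (b := tP ((j : ℕ) + 1))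
            (y := tP ((p : ℕ) + 1)) (x := tP ((n : ℕ) + 1))
            (hmono _ (by omega)) (htle _ _ (by omega) (by omega))
            (by have he : ((p : ℕ) + 1) = (n : ℕ) := by omega
                rw [he]; exact hmono _ (by omega))
          have hKnj := hKval n j (by omega)
          have hKpj := hKval p j (by omega)
          have hdiff : 0 < K p j - K n j := by
            rw [hKnj, hKpj]
            have h7 := mul_pos hΓ (sub_pos.mpr hB)
            linarith [h7]
          have hSj := ih j (by omega)
          exact mul_pos hdiff hSj
        · exact ⟨p, Finset.mem_Iic.mpr le_rfl⟩
      have heq2 : K n n * Sfun n = ∑ j ∈ Finset.Iic p, (K p j - K n j) * Sfun j := by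
        have h3 : ∑ j ∈ Finset.Iic p, (K p j - K n j) * Sfun j
            = ∑ j ∈ Finset.Iic p, K p j * Sfun j - ∑ j ∈ Finset.Iic p, K n j * Sfun j := by
          rw [← Finset.sum_sub_distrib]
          apply Finset.sum_congr rfl
          intro j _
          ring
        rw [h3, eqp]
        linarith [eqn]
      have h4 : 0 < K n n * Sfun n := by rw [heq2]; exact hpos
      exact stmt11_pos_of_mul_pos h4 (hKpos n n le_rfl)
  refine ⟨hunit, hMdiagpos, fun i n h => hneg (n : ℕ) n i le_rfl h, ?_⟩
  intro n
  have hconv : ∑ j ∈ Finset.Iic n, K⁻¹ n j = Sfun n := by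
    rw [hSdef]
    apply Finset.sum_subset (Finset.subset_univ _)
    intro j _ hj
    rw [Finset.mem_Iic] at hj
    exact hMzero n j (lt_of_not_ge hj)
  rw [hconv]
  exact hSpos (n : ℕ) n le_rfl
end

section
/- Let α ∈ (0,1), T > 0, let 𝒫 be a partition of [0,T] with N ≥ 2 subintervals, let K ∈ ℝ^{N×N} be the matrix with entries K_{ni} = (1/Γ(α+1))((t_n − t_{i−1})^α − (t_n − t_i)^α) for 1 ≤ i ≤ n ≤ N and K_{ni} = 0 for i > n, and let M = K^{−1}. Then for every n ∈ {1,…,N−1} one has Σ_{j=1}^{n} M_{nj} > Σ_{j=1}^{n+1} M_{n+1,j}; equivalently, setting M_{n0} := −Σ_{j=1}^n M_{nj}, one has M_{n0} < M_{n+1,0}. -/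
open Matrix

open Matrix MeasureTheory intervalIntegral Set

namespace Stmt12Aux

noncomputable def psiF (α s0 : ℝ) (t d : ℕ → ℝ) (n : ℕ) (x : ℝ) : ℝ :=
  s0 * x ^ (α - 1) - ∑ k ∈ Finset.range n, d k * (x - t (k + 1)) ^ (α - 1)

noncomputable def phiF (α s0 : ℝ) (t d : ℕ → ℝ) (n : ℕ) (x : ℝ) : ℝ :=
  s0 * x ^ α - ∑ k ∈ Finset.range n, d k * (x - t (k + 1)) ^ α

noncomputable def GF (α s0 : ℝ) (t d : ℕ → ℝ) (n : ℕ) (x : ℝ) : ℝ :=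
  psiF α s0 t d n x * (x - t (n + 1)) ^ (1 - α)

lemma rpow_helper {α u : ℝ} (hu : 0 < u) : u ^ (α - 1) = (u ^ (1 - α))⁻¹ := by
  rw [show α - 1 = -(1 - α) by ring, Real.rpow_neg hu.le]

lemma ratio_helper {α a b x : ℝ} (hab : a < b) (hbx : b < x) :
    (x - a) ^ (α - 1) * (x - b) ^ (1 - α) = ((x - b) / (x - a)) ^ (1 - α) := by
  have h1 : (0:ℝ) < x - a := by linarith
  have h2 : (0:ℝ) ≤ x - b := by linarith
  rw [Real.div_rpow h2 h1.le, rpow_helper h1]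
  field_simp

lemma psiF_eq_GF {α s0 : ℝ} {t d : ℕ → ℝ} {n : ℕ} {x : ℝ} (hx : t (n + 1) < x) :
    psiF α s0 t d n x = GF α s0 t d n x * (x - t (n + 1)) ^ (α - 1) := by
  have h1 : (0:ℝ) < x - t (n + 1) := by linarith
  have h2 : (x - t (n+1)) ^ (1 - α) ≠ 0 := (Real.rpow_pos_of_pos h1 _).ne'
  rw [GF, rpow_helper h1]
  field_simp

lemma hasDerivAt_phiF {α s0 : ℝ} {t d : ℕ → ℝ} {n : ℕ} {x : ℝ} (hx : 0 < x)
    (hk : ∀ k < n, t (k + 1) < x) :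
    HasDerivAt (phiF α s0 t d n) (α * psiF α s0 t d n x) x := by
  have h1 : HasDerivAt (fun y : ℝ => s0 * y ^ α) (s0 * (α * x ^ (α - 1))) x := by
    exact (Real.hasDerivAt_rpow_const (Or.inl hx.ne')).const_mul s0
  have h2 : ∀ k ∈ Finset.range n, HasDerivAt (fun y : ℝ => d k * (y - t (k + 1)) ^ α)
      (d k * (1 * α * (x - t (k + 1)) ^ (α - 1))) x := by
    intro k hk'
    have hpos : x - t (k + 1) ≠ 0 := by
      have := hk k (Finset.mem_range.mp hk'); linarith [this]
    exact (((hasDerivAt_id x).sub_const (t (k + 1))).rpow_const (Or.inl hpos)).const_mul (d k)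
  have h3 := HasDerivAt.fun_sum h2
  have h4 := h1.fun_sub h3
  refine HasDerivAt.congr_deriv (f := phiF α s0 t d n) h4 ?_
  symm
  rw [psiF, mul_sub, Finset.mul_sum]
  congr 1
  · ring
  · exact Finset.sum_congr rfl fun k _ => by ring

lemma continuousOn_psiF {α s0 : ℝ} {t d : ℕ → ℝ} {n : ℕ} {s : Set ℝ}
    (hx : ∀ x ∈ s, 0 < x) (hk : ∀ k < n, ∀ x ∈ s, t (k + 1) < x) :
    ContinuousOn (fun x => psiF α s0 t d n x) s := by
  apply ContinuousOn.sub
  · exact continuousOn_const.mul (continuousOn_id.rpow_const fun x hx' => Or.inl (hx x hx').ne')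
  · apply continuousOn_finset_sum
    intro k hk'
    apply continuousOn_const.mul
    exact (continuousOn_id.sub continuousOn_const).rpow_const
      fun x hx' => Or.inl (by have := hk k (Finset.mem_range.mp hk') x hx'; exact (sub_pos.mpr this).ne')


lemma abel_id (A s : ℕ → ℝ) (m : ℕ) :
    ∑ i ∈ Finset.range (m + 1), (A i - A (i + 1)) * s i =
      A 0 * s 0 - A (m + 1) * s m - ∑ k ∈ Finset.range m, (s k - s (k + 1)) * A (k + 1) := by
  induction m with
  | zero => simp [Finset.sum_range_succ]; ring
  | succ m ih => rw [Finset.sum_range_succ, ih, Finset.sum_range_succ]; ring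

lemma intervalIntegrable_shift_rpow {α : ℝ} (a b : ℝ) (hα : 0 < α) :
    IntervalIntegrable (fun x => (x - a) ^ (α - 1)) volume a b := by
  have h := (intervalIntegrable_rpow' (r := α - 1) (by linarith)
    (a := 0) (b := b - a)).comp_sub_right a
  simpa using h

lemma integral_shift_rpow {α : ℝ} (a b : ℝ) (hα : 0 < α) :
    ∫ x in a..b, α * (x - a) ^ (α - 1) = (b - a) ^ α := by
  rw [intervalIntegral.integral_const_mul,
    intervalIntegral.integral_comp_sub_right (fun u => u ^ (α - 1)) a,
    integral_rpow (Or.inl (by linarith))]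
  have h1 : α - 1 + 1 = α := by ring
  rw [h1, sub_self, Real.zero_rpow hα.ne', sub_zero]
  field_simp

lemma psiF_intervalIntegrable {α s0 : ℝ} {t d : ℕ → ℝ} {n : ℕ} {a b : ℝ} (ha : 0 < a)
    (hab : a ≤ b) (hk : ∀ k < n, t (k + 1) < a) :
    IntervalIntegrable (fun x => α * psiF α s0 t d n x) volume a b := by
  apply ContinuousOn.intervalIntegrable
  rw [Set.uIcc_of_le hab]
  exact continuousOn_const.mul (continuousOn_psiF (fun x hx => lt_of_lt_of_le ha hx.1)
    (fun k hk' x hx => lt_of_lt_of_le (hk k hk') hx.1))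

lemma integral_psiF {α s0 : ℝ} {t d : ℕ → ℝ} {n : ℕ} {a b : ℝ} (ha : 0 < a) (hab : a ≤ b)
    (hk : ∀ k < n, t (k + 1) < a) :
    ∫ x in a..b, α * psiF α s0 t d n x = phiF α s0 t d n b - phiF α s0 t d n a := by
  apply intervalIntegral.integral_eq_sub_of_hasDerivAt
  · intro x hx
    rw [Set.uIcc_of_le hab] at hx
    exact hasDerivAt_phiF (lt_of_lt_of_le ha hx.1) (fun k hk' => lt_of_lt_of_le (hk k hk') hx.1)
  · exact psiF_intervalIntegrable ha hab hk


lemma main_aux (α : ℝ) (hα0 : 0 < α) (hα1 : α < 1) (N : ℕ) (t : ℕ → ℝ) (ht0 : t 0 = 0)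
    (hmono : ∀ n < N, t n < t (n + 1)) (c0 : ℝ) (d : ℕ → ℝ) (g : ℝ) (hg : 0 < g)
    (heq : ∀ m < N, phiF α c0 t d m (t (m + 1)) = g) :
    ∀ n, n + 1 < N → 0 < d n := by
  have h1α : 0 < 1 - α := by linarith
  -- strict monotonicity of t up to N
  have htmono : ∀ i j, i < j → j ≤ N → t i < t j := by
    intro i j hij hjN
    induction j with
    | zero => omega
    | succ j ih =>
      rcases Nat.lt_succ_iff_lt_or_eq.mp hij with h | h
      · exact lt_trans (ih h (by omega)) (hmono j (by omega))
      · subst h; exact hmono i (by omega)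
  have htpos : ∀ i, 0 < i → i ≤ N → 0 < t i := by
    intro i h1 h2
    have := htmono 0 i h1 h2
    rwa [ht0] at this
  set G : ℕ → ℝ → ℝ := fun n x => GF α c0 t d n x with hGdef
  set Inv : ℕ → Prop := fun n =>
    (∀ x, t (n + 1) < x → 0 < G n x) ∧
    (∀ x y, t (n + 1) < x → x < y → G n x < G n y) with hInvdef
  -- the key quantitative step
  have hkey : ∀ n, n + 1 < N → Inv n → 0 < d n ∧ d n ≤ G n (t (n + 1 + 1)) := by
    intro n hn1 hInv
    obtain ⟨hpos, hmonoG⟩ := hInv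
    set a := t (n + 1) with hadef
    set b := t (n + 1 + 1) with hbdef
    have ha0 : 0 < a := htpos (n + 1) (by omega) (by omega)
    have hab : a < b := hmono (n + 1) hn1
    have hka : ∀ k < n, t (k + 1) < a := fun k hk => htmono (k + 1) (n + 1) (by omega) (by omega)
    -- the discrete identity from two consecutive rows
    have hid : d n * (b - a) ^ α = phiF α c0 t d n b - phiF α c0 t d n a := by
      have h1 := heq n (by omega)
      have h2 := heq (n + 1) hn1
      simp only [phiF, Finset.sum_range_succ] at h1 h2 ⊢
      linarith
    have hFTC := integral_psiF (α := α) (s0 := c0) (t := t) (d := d) (n := n) ha0 hab.le hka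
    have hint := psiF_intervalIntegrable (α := α) (s0 := c0) (t := t) (d := d) (n := n)
      ha0 hab.le hka
    have hψpos : ∀ x ∈ Set.Ioo a b, 0 < α * psiF α c0 t d n x := by
      intro x hx
      have hax : a < x := hx.1
      rw [psiF_eq_GF hax]
      have h1 : 0 < x - a := by linarith
      exact mul_pos hα0 (mul_pos (hpos x hax) (Real.rpow_pos_of_pos h1 _))
    have hintpos : 0 < ∫ x in a..b, α * psiF α c0 t d n x :=
      intervalIntegral_pos_of_pos_on hint hψpos hab
    have hba : (0:ℝ) < (b - a) ^ α := Real.rpow_pos_of_pos (by linarith) _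
    have hdn : 0 < d n := by
      rw [hFTC, ← hid] at hintpos
      rcases mul_pos_iff.mp hintpos with ⟨h, _⟩ | ⟨_, h⟩
      · exact h
      · linarith
    refine ⟨hdn, ?_⟩
    -- compare ψ with its upper envelope G n b * (x-a)^(α-1)
    have hint2 : IntervalIntegrable (fun x => G n b * (α * (x - a) ^ (α - 1))) volume a b := by
      have := ((intervalIntegrable_shift_rpow a b hα0).const_mul α).const_mul (G n b)
      simpa [mul_assoc] using this
    have hmono_int : (∫ x in a..b, α * psiF α c0 t d n x) ≤
        ∫ x in a..b, G n b * (α * (x - a) ^ (α - 1)) := by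
      apply intervalIntegral.integral_mono_ae_restrict hab.le hint hint2
      rw [← MeasureTheory.Measure.restrict_congr_set MeasureTheory.Ioc_ae_eq_Icc]
      apply MeasureTheory.ae_restrict_of_forall_mem measurableSet_Ioc
      intro x hx
      have hax : a < x := hx.1
      have h1 : 0 < x - a := by linarith
      have hGle : G n x ≤ G n b := by
        rcases eq_or_lt_of_le hx.2 with h | h
        · rw [h]
        · exact (hmonoG x b hax h).le
      have h5 : psiF α c0 t d n x ≤ G n b * (x - a) ^ (α - 1) := by
        rw [psiF_eq_GF hax]
        exact mul_le_mul_of_nonneg_right hGle (Real.rpow_nonneg h1.le _)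
      calc α * psiF α c0 t d n x ≤ α * (G n b * (x - a) ^ (α - 1)) :=
            mul_le_mul_of_nonneg_left h5 hα0.le
        _ = G n b * (α * (x - a) ^ (α - 1)) := by ring
    rw [hFTC, ← hid, intervalIntegral.integral_const_mul, integral_shift_rpow a b hα0]
      at hmono_int
    exact le_of_mul_le_mul_right hmono_int hba
  -- the invariant, by induction
  have hind : ∀ n, n < N → Inv n := by
    intro n
    induction n with
    | zero =>
      intro h0
      have ht1 : 0 < t 1 := htpos 1 (by omega) (by omega)
      have hc0 : 0 < c0 := by
        have h1 := heq 0 h0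
        simp only [phiF, Finset.range_zero, Finset.sum_empty, sub_zero] at h1
        have h2 : (0:ℝ) < t (0 + 1) ^ α := Real.rpow_pos_of_pos (by simpa using ht1) _
        by_contra h
        push_neg at h
        nlinarith
      have hG0 : ∀ x, t 1 < x → G 0 x = c0 * ((x - t 1) / x) ^ (1 - α) := by
        intro x hx
        have hx0 : 0 < x := lt_trans ht1 hx
        have h1 := ratio_helper (α := α) (a := 0) (b := t 1) (x := x) ht1 hx
        rw [sub_zero] at h1
        simp only [hGdef, GF, psiF, Finset.range_zero, Finset.sum_empty, sub_zero]
        rw [mul_assoc, h1]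
      constructor
      · intro x hx
        rw [hG0 x hx]
        have hx0 : 0 < x := lt_trans ht1 hx
        exact mul_pos hc0 (Real.rpow_pos_of_pos (div_pos (by linarith) hx0) _)
      · intro x y hx hxy
        rw [hG0 x hx, hG0 y (lt_trans hx hxy)]
        have hx0 : 0 < x := lt_trans ht1 hx
        have hy0 : 0 < y := lt_trans hx0 hxy
        apply mul_lt_mul_of_pos_left ?_ hc0
        apply Real.rpow_lt_rpow (div_nonneg (by linarith) hx0.le) ?_ h1α
        rw [div_lt_div_iff₀ hx0 hy0]
        nlinarith [mul_pos ht1 (sub_pos.mpr hxy)]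
    | succ n ih =>
      intro hn1
      have hInvn := ih (by omega)
      obtain ⟨hdn, hdle⟩ := hkey n hn1 hInvn
      obtain ⟨hpos, hmonoG⟩ := hInvn
      have ha0 : 0 < t (n + 1) := htpos (n + 1) (by omega) (by omega)
      have hab : t (n + 1) < t (n + 1 + 1) := hmono (n + 1) hn1
      have hGsucc : ∀ x, t (n + 1 + 1) < x → G (n + 1) x =
          (G n x - d n) * ((x - t (n + 1 + 1)) / (x - t (n + 1))) ^ (1 - α) := by
        intro x hbx
        have hax : t (n + 1) < x := lt_trans hab hbx
        have hr := ratio_helper (α := α) hab hbx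
        have h1 : psiF α c0 t d n x = GF α c0 t d n x * (x - t (n + 1)) ^ (α - 1) :=
          psiF_eq_GF hax
        have hψ : psiF α c0 t d (n + 1) x
            = psiF α c0 t d n x - d n * (x - t (n + 1)) ^ (α - 1) := by
          simp only [psiF, Finset.sum_range_succ]
          ring
        simp only [hGdef]
        show psiF α c0 t d (n + 1) x * (x - t (n + 1 + 1)) ^ (1 - α) = _
        rw [hψ, h1, ← hr]
        ring
      have hGdiff : ∀ x, t (n + 1 + 1) < x → 0 < G n x - d n := by
        intro x hbx
        have h1 : G n (t (n + 1 + 1)) < G n x := hmonoG _ x hab hbx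
        linarith
      constructor
      · intro x hbx
        rw [hGsucc x hbx]
        have hax : t (n + 1) < x := lt_trans hab hbx
        exact mul_pos (hGdiff x hbx)
          (Real.rpow_pos_of_pos (div_pos (by linarith) (by linarith)) _)
      · intro x y hbx hxy
        have hby : t (n + 1 + 1) < y := lt_trans hbx hxy
        have hax : t (n + 1) < x := lt_trans hab hbx
        have hay : t (n + 1) < y := lt_trans hax hxy
        rw [hGsucc x hbx, hGsucc y hby]
        have hr : ((x - t (n + 1 + 1)) / (x - t (n + 1))) ^ (1 - α)
            < ((y - t (n + 1 + 1)) / (y - t (n + 1))) ^ (1 - α) := by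
          apply Real.rpow_lt_rpow (div_nonneg (by linarith) (by linarith)) ?_ h1α
          rw [div_lt_div_iff₀ (by linarith) (by linarith)]
          nlinarith [mul_pos (sub_pos.mpr hab) (sub_pos.mpr hxy)]
        have hrx : (0:ℝ) < ((x - t (n + 1 + 1)) / (x - t (n + 1))) ^ (1 - α) :=
          Real.rpow_pos_of_pos (div_pos (by linarith) (by linarith)) _
        have h2 : G n x - d n < G n y - d n := by
          have := hmonoG x y hax hxy; linarith
        calc (G n x - d n) * ((x - t (n + 1 + 1)) / (x - t (n + 1))) ^ (1 - α)
            < (G n x - d n) * ((y - t (n + 1 + 1)) / (y - t (n + 1))) ^ (1 - α) :=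
              mul_lt_mul_of_pos_left hr (hGdiff x hbx)
          _ < (G n y - d n) * ((y - t (n + 1 + 1)) / (y - t (n + 1))) ^ (1 - α) :=
              mul_lt_mul_of_pos_right h2 (lt_trans hrx hr)
  intro n hn1
  exact (hkey n hn1 (hind n (by omega))).1


end Stmt12Aux


open Stmt12Aux

/-- monotonicity of the row sums of `K_𝒫⁻¹`: with
`K_{ni} = Γ(α+1)⁻¹((t_n - t_{i-1})^α - (t_n - t_i)^α)` (here `0`-indexed: Lean row `n`,
column `i` correspond to the paper's `n+1`, `i+1`), for consecutive rows `n, m = n+1`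
one has `Σ_{j=1}^{n} (K⁻¹)_{nj} > Σ_{j=1}^{n+1} (K⁻¹)_{n+1,j}`; equivalently, with
`(K⁻¹)_{n0} := -Σ_j (K⁻¹)_{nj}`, one has `(K⁻¹)_{n0} < (K⁻¹)_{n+1,0}`. -/
theorem stmt12 (α T : ℝ) (hα : α ∈ Set.Ioo (0 : ℝ) 1) (hT : 0 < T)
    (N : ℕ) (hN : 2 ≤ N) (tP : ℕ → ℝ) (htP0 : tP 0 = 0) (htPN : tP N = T)
    (hmono : ∀ n < N, tP n < tP (n + 1))
    (K : Matrix (Fin N) (Fin N) ℝ)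
    (hK : ∀ n i : Fin N, K n i =
      if (i : ℕ) ≤ (n : ℕ) then
        (Real.Gamma (α + 1))⁻¹ *
          ((tP ((n : ℕ) + 1) - tP (i : ℕ)) ^ α - (tP ((n : ℕ) + 1) - tP ((i : ℕ) + 1)) ^ α)
      else 0) :
    ∀ n m : Fin N, (m : ℕ) = (n : ℕ) + 1 →
      ∑ j ∈ Finset.Iic m, K⁻¹ m j < ∑ j ∈ Finset.Iic n, K⁻¹ n j := by
  obtain ⟨hα0, hα1⟩ := hα
  have hΓ : 0 < Real.Gamma (α + 1) := Real.Gamma_pos_of_pos (by linarith)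
  -- K is lower triangular with positive diagonal
  have hKtri : K.BlockTriangular OrderDual.toDual := by
    intro i j hij
    rw [hK]
    exact if_neg (by have : (i:ℕ) < (j:ℕ) := hij; omega)
  have hdiag : ∀ i : Fin N, 0 < K i i := by
    intro i
    rw [hK i i, if_pos le_rfl, sub_self, Real.zero_rpow hα0.ne', sub_zero]
    exact mul_pos (inv_pos.mpr hΓ)
      (Real.rpow_pos_of_pos (sub_pos.mpr (hmono (i:ℕ) i.isLt)) _)
  have hdet : K.det ≠ 0 := by
    rw [Matrix.det_of_lowerTriangular K hKtri]
    exact (Finset.prod_pos fun i _ => hdiag i).ne'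
  haveI : Invertible K := K.invertibleOfIsUnitDet (isUnit_iff_ne_zero.mpr hdet)
  have hMlow : K⁻¹.BlockTriangular OrderDual.toDual :=
    Matrix.blockTriangular_inv_of_blockTriangular hKtri
  have hKM : K * K⁻¹ = 1 := Matrix.mul_nonsing_inv K (isUnit_iff_ne_zero.mpr hdet)
  -- the row sums of the inverse
  set s : ℕ → ℝ := fun i => if h : i < N then ∑ j, K⁻¹ ⟨i, h⟩ j else 0 with hs
  have hsval : ∀ i : Fin N, s (i : ℕ) = ∑ j, K⁻¹ i j := by
    intro i
    rw [hs]
    simp only [i.isLt, dif_pos, Fin.eta]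
  have hrow : ∀ mf : Fin N, ∑ i : Fin N, K mf i * s (i : ℕ) = 1 := by
    intro mf
    calc ∑ i : Fin N, K mf i * s (i : ℕ)
        = ∑ i : Fin N, ∑ j : Fin N, K mf i * K⁻¹ i j := by
          refine Finset.sum_congr rfl fun i _ => ?_
          rw [hsval i, Finset.mul_sum]
      _ = ∑ j : Fin N, ∑ i : Fin N, K mf i * K⁻¹ i j := Finset.sum_comm
      _ = ∑ j : Fin N, (K * K⁻¹) mf j := by
          refine Finset.sum_congr rfl fun j _ => ?_
          rw [Matrix.mul_apply]
      _ = 1 := by rw [hKM]; simp [Matrix.one_apply]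
  -- the φ-equations
  have heq : ∀ m < N, phiF α (s 0) tP (fun k => s k - s (k + 1)) m (tP (m + 1))
      = Real.Gamma (α + 1) := by
    intro m hm
    set mf : Fin N := ⟨m, hm⟩ with hmf
    have hsum : ∑ i ∈ Finset.range (m + 1),
        ((tP (m + 1) - tP i) ^ α - (tP (m + 1) - tP (i + 1)) ^ α) * s i
        = Real.Gamma (α + 1) := by
      have h2 : ∀ i : Fin N,
          (fun i : ℕ => if h : i < N then K mf ⟨i, h⟩ * s i else 0) (i : ℕ)
            = K mf i * s (i : ℕ) := by
        intro i
        simp only [i.isLt, dif_pos, Fin.eta]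
      have h3 : ∑ i ∈ Finset.range N,
          (if h : i < N then K mf ⟨i, h⟩ * s i else 0) = 1 := by
        rw [← Fin.sum_univ_eq_sum_range]
        rw [Finset.sum_congr rfl fun i _ => h2 i]
        exact hrow mf
      have h4 : ∑ i ∈ Finset.range (m + 1),
          (if h : i < N then K mf ⟨i, h⟩ * s i else 0) = 1 := by
        rw [← h3]
        apply Finset.sum_subset (Finset.range_subset_range.mpr (by omega))
        intro i hiN him
        have hi1 : i < N := Finset.mem_range.mp hiN
        have hi2 : ¬(i ≤ m) := by
          intro h; exact him (Finset.mem_range.mpr (by omega))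
        rw [dif_pos hi1, hK]
        simp only [hmf]
        rw [if_neg hi2, zero_mul]
      have h5 : ∑ i ∈ Finset.range (m + 1),
          (if h : i < N then K mf ⟨i, h⟩ * s i else 0)
          = (Real.Gamma (α + 1))⁻¹ * ∑ i ∈ Finset.range (m + 1),
            ((tP (m + 1) - tP i) ^ α - (tP (m + 1) - tP (i + 1)) ^ α) * s i := by
        rw [Finset.mul_sum]
        refine Finset.sum_congr rfl fun i hi => ?_
        have hi1 : i < N := by have := Finset.mem_range.mp hi; omega
        have hi2 : i ≤ m := by have := Finset.mem_range.mp hi; omega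
        rw [dif_pos hi1, hK]
        simp only [hmf]
        rw [if_pos hi2]
        ring
      rw [h5] at h4
      field_simp at h4
      linarith
    have habel := abel_id (fun i => (tP (m + 1) - tP i) ^ α) s m
    rw [sub_self, Real.zero_rpow hα0.ne', zero_mul, sub_zero, htP0, sub_zero] at habel
    rw [hsum] at habel
    simp only [phiF]
    rw [habel]
    ring
  -- apply the main inequality
  have hmain := main_aux α hα0 hα1 N tP htP0 hmono (s 0) (fun k => s k - s (k + 1))
    (Real.Gamma (α + 1)) hΓ heq
  -- convert `Iic` sums to full row sums
  have hfull : ∀ p : Fin N, ∑ j ∈ Finset.Iic p, K⁻¹ p j = s (p : ℕ) := by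
    intro p
    rw [hsval p]
    apply Finset.sum_subset (Finset.subset_univ _)
    intro j _ hj
    have hpj : p < j := by
      rcases lt_or_ge p j with h | h
      · exact h
      · exact absurd (Finset.mem_Iic.mpr h) hj
    exact hMlow (by exact_mod_cast hpj)
  intro n m hm
  rw [hfull n, hfull m, hm]
  have h1 : (n : ℕ) + 1 < N := by rw [← hm]; exact m.isLt
  have h2 : 0 < s (n : ℕ) - s ((n : ℕ) + 1) := hmain (n : ℕ) h1
  linarith
end

section
/- Let α ∈ (0,1), T > 0, let 𝒫 be a partition of [0,T] with N ≥ 3 subintervals, let K ∈ ℝ^{N×N} be the matrix with entries K_{ni} = (1/Γ(α+1))((t_n − t_{i−1})^α − (t_n − t_i)^α) for 1 ≤ i ≤ n ≤ N and K_{ni} = 0 for i > n, and let M = K^{−1}. Then M_{ni} < M_{n+1,i} whenever 1 ≤ i < n < N. -/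
open Matrix

namespace Stmt13Helpers

open Finset

lemma keyineq {α a b : ℝ} (hα1 : α < 1) (hb : 0 < b) (hba : b ≤ a) :
    a ^ α - b ^ α ≤ (a - b) * b ^ (α - 1) := by
  have ha : 0 < a := lt_of_lt_of_le hb hba
  have h1 : a ^ α = a * a ^ (α - 1) := by
    nth_rewrite 2 [← Real.rpow_one a]
    rw [← Real.rpow_add ha]; norm_num
  have h2 : b ^ α = b * b ^ (α - 1) := by
    nth_rewrite 2 [← Real.rpow_one b]
    rw [← Real.rpow_add hb]; norm_num
  have h3 : a ^ (α - 1) ≤ b ^ (α - 1) := by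
    rw [show α - 1 = -(1-α) by ring, Real.rpow_neg ha.le, Real.rpow_neg hb.le]
    apply inv_anti₀ (Real.rpow_pos_of_pos hb _)
    exact Real.rpow_le_rpow hb.le hba (by linarith)
  have h4 : a * a ^ (α - 1) ≤ a * b ^ (α - 1) := by
    apply mul_le_mul_of_nonneg_left h3 ha.le
  rw [h1, h2]
  nlinarith [Real.rpow_pos_of_pos hb (α - 1)]

lemma abel_sum (A v w : ℕ → ℝ) (hw0 : w 0 = v 0) (hw : ∀ q, w (q+1) = v (q+1) - v q) (n : ℕ) :
    ∑ q ∈ range (n+1), (A q - A (q+1)) * v q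
      = ∑ q ∈ range (n+1), A q * w q - A (n+1) * v n := by
  induction n with
  | zero => simp [hw0]; ring
  | succ k ih =>
    rw [sum_range_succ, ih, show k+1+1 = (k+1)+1 from rfl,
      sum_range_succ (fun q => A q * w q) (k+1), hw k]
    ring

lemma wanti {α s1 sj τ1 τ2 : ℝ} (hα1 : α < 1) (h1 : s1 < sj) (h2 : sj < τ1) (h3 : τ1 < τ2) :
    ((τ2 - s1)/(τ2 - sj)) ^ (1 - α) < ((τ1 - s1)/(τ1 - sj)) ^ (1 - α) := by
  apply Real.rpow_lt_rpow (by apply div_nonneg <;> linarith) _ (by linarith)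
  rw [div_lt_div_iff₀ (by linarith) (by linarith)]
  nlinarith

lemma hasDeriv_H (α : ℝ) (hα0 : 0 < α) (hα1 : α < 1) (s x : ℕ → ℝ) (n : ℕ) (h1n : 1 ≤ n)
    (τ : ℝ) (hτ : ∀ j ≤ n, s j < τ) :
    HasDerivAt (fun t => ∑ j ∈ range (n+1), x j * ((t - s j)/(t - s 0)) ^ α)
      ((α * ((τ - s 1)/(τ - s 0)) ^ (α-1) / (τ - s 0)^2) *
        (∑ j ∈ range (n+1), x j * (s j - s 0) * ((τ - s 1)/(τ - s j)) ^ (1-α))) τ := by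
  have h0τ : s 0 < τ := hτ 0 (Nat.zero_le n)
  have h1τ : s 1 < τ := hτ 1 h1n
  have key : ∀ j ∈ range (n+1), HasDerivAt (fun t => x j * ((t - s j)/(t - s 0)) ^ α)
      ((α * ((τ - s 1)/(τ - s 0)) ^ (α-1) / (τ - s 0)^2) *
        (x j * (s j - s 0) * ((τ - s 1)/(τ - s j)) ^ (1-α))) τ := by
    intro j hj
    have hjn : j ≤ n := by simpa [Nat.lt_succ_iff] using hj
    have hjτ : s j < τ := hτ j hjn
    have hne0 : τ - s 0 ≠ 0 := by linarith
    have hnej : τ - s j ≠ 0 := by linarith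
    have hne1 : τ - s 1 ≠ 0 := by linarith
    have d1 : HasDerivAt (fun t : ℝ => (t - s j)/(t - s 0))
        ((1 * (τ - s 0) - (τ - s j) * 1)/(τ - s 0)^2) τ :=
      ((hasDerivAt_id τ).sub_const (s j)).div ((hasDerivAt_id τ).sub_const (s 0)) hne0
    have hpos : (0:ℝ) < (τ - s j)/(τ - s 0) := div_pos (by linarith) (by linarith)
    have d2 := d1.rpow_const (p := α) (Or.inl (ne_of_gt hpos))
    have d3 := d2.const_mul (x j)
    refine d3.congr_deriv ?_
    -- the rpow identity
    have hid : ((τ - s j)/(τ - s 0)) ^ (α-1)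
        = ((τ - s 1)/(τ - s 0)) ^ (α-1) * ((τ - s 1)/(τ - s j)) ^ (1-α) := by
      have e1 : ∀ a b : ℝ, 0 < a → 0 < b → (a/b) ^ (α-1) = (b/a) ^ (1-α) := by
        intro a b ha hb
        rw [show α - 1 = -(1-α) by ring, Real.rpow_neg (le_of_lt (div_pos ha hb)),
          ← Real.inv_rpow (le_of_lt (div_pos ha hb)), inv_div]
      rw [e1 _ _ (by linarith) (by linarith), e1 _ _ (by linarith) (by linarith),
        ← Real.mul_rpow (le_of_lt (div_pos (by linarith) (by linarith)))
          (le_of_lt (div_pos (by linarith) (by linarith)))]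
      congr 1
      field_simp
    rw [hid]
    ring
  have := HasDerivAt.fun_sum key
  refine this.congr_deriv ?_
  rw [mul_sum]

lemma ht_anti (α : ℝ) (hα1 : α < 1) (s x : ℕ → ℝ) (n : ℕ) (h2n : 2 ≤ n)
    (hsm : ∀ j k : ℕ, j < k → k ≤ n → s j < s k)
    (hxpos : ∀ q, 2 ≤ q → q ≤ n → 0 < x q)
    (τ1 τ2 : ℝ) (h1 : s n < τ1) (h12 : τ1 < τ2) :
    ∑ q ∈ range (n+1), x q * (s q - s 0) * ((τ2 - s 1)/(τ2 - s q)) ^ (1-α)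
      < ∑ q ∈ range (n+1), x q * (s q - s 0) * ((τ1 - s 1)/(τ1 - s q)) ^ (1-α) := by
  have hs1n : s 1 < s n := hsm 1 n (by omega) le_rfl
  apply sum_lt_sum
  · intro q hq
    have hqn : q ≤ n := by simpa [Nat.lt_succ_iff] using hq
    have hsq : s q ≤ s n := by
      rcases eq_or_lt_of_le hqn with h | h
      · rw [h]
      · exact le_of_lt (hsm q n h le_rfl)
    rcases Nat.lt_or_ge q 2 with hq2 | hq2
    · interval_cases q
      · simp
      · have e2 : (τ2 - s 1)/(τ2 - s 1) = 1 := div_self (by linarith)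
        have e1 : (τ1 - s 1)/(τ1 - s 1) = 1 := div_self (by linarith)
        rw [e1, e2]
    · have hc : 0 < x q * (s q - s 0) :=
        mul_pos (hxpos q hq2 hqn) (by linarith [hsm 0 q (by omega) hqn])
      have hw := wanti (α := α) hα1 (hsm 1 q (by omega) hqn) (by linarith) h12
      exact le_of_lt (by nlinarith)
  · refine ⟨n, self_mem_range_succ n, ?_⟩
    have hc : 0 < x n * (s n - s 0) :=
      mul_pos (hxpos n h2n le_rfl) (by linarith [hsm 0 n (by omega) le_rfl])
    have hw := wanti (α := α) hα1 hs1n h1 h12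
    nlinarith

set_option maxHeartbeats 1000000 in
lemma core (α γ : ℝ) (hα0 : 0 < α) (hα1 : α < 1) (hγ : 0 < γ)
    (L : ℕ) (s x : ℕ → ℝ)
    (hs : ∀ k ≤ L, s k < s (k+1))
    (hrel : ∀ n ≤ L, ∑ j ∈ range (n+1), x j * (s (n+1) - s j) ^ α = if n = 0 then γ else 0) :
    ∀ j, 2 ≤ j → j ≤ L → 0 < x j := by
  -- monotonicity of s
  have smono : ∀ k ≤ L + 1, ∀ j < k, s j < s k := by
    intro k hk
    induction k with
    | zero => omega
    | succ p ih =>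
      intro j hj
      rcases Nat.lt_succ_iff_lt_or_eq.mp hj with h | h
      · exact lt_trans (ih (by omega) j h) (hs p (by omega))
      · subst h; exact hs j (by omega)
  -- x 0 > 0
  have hx0 : 0 < x 0 := by
    have h := hrel 0 (Nat.zero_le _)
    simp [sum_range_one] at h
    have hp : (0:ℝ) < (s 1 - s 0) ^ α :=
      Real.rpow_pos_of_pos (by linarith [smono 1 (by omega) 0 (by omega)]) α
    nlinarith
  -- x 1 < 0  (needs 1 ≤ L)
  have hx1 : 1 ≤ L → x 1 < 0 := by
    intro hL
    have h := hrel 1 hL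
    simp [sum_range_succ, sum_range_one] at h
    have hp1 : (0:ℝ) < (s 2 - s 0) ^ α :=
      Real.rpow_pos_of_pos (by linarith [smono 2 (by omega) 0 (by omega)]) α
    have hp2 : (0:ℝ) < (s 2 - s 1) ^ α :=
      Real.rpow_pos_of_pos (by linarith [smono 2 (by omega) 1 (by omega)]) α
    nlinarith

  intro j
  induction j using Nat.strong_induction_on with
  | _ j ih =>
  intro h2j hjL
  obtain ⟨n, rfl⟩ : ∃ n, j = n + 1 := ⟨j - 1, by omega⟩
  have h1n : 1 ≤ n := by omega
  have hn1L : n + 1 ≤ L := hjL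
  have hxpos : ∀ q, 2 ≤ q → q ≤ n → 0 < x q := fun q h2 hq => ih q (by omega) h2 (by omega)
  have hx1' : x 1 < 0 := hx1 (by omega)
  have hss : ∀ a b : ℕ, a < b → b ≤ n + 2 → s a < s b := fun a b h hb =>
    smono b (by omega) a h
  set Hf : ℝ → ℝ := fun t => ∑ q ∈ range (n+1), x q * ((t - s q)/(t - s 0)) ^ α with hHf
  set htf : ℝ → ℝ := fun t => ∑ q ∈ range (n+1), x q * (s q - s 0) * ((t - s 1)/(t - s q)) ^ (1-α) with hhtdef
  set Pf : ℝ → ℝ := fun t => α * ((t - s 1)/(t - s 0)) ^ (α-1) / (t - s 0)^2 with hPf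
  have hslt : ∀ τ, s n < τ → ∀ q ≤ n, s q < τ := by
    intro τ hτ q hq
    rcases eq_or_lt_of_le hq with h | h
    · rw [h]; exact hτ
    · exact lt_trans (hss q n h (by omega)) hτ
  have hderiv : ∀ τ, s n < τ → HasDerivAt Hf (Pf τ * htf τ) τ := fun τ h =>
    hasDeriv_H α hα0 hα1 s x n h1n τ (hslt τ h)
  have hPfpos : ∀ τ, s n < τ → 0 < Pf τ := by
    intro τ h
    have h0 : s 0 < τ := hslt τ h 0 (by omega)
    have h1 : s 1 < τ := hslt τ h 1 (by omega)
    have : (0:ℝ) < ((τ - s 1)/(τ - s 0)) ^ (α-1) :=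
      Real.rpow_pos_of_pos (div_pos (by linarith) (by linarith)) _
    have h2 : (0:ℝ) < (τ - s 0)^2 := pow_pos (by linarith) 2
    simp only [hPf]
    exact div_pos (mul_pos hα0 this) h2
  have hHval : ∀ τ, s n < τ → Hf τ = (∑ q ∈ range (n+1), x q * (τ - s q) ^ α) / (τ - s 0)^α := by
    intro τ h
    rw [hHf, sum_div]
    apply sum_congr rfl
    intro q hq
    have hq' : s q < τ := hslt τ h q (by simpa [Nat.lt_succ_iff] using hq)
    have h0 : s 0 < τ := hslt τ h 0 (by omega)
    rw [Real.div_rpow (by linarith) (by linarith), mul_div_assoc]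
  have hsn1 : s n < s (n+1) := hss n (n+1) (by omega) (by omega)
  have hH1 : Hf (s (n+1)) = 0 := by
    rw [hHval _ hsn1]
    have h := hrel n (by omega)
    rw [if_neg (by omega)] at h
    rw [h, zero_div]
  obtain ⟨ξ, hξ1, hξ2, hξneg⟩ : ∃ ξ, s n < ξ ∧ ξ < s (n+1) ∧ ∀ τ, ξ < τ → htf τ < 0 := by
    rcases eq_or_lt_of_le h1n with hn1 | h2n
    · -- n = 1
      subst hn1
      have h12 : s 1 < s 2 := hss 1 2 (by omega) (by omega)
      refine ⟨(s 1 + s 2)/2, by linarith, by linarith, ?_⟩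
      intro τ hτ
      have hτ1 : s 1 < τ := by linarith
      simp only [hhtdef]
      rw [show (1:ℕ)+1 = 2 from rfl, sum_range_succ, sum_range_one]
      have e1 : (τ - s 1)/(τ - s 1) = 1 := div_self (by linarith)
      rw [e1, Real.one_rpow]
      have h10 : s 0 < s 1 := hss 0 1 (by omega) (by omega)
      have : x 1 * (s 1 - s 0) < 0 := mul_neg_of_neg_of_pos hx1' (by linarith)
      simp only [sub_self, zero_mul, mul_zero, zero_add, mul_one]
      linarith
    · -- n ≥ 2 : positivity near s n, then MVT
      have hxn : 0 < x n := hxpos n h2n le_rfl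
      set C := ∑ q ∈ range n, |x q| * (s n - s q) ^ (α - 1) with hC
      have hC0 : 0 ≤ C := by
        apply sum_nonneg
        intro q hq
        have : s q < s n := hss q n (by simpa using hq) (by omega)
        exact mul_nonneg (abs_nonneg _) (le_of_lt (Real.rpow_pos_of_pos (by linarith) _))
      set ε := min ((s (n+1) - s n)/2) ((x n/(C+1)) ^ (1-α)⁻¹) with hε
      have hε0 : 0 < ε :=
        lt_min (by linarith) (Real.rpow_pos_of_pos (div_pos hxn (by linarith)) _)
      have hεs : ε ≤ (s (n+1) - s n)/2 := min_le_left _ _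
      set p := s n + ε with hp
      have hppos : s n < p := by rw [hp]; linarith
      have hpn1 : p < s (n+1) := by rw [hp]; linarith
      have hε1α : ε ^ (1-α) ≤ x n/(C+1) := by
        have h1 := Real.rpow_le_rpow (le_of_lt hε0) (min_le_right ((s (n+1) - s n)/2) _) (by linarith : (0:ℝ) ≤ 1-α)
        rwa [Real.rpow_inv_rpow (le_of_lt (div_pos hxn (by linarith))) (by linarith : (1:ℝ)-α ≠ 0)] at h1
      -- previous relation
      have hreln1 : ∑ q ∈ range n, x q * (s n - s q) ^ α = 0 := by
        have h := hrel (n-1) (by omega)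
        rw [if_neg (by omega)] at h
        have hn1 : n - 1 + 1 = n := by omega
        rw [hn1] at h
        exact h
      have hGp : 0 < ∑ q ∈ range (n+1), x q * (p - s q) ^ α := by
        rw [sum_range_succ]
        have hterm : ∀ q ∈ range n,
            -( |x q| * (s n - s q) ^ (α - 1) * ε) ≤ x q * (p - s q) ^ α - x q * (s n - s q) ^ α := by
          intro q hq
          have hqn : q < n := by simpa using hq
          have hsq : s q < s n := hss q n hqn (by omega)
          have hkey := keyineq (α := α) hα1 (by linarith : (0:ℝ) < s n - s q)
            (by rw [hp]; linarith : s n - s q ≤ p - s q)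
          have hmono : (s n - s q) ^ α ≤ (p - s q) ^ α :=
            Real.rpow_le_rpow (by linarith) (by rw [hp]; linarith) (le_of_lt hα0)
          have habs : |x q * (p - s q) ^ α - x q * (s n - s q) ^ α|
              ≤ |x q| * (s n - s q) ^ (α-1) * ε := by
            rw [← mul_sub, abs_mul]
            have h2 : |(p - s q) ^ α - (s n - s q) ^ α| ≤ (s n - s q) ^ (α-1) * ε := by
              rw [abs_of_nonneg (by linarith)]
              have : p - s q - (s n - s q) = ε := by rw [hp]; ring
              nlinarith [Real.rpow_pos_of_pos (show (0:ℝ) < s n - s q by linarith) (α-1)]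
            calc |x q| * |(p - s q) ^ α - (s n - s q) ^ α|
                ≤ |x q| * ((s n - s q) ^ (α-1) * ε) :=
                  mul_le_mul_of_nonneg_left h2 (abs_nonneg _)
              _ = |x q| * (s n - s q) ^ (α-1) * ε := by ring
          linarith [neg_abs_le (x q * (p - s q) ^ α - x q * (s n - s q) ^ α)]
        have hsum : -(C * ε) ≤ ∑ q ∈ range n, (x q * (p - s q) ^ α - x q * (s n - s q) ^ α) := by
          have := sum_le_sum hterm
          calc -(C * ε) = ∑ q ∈ range n, -( |x q| * (s n - s q) ^ (α - 1) * ε) := by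
                rw [sum_neg_distrib, ← sum_mul, hC]
            _ ≤ _ := this
        have hsplit : ∑ q ∈ range n, (x q * (p - s q) ^ α - x q * (s n - s q) ^ α)
            = ∑ q ∈ range n, x q * (p - s q) ^ α := by
          rw [sum_sub_distrib, hreln1, sub_zero]
        have hεsplit : ε = ε ^ α * ε ^ (1-α) := by
          rw [← Real.rpow_add hε0]; norm_num
        have hps : p - s n = ε := by rw [hp]; ring
        have hεα : (0:ℝ) < ε ^ α := Real.rpow_pos_of_pos hε0 _
        have hfinal : C * ε ≤ ε ^ α * (C * (x n/(C+1))) := by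
          calc C * ε = C * (ε ^ α * ε ^ (1-α)) := by rw [← hεsplit]
            _ = ε ^ α * (C * ε ^ (1-α)) := by ring
            _ ≤ ε ^ α * (C * (x n/(C+1))) :=
                mul_le_mul_of_nonneg_left
                  (mul_le_mul_of_nonneg_left hε1α hC0) (le_of_lt hεα)
        have hCx : C * (x n/(C+1)) < x n := by
          have he : C * (x n/(C+1)) = (C * x n)/(C+1) := by ring
          rw [he, div_lt_iff₀ (by linarith : (0:ℝ) < C+1)]
          nlinarith
        have hchain : C * ε < ε ^ α * x n :=
          lt_of_le_of_lt hfinal (mul_lt_mul_of_pos_left hCx hεα)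
        have hS : -(C*ε) ≤ ∑ q ∈ range n, x q * (p - s q) ^ α := hsplit ▸ hsum
        rw [hps]
        have hcm : x n * ε ^ α = ε ^ α * x n := mul_comm _ _
        linarith [hchain, hS, hcm]
      have hHp : 0 < Hf p := by
        rw [hHval p hppos]
        have h0 : s 0 < p := hslt p hppos 0 (by omega)
        exact div_pos hGp (Real.rpow_pos_of_pos (by linarith) _)
      have hcont2 : ContinuousOn Hf (Set.Icc p (s (n+1))) := fun τ hτ =>
        ((hderiv τ (lt_of_lt_of_le hppos hτ.1)).continuousAt).continuousWithinAt
      have hdOn : ∀ τ ∈ Set.Ioo p (s (n+1)), HasDerivAt Hf (Pf τ * htf τ) τ := fun τ hτ =>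
        hderiv τ (lt_trans hppos hτ.1)
      obtain ⟨ξ, hξmem, hslope⟩ :=
        exists_hasDerivAt_eq_slope Hf (fun τ => Pf τ * htf τ) hpn1 hcont2 hdOn
      have hξn : s n < ξ := lt_trans hppos hξmem.1
      have hsneg : Pf ξ * htf ξ < 0 := by
        rw [hslope, hH1]
        apply div_neg_of_neg_of_pos <;> linarith
      have hhtξ : htf ξ < 0 := by
        by_contra hcon
        push_neg at hcon
        exact absurd hsneg (not_lt.mpr (mul_nonneg (le_of_lt (hPfpos ξ hξn)) hcon))
      refine ⟨ξ, hξn, hξmem.2, fun τ hτ => ?_⟩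
      have hanti := ht_anti α hα1 s x n h2n
        (fun a b hab hb => hss a b hab (by omega)) hxpos ξ τ hξn hτ
      rw [hhtdef]
      calc (∑ q ∈ range (n+1), x q * (s q - s 0) * ((τ - s 1)/(τ - s q)) ^ (1-α)) < htf ξ := hanti
        _ < 0 := hhtξ
  -- endgame
  have hcont : ContinuousOn Hf (Set.Ici ξ) := fun τ hτ =>
    ((hderiv τ (lt_of_lt_of_le hξ1 hτ)).continuousAt).continuousWithinAt
  have hanti : StrictAntiOn Hf (Set.Ici ξ) := by
    apply strictAntiOn_of_deriv_neg (convex_Ici ξ) hcont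
    intro τ hτ
    rw [interior_Ici] at hτ
    have hτn : s n < τ := lt_trans hξ1 hτ
    rw [(hderiv τ hτn).deriv]
    exact mul_neg_of_pos_of_neg (hPfpos τ hτn) (hξneg τ hτ)
  have hsn2 : s (n+1) < s (n+2) := hss (n+1) (n+2) (by omega) (by omega)
  have hlt : Hf (s (n+2)) < Hf (s (n+1)) :=
    hanti (Set.mem_Ici.mpr (by linarith)) (Set.mem_Ici.mpr (by linarith)) hsn2
  have hH2neg : Hf (s (n+2)) < 0 := by rw [hH1] at hlt; exact hlt
  have hsn2' : s n < s (n+2) := by linarith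
  have hGneg : ∑ q ∈ range (n+1), x q * (s (n+2) - s q) ^ α < 0 := by
    have h := hHval (s (n+2)) hsn2'
    rw [h] at hH2neg
    have h0 : s 0 < s (n+2) := hslt (s (n+2)) hsn2' 0 (by omega)
    have hD : (0:ℝ) < (s (n+2) - s 0) ^ α := Real.rpow_pos_of_pos (by linarith) _
    rcases div_neg_iff.mp hH2neg with ⟨h1, h2⟩ | ⟨h1, h2⟩
    · linarith
    · exact h1
  have hfin := hrel (n+1) hn1L
  rw [if_neg (by omega), sum_range_succ] at hfin
  have hpow : (0:ℝ) < (s (n+2) - s (n+1)) ^ α := Real.rpow_pos_of_pos (by linarith) _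
  nlinarith [hfin, hGneg]

end Stmt13Helpers

open Stmt13Helpers Finset in
/-- columnwise monotonicity of `K_𝒫⁻¹`: with
`K_{ni} = Γ(α+1)⁻¹((t_n - t_{i-1})^α - (t_n - t_i)^α)` (here `0`-indexed: Lean row `n`,
column `i` correspond to the paper's `n+1`, `i+1`), the strictly lower triangular
entries of the inverse increase along columns: `(K⁻¹)_{ni} < (K⁻¹)_{n+1,i}` whenever
`1 ≤ i < n < N` in the paper's indexing. -/
theorem stmt13 (α T : ℝ) (hα : α ∈ Set.Ioo (0 : ℝ) 1) (hT : 0 < T)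
    (N : ℕ) (hN : 3 ≤ N) (tP : ℕ → ℝ) (htP0 : tP 0 = 0) (htPN : tP N = T)
    (hmono : ∀ n < N, tP n < tP (n + 1))
    (K : Matrix (Fin N) (Fin N) ℝ)
    (hK : ∀ n i : Fin N, K n i =
      if (i : ℕ) ≤ (n : ℕ) then
        (Real.Gamma (α + 1))⁻¹ *
          ((tP ((n : ℕ) + 1) - tP (i : ℕ)) ^ α - (tP ((n : ℕ) + 1) - tP ((i : ℕ) + 1)) ^ α)
      else 0) :
    ∀ i n m : Fin N, i < n → (m : ℕ) = (n : ℕ) + 1 →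
      K⁻¹ n i < K⁻¹ m i := by
  obtain ⟨hα0, hα1⟩ := hα
  have hΓ : 0 < Real.Gamma (α + 1) := Real.Gamma_pos_of_pos (by linarith)
  have hc : 0 < (Real.Gamma (α + 1))⁻¹ := inv_pos.mpr hΓ
  -- triangularity of K
  have hKbt : K.BlockTriangular (OrderDual.toDual : Fin N → (Fin N)ᵒᵈ) := by
    intro a b hab
    have hab' : (a : ℕ) < (b : ℕ) := hab
    rw [hK]
    exact if_neg (by omega)
  -- diagonal entries
  have hdiag : ∀ r : Fin N, K r r = (Real.Gamma (α + 1))⁻¹ * (tP ((r : ℕ) + 1) - tP (r : ℕ)) ^ α := by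
    intro r
    rw [hK, if_pos le_rfl, sub_self, Real.zero_rpow (ne_of_gt hα0), sub_zero]
  have hdiagpos : ∀ r : Fin N, 0 < K r r := by
    intro r
    rw [hdiag r]
    exact mul_pos hc (Real.rpow_pos_of_pos (by linarith [hmono (r : ℕ) r.isLt]) _)
  have hdet : IsUnit K.det := by
    rw [Matrix.det_of_lowerTriangular K hKbt]
    exact (Finset.prod_pos fun r _ => hdiagpos r).ne'.isUnit
  haveI : Invertible K := K.invertibleOfIsUnitDet hdet
  have hinvbt : K⁻¹.BlockTriangular (OrderDual.toDual : Fin N → (Fin N)ᵒᵈ) :=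
    Matrix.blockTriangular_inv_of_blockTriangular hKbt
  have hmul : K * K⁻¹ = 1 := Matrix.mul_nonsing_inv K hdet
  intro i n m hin hm
  -- sequences
  set u : ℕ → ℝ := fun k => if hk : k < N then K⁻¹ ⟨k, hk⟩ i else 0 with hu
  set x : ℕ → ℝ := fun j => match j with
    | 0 => u (i : ℕ)
    | Nat.succ k => u ((i : ℕ) + k + 1) - u ((i : ℕ) + k) with hx
  set L : ℕ := N - 1 - (i : ℕ) with hL
  set s : ℕ → ℝ := fun k => tP ((i : ℕ) + k) with hs
  have hiN : (i : ℕ) < N := i.isLt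
  have hsmono : ∀ k ≤ L, s k < s (k+1) := by
    intro k hk
    have : (i : ℕ) + k < N := by omega
    simpa [hs, Nat.add_assoc] using hmono ((i : ℕ) + k) this
  have huzero : ∀ k, k < (i : ℕ) → u k = 0 := by
    intro k hk
    rw [hu]
    simp only
    rw [dif_pos (by omega : k < N)]
    have hlt : (⟨k, by omega⟩ : Fin N) < i := by rw [Fin.lt_def]; exact hk
    exact hinvbt (OrderDual.toDual_lt_toDual.mpr hlt)
  have hrel : ∀ n' ≤ L, ∑ q ∈ range (n'+1), x q * (s (n'+1) - s q) ^ α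
      = if n' = 0 then Real.Gamma (α+1) else 0 := by
    intro n' hn'
    have hrN : (i:ℕ) + n' < N := by omega
    set r : Fin N := ⟨(i:ℕ) + n', hrN⟩ with hr
    have hrowsum : ∑ j : Fin N, K r j * K⁻¹ j i = if r = i then 1 else 0 := by
      have h := congrFun (congrFun hmul r) i
      rwa [Matrix.mul_apply, Matrix.one_apply] at h
    set g : ℕ → ℝ := fun k => if hk : k < N then K r ⟨k, hk⟩ * u k else 0 with hg
    have h1 : ∑ j : Fin N, K r j * K⁻¹ j i = ∑ k ∈ range N, g k := by
      rw [← Fin.sum_univ_eq_sum_range g N]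
      apply Finset.sum_congr rfl
      intro j _
      rw [hg]
      simp only
      rw [dif_pos j.isLt, hu]
      simp only
      rw [dif_pos j.isLt, Fin.eta]
    have h2 : ∑ k ∈ range N, g k = ∑ k ∈ range ((i:ℕ)+n'+1), g k := by
      symm
      apply Finset.sum_subset (Finset.range_subset_range.mpr (by omega : (i:ℕ)+n'+1 ≤ N))
      intro k hkN hknot
      have hk1 : (i:ℕ) + n' < k := by
        simp only [Finset.mem_range] at hknot ⊢
        omega
      have hkN' : k < N := Finset.mem_range.mp hkN
      rw [hg]
      simp only
      rw [dif_pos hkN', hK]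
      rw [if_neg (by simpa using by omega : ¬ ((⟨k, hkN'⟩ : Fin N) : ℕ) ≤ (r : ℕ))]
      exact zero_mul _
    have h3 : ∑ k ∈ range ((i:ℕ)+n'+1), g k = ∑ q ∈ range (n'+1), g ((i:ℕ)+q) := by
      rw [Finset.range_eq_Ico, ← Finset.sum_Ico_consecutive _ (Nat.zero_le (i:ℕ)) (by omega)]
      have hzero : ∑ k ∈ Finset.Ico 0 (i:ℕ), g k = 0 := by
        apply Finset.sum_eq_zero
        intro k hk
        have hki : k < (i:ℕ) := (Finset.mem_Ico.mp hk).2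
        rw [hg]
        simp only
        rw [dif_pos (by omega : k < N), huzero k hki, mul_zero]
      rw [hzero, zero_add, Finset.sum_Ico_eq_sum_range]
      have he : (i:ℕ)+n'+1 - (i:ℕ) = n'+1 := by omega
      rw [he, Finset.range_eq_Ico]
    set A : ℕ → ℝ := fun q => (tP ((i:ℕ)+n'+1) - tP ((i:ℕ)+q)) ^ α with hA
    set v : ℕ → ℝ := fun q => u ((i:ℕ)+q) with hv
    have h4 : ∑ q ∈ range (n'+1), g ((i:ℕ)+q)
        = (Real.Gamma (α + 1))⁻¹ * ∑ q ∈ range (n'+1), (A q - A (q+1)) * v q := by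
      rw [Finset.mul_sum]
      apply Finset.sum_congr rfl
      intro q hq
      have hqn : q ≤ n' := by simpa [Nat.lt_succ_iff] using hq
      have hiqN : (i:ℕ) + q < N := by omega
      rw [hg]
      simp only
      rw [dif_pos hiqN, hK]
      rw [if_pos (by simp only [hr, Fin.val_mk]; omega : ((⟨(i:ℕ)+q, hiqN⟩ : Fin N) : ℕ) ≤ (r : ℕ))]
      rw [hA, hv]
      simp only [hr]
      ring_nf
    have h5 : ∑ q ∈ range (n'+1), (A q - A (q+1)) * v q
        = ∑ q ∈ range (n'+1), A q * x q := by
      rw [abel_sum A v x rfl (fun q => rfl) n']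
      have hAz : A (n'+1) = 0 := by
        rw [hA]
        simp only
        rw [show (i:ℕ) + (n'+1) = (i:ℕ) + n' + 1 from rfl, sub_self,
          Real.zero_rpow (ne_of_gt hα0)]
      rw [hAz, zero_mul, sub_zero]
    have h6 : (Real.Gamma (α + 1))⁻¹ * ∑ q ∈ range (n'+1), A q * x q
        = if r = i then 1 else 0 := by
      rw [← h5, ← h4, ← h3, ← h2, ← h1, hrowsum]
    have h7 : ∑ q ∈ range (n'+1), x q * (s (n'+1) - s q) ^ α
        = ∑ q ∈ range (n'+1), A q * x q := by
      apply Finset.sum_congr rfl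
      intro q _
      rw [hA, hs]
      simp only
      rw [mul_comm]
      congr 2
    rw [h7]
    by_cases h0 : n' = 0
    · have hri : r = i := Fin.ext (by simp [hr, h0])
      rw [if_pos hri] at h6
      rw [if_pos h0]
      have hΓne : (Real.Gamma (α + 1)) ≠ 0 := ne_of_gt hΓ
      field_simp at h6
      linarith [h6]
    · have hri : ¬ r = i := by
        rw [Fin.ext_iff]
        simp only [hr]
        simp
        omega
      rw [if_neg hri] at h6
      rw [if_neg h0]
      rcases mul_eq_zero.mp h6 with h | h
      · exact absurd h (ne_of_gt hc)
      · exact h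
  -- apply the core lemma
  have hcore := core α (Real.Gamma (α+1)) hα0 hα1 hΓ L s x hsmono hrel
  obtain ⟨k, hk⟩ : ∃ k, (n:ℕ) = (i:ℕ) + k := ⟨(n:ℕ) - (i:ℕ), by omega⟩
  have hk1 : 1 ≤ k := by
    have : (i:ℕ) < (n:ℕ) := hin
    omega
  have hmN : (m:ℕ) < N := m.isLt
  have hnN : (n:ℕ) + 1 < N := by omega
  have hxval : x (k+1) = K⁻¹ m i - K⁻¹ n i := by
    have hk1N : (i:ℕ)+k+1 < N := by omega
    have hkN : (i:ℕ)+k < N := by omega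
    have e1 : (⟨(i:ℕ)+k+1, hk1N⟩ : Fin N) = m := by
      apply Fin.ext
      simp only [Fin.val_mk]
      omega
    have e2 : (⟨(i:ℕ)+k, hkN⟩ : Fin N) = n := by
      apply Fin.ext
      simp only [Fin.val_mk]
      omega
    have hu1 : u ((i:ℕ)+k+1) = K⁻¹ m i := by
      rw [hu]
      simp only
      rw [dif_pos hk1N, e1]
    have hu2 : u ((i:ℕ)+k) = K⁻¹ n i := by
      rw [hu]
      simp only
      rw [dif_pos hkN, e2]
    show u ((i:ℕ)+k+1) - u ((i:ℕ)+k) = K⁻¹ m i - K⁻¹ n i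
    rw [hu1, hu2]
  have hpos := hcore (k+1) (by omega) (by omega)
  rw [hxval] at hpos
  linarith
end

section
/- Let α ∈ (0,1) and let c_1, c_2, c_3 be real numbers with 0 ≤ c_1 < c_2 < c_3. Then the function h(x) = ((x+c_3)^α − (x+c_2)^α) / ((x+c_2)^α − (x+c_1)^α) is well defined (the denominator is positive) and strictly increasing on [0,∞): for all 0 ≤ x_1 < x_2 one has h(x_1) < h(x_2). -/
open Set


private lemma cross_alg (N₁ N₂ D₁ D₂ p1 p2 q1 q2 : ℝ)
    (hN₁ : 0 < N₁) (hD₁ : 0 < D₁) (hp1 : 0 < p1) (hq1 : 0 < q1)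
    (e1 : N₂ * p1 = N₁ * p2) (e2 : D₂ * q1 = D₁ * q2)
    (hk : q2 * p1 < p2 * q1) : N₁ * D₂ < N₂ * D₁ := by
  have step : N₁ * D₂ * (p1 * q1) < N₂ * D₁ * (p1 * q1) := by
    calc N₁ * D₂ * (p1 * q1) = N₁ * (D₂ * q1) * p1 := by ring
      _ = N₁ * (D₁ * q2) * p1 := by rw [e2]
      _ = (N₁ * D₁) * (q2 * p1) := by ring
      _ < (N₁ * D₁) * (p2 * q1) := mul_lt_mul_of_pos_left hk (mul_pos hN₁ hD₁)
      _ = (N₁ * p2) * (D₁ * q1) := by ring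
      _ = (N₂ * p1) * (D₁ * q1) := by rw [e1]
      _ = N₂ * D₁ * (p1 * q1) := by ring
  exact lt_of_mul_lt_mul_right step (by positivity)

private lemma mvt_key (α x₁ x₂ a b : ℝ) (hα0 : 0 < α)
    (hx₁ : 0 ≤ x₁) (hx : x₁ < x₂) (ha : 0 ≤ a) (hab : a < b) :
    ∃ ξ ∈ Set.Ioo a b,
      ((x₂ + b) ^ α - (x₂ + a) ^ α) * (α * (x₁ + ξ) ^ (α - 1)) =
        ((x₁ + b) ^ α - (x₁ + a) ^ α) * (α * (x₂ + ξ) ^ (α - 1)) := by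
  have hcont : ∀ y : ℝ, 0 ≤ y → ContinuousOn (fun t => (y + t) ^ α) (Icc a b) := by
    intro y hy
    exact ContinuousOn.rpow_const (by fun_prop) fun t _ => Or.inr hα0.le
  have hderiv : ∀ y : ℝ, 0 ≤ y → ∀ t ∈ Ioo a b,
      HasDerivAt (fun t => (y + t) ^ α) (α * (y + t) ^ (α - 1)) t := by
    intro y hy t ht
    have hyt : (0:ℝ) < y + t := by
      have := ht.1; linarith
    have h1 : HasDerivAt (fun t : ℝ => y + t) 1 t := (hasDerivAt_id t).const_add y
    have := h1.rpow_const (p := α) (Or.inl hyt.ne')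
    simpa using this
  obtain ⟨ξ, hξ, h⟩ := exists_ratio_hasDerivAt_eq_ratio_slope
    (fun t => (x₁ + t) ^ α) (fun t => α * (x₁ + t) ^ (α - 1)) hab (hcont x₁ hx₁)
    (hderiv x₁ hx₁) (fun t => (x₂ + t) ^ α) (fun t => α * (x₂ + t) ^ (α - 1))
    (hcont x₂ (hx₁.trans hx.le)) (hderiv x₂ (hx₁.trans hx.le))
  exact ⟨ξ, hξ, h⟩

/-- for `α ∈ (0,1)` and `0 ≤ c₁ < c₂ < c₃`, the function
`h(x) = ((x+c₃)^α - (x+c₂)^α)/((x+c₂)^α - (x+c₁)^α)` is well defined (its denominator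
is positive) and strictly increasing on `[0,∞)`. -/
theorem stmt14 (α c₁ c₂ c₃ : ℝ) (hα : α ∈ Set.Ioo (0 : ℝ) 1)
    (hc₁ : 0 ≤ c₁) (h12 : c₁ < c₂) (h23 : c₂ < c₃) :
    (∀ x : ℝ, 0 ≤ x → 0 < (x + c₂) ^ α - (x + c₁) ^ α) ∧
    (∀ x₁ x₂ : ℝ, 0 ≤ x₁ → x₁ < x₂ →
      ((x₁ + c₃) ^ α - (x₁ + c₂) ^ α) / ((x₁ + c₂) ^ α - (x₁ + c₁) ^ α) <
        ((x₂ + c₃) ^ α - (x₂ + c₂) ^ α) / ((x₂ + c₂) ^ α - (x₂ + c₁) ^ α)) := by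
  obtain ⟨hα0, hα1⟩ := hα
  have hpos : ∀ x a b : ℝ, 0 ≤ x → 0 ≤ a → a < b → 0 < (x + b) ^ α - (x + a) ^ α := by
    intro x a b hx ha hab
    have : (x + a) ^ α < (x + b) ^ α :=
      Real.rpow_lt_rpow (by linarith) (by linarith) hα0
    linarith
  refine ⟨fun x hx => hpos x c₁ c₂ hx hc₁ h12, ?_⟩
  intro x₁ x₂ hx₁ hx
  have hx₂ : 0 ≤ x₂ := hx₁.trans hx.le
  have hD₁ := hpos x₁ c₁ c₂ hx₁ hc₁ h12
  have hD₂ := hpos x₂ c₁ c₂ hx₂ hc₁ h12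
  have hN₁ := hpos x₁ c₂ c₃ hx₁ (hc₁.trans h12.le) h23
  have hN₂ := hpos x₂ c₂ c₃ hx₂ (hc₁.trans h12.le) h23
  rw [div_lt_div_iff₀ hD₁ hD₂]
  obtain ⟨ξ, hξ, hξeq⟩ := mvt_key α x₁ x₂ c₂ c₃ hα0 hx₁ hx (hc₁.trans h12.le) h23
  obtain ⟨η, hη, hηeq⟩ := mvt_key α x₁ x₂ c₁ c₂ hα0 hx₁ hx hc₁ h12
  -- positivity facts
  have hx₁ξ : (0:ℝ) < x₁ + ξ := by have := hξ.1; nlinarith [hc₁.trans h12.le]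
  have hx₂ξ : (0:ℝ) < x₂ + ξ := by linarith
  have hx₁η : (0:ℝ) < x₁ + η := by have := hη.1; linarith
  have hx₂η : (0:ℝ) < x₂ + η := by linarith
  have hηξ : η < ξ := hη.2.trans hξ.1
  -- ratio (x₂+t)/(x₁+t) is strictly decreasing in t
  have hratio : (x₂ + ξ) / (x₁ + ξ) < (x₂ + η) / (x₁ + η) := by
    rw [div_lt_div_iff₀ hx₁ξ hx₁η]
    nlinarith
  have hexp : α - 1 < 0 := by linarith
  have hkey : ((x₂ + η) / (x₁ + η)) ^ (α - 1) < ((x₂ + ξ) / (x₁ + ξ)) ^ (α - 1) :=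
    Real.rpow_lt_rpow_of_neg (by positivity) hratio hexp
  rw [Real.div_rpow hx₂ξ.le hx₁ξ.le, Real.div_rpow hx₂η.le hx₁η.le,
    div_lt_div_iff₀ (by positivity) (by positivity)] at hkey
  -- powers positive
  have p1 : (0:ℝ) < (x₁ + ξ) ^ (α - 1) := Real.rpow_pos_of_pos hx₁ξ _
  have p2 : (0:ℝ) < (x₂ + ξ) ^ (α - 1) := Real.rpow_pos_of_pos hx₂ξ _
  have q1 : (0:ℝ) < (x₁ + η) ^ (α - 1) := Real.rpow_pos_of_pos hx₁η _
  have q2 : (0:ℝ) < (x₂ + η) ^ (α - 1) := Real.rpow_pos_of_pos hx₂η _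
  -- cancel α in the MVT equations
  have hξeq' : ((x₂ + c₃) ^ α - (x₂ + c₂) ^ α) * (x₁ + ξ) ^ (α - 1) =
      ((x₁ + c₃) ^ α - (x₁ + c₂) ^ α) * (x₂ + ξ) ^ (α - 1) := by
    have := hξeq
    field_simp at this
    rcases mul_eq_mul_left_iff.mp (by linarith [this] : α * (((x₂ + c₃) ^ α - (x₂ + c₂) ^ α) * (x₁ + ξ) ^ (α - 1)) = α * (((x₁ + c₃) ^ α - (x₁ + c₂) ^ α) * (x₂ + ξ) ^ (α - 1))) with h | h
    · exact h
    · exact absurd h hα0.ne'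
  have hηeq' : ((x₂ + c₂) ^ α - (x₂ + c₁) ^ α) * (x₁ + η) ^ (α - 1) =
      ((x₁ + c₂) ^ α - (x₁ + c₁) ^ α) * (x₂ + η) ^ (α - 1) := by
    have := hηeq
    rcases mul_eq_mul_left_iff.mp (by linarith [this] : α * (((x₂ + c₂) ^ α - (x₂ + c₁) ^ α) * (x₁ + η) ^ (α - 1)) = α * (((x₁ + c₂) ^ α - (x₁ + c₁) ^ α) * (x₂ + η) ^ (α - 1))) with h | h
    · exact h
    · exact absurd h hα0.ne'
  exact cross_alg _ _ _ _ _ _ _ _ hN₁ hD₁ p1 q1 hξeq' hηeq' hkey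
end

section
/- Let α ∈ (0,1) and let a, b, c be real numbers with 0 < a < b < c. Then the function h_1(x) = ((1 − x/c)^α − (1 − x/b)^α) / ((1 − x/b)^α − (1 − x/a)^α) is well defined on (0, a) (both numerator and denominator are positive there) and strictly decreasing on (0, a): for all 0 < x_1 < x_2 < a one has h_1(x_1) > h_1(x_2). -/
open Real Set MeasureTheory intervalIntegral

private lemma ptwise_lt {α x₁ x₂ s t : ℝ} (hα : α < 1) (hx : x₁ < x₂)
    (hs2 : 0 < 1 - x₂*s) (hs1 : 0 < 1 - x₁*s) (ht2 : 0 < 1 - x₂*t) (ht1 : 0 < 1 - x₁*t)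
    (hst : s < t) :
    (1 - x₂*s)^(α-1) * (1 - x₁*t)^(α-1) < (1 - x₁*s)^(α-1) * (1 - x₂*t)^(α-1) := by
  rw [← Real.mul_rpow hs2.le ht1.le, ← Real.mul_rpow hs1.le ht2.le]
  apply Real.rpow_lt_rpow_of_neg (by positivity) (by nlinarith) (by linarith)

private lemma ptwise_le {α x₁ x₂ s t : ℝ} (hα : α < 1) (hx : x₁ < x₂)
    (hs2 : 0 < 1 - x₂*s) (hs1 : 0 < 1 - x₁*s) (ht2 : 0 < 1 - x₂*t) (ht1 : 0 < 1 - x₁*t)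
    (hst : s ≤ t) :
    (1 - x₂*s)^(α-1) * (1 - x₁*t)^(α-1) ≤ (1 - x₁*s)^(α-1) * (1 - x₂*t)^(α-1) := by
  rw [← Real.mul_rpow hs2.le ht1.le, ← Real.mul_rpow hs1.le ht2.le]
  apply Real.rpow_le_rpow_of_nonpos (by positivity) (by nlinarith) (by linarith)

private lemma ftc15 {α x p q : ℝ} (hpq : p < q)
    (hpos : ∀ t ∈ Set.Icc p q, 0 < 1 - x*t) :
    α * x * ∫ t in p..q, (1 - x*t)^(α-1) = (1 - x*p)^α - (1 - x*q)^α := by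
  have hcont : ContinuousOn (fun t => (1 - x*t)^(α-1)) (Set.Icc p q) :=
    (continuousOn_const.sub (continuousOn_const.mul continuousOn_id)).rpow_const
      (fun t ht => Or.inl (hpos t ht).ne')
  have hderiv : ∀ t ∈ Set.uIcc p q,
      HasDerivAt (fun t => -(1 - x*t)^α) (α * x * (1 - x*t)^(α-1)) t := by
    intro t ht
    rw [Set.uIcc_of_le hpq.le] at ht
    have h1 : HasDerivAt (fun t : ℝ => 1 - x*t) (-x) t := by
      simpa using ((hasDerivAt_id t).const_mul x).const_sub 1
    have h2 := (h1.rpow_const (p := α) (Or.inl (hpos t ht).ne')).neg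
    rw [show -(-x * α * (1 - x * t) ^ (α - 1)) = α * x * (1 - x*t)^(α-1) by ring] at h2
    exact h2
  have hint : IntervalIntegrable (fun t => α * x * (1 - x*t)^(α-1)) volume p q := by
    apply ContinuousOn.intervalIntegrable
    rw [Set.uIcc_of_le hpq.le]
    exact continuousOn_const.mul hcont
  rw [← intervalIntegral.integral_const_mul,
    intervalIntegral.integral_eq_sub_of_hasDerivAt hderiv hint]
  ring

set_option maxHeartbeats 2000000 in
/-- for `α ∈ (0,1)` and `0 < a < b < c`, the function
`h₁(x) = ((1-x/c)^α - (1-x/b)^α)/((1-x/b)^α - (1-x/a)^α)` is well defined on `(0,a)`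
(numerator and denominator are positive there) and strictly decreasing on `(0,a)`. -/
theorem stmt15 (α a b c : ℝ) (hα : α ∈ Set.Ioo (0 : ℝ) 1)
    (ha : 0 < a) (hab : a < b) (hbc : b < c) :
    (∀ x : ℝ, 0 < x → x < a →
      0 < (1 - x / c) ^ α - (1 - x / b) ^ α ∧ 0 < (1 - x / b) ^ α - (1 - x / a) ^ α) ∧
    (∀ x₁ x₂ : ℝ, 0 < x₁ → x₁ < x₂ → x₂ < a →
      ((1 - x₂ / c) ^ α - (1 - x₂ / b) ^ α) / ((1 - x₂ / b) ^ α - (1 - x₂ / a) ^ α) <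
        ((1 - x₁ / c) ^ α - (1 - x₁ / b) ^ α) / ((1 - x₁ / b) ^ α - (1 - x₁ / a) ^ α)) := by
  obtain ⟨hα0, hα1⟩ := hα
  have hb : 0 < b := ha.trans hab
  have hc : 0 < c := hb.trans hbc
  have hpos1 : ∀ x : ℝ, 0 < x → x < a →
      0 < (1 - x / c) ^ α - (1 - x / b) ^ α ∧ 0 < (1 - x / b) ^ α - (1 - x / a) ^ α := by
    intro x hx hxa
    have h1 : 0 < 1 - x / a := by
      rw [sub_pos, div_lt_one ha]; exact hxa
    have h2 : 1 - x / a < 1 - x / b := by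
      have := div_lt_div_of_pos_left hx ha hab
      linarith
    have h3 : 1 - x / b < 1 - x / c := by
      have := div_lt_div_of_pos_left hx hb hbc
      linarith
    constructor
    · have := Real.rpow_lt_rpow (by linarith) h3 hα0
      linarith
    · have := Real.rpow_lt_rpow (by linarith) h2 hα0
      linarith
  refine ⟨hpos1, ?_⟩
  intro x₁ x₂ hx1 hx12 hx2a
  have hx1a : x₁ < a := hx12.trans hx2a
  have hx2 : 0 < x₂ := hx1.trans hx12
  -- endpoints
  set tc := 1/c with htc
  set tb := 1/b with htb
  set ta := 1/a with hta
  have htcb : tc < tb := by apply one_div_lt_one_div_of_lt hb hbc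
  have htba : tb < ta := by apply one_div_lt_one_div_of_lt ha hab
  have htc0 : 0 < tc := by positivity
  -- base positivity on [tc, ta]
  have hbase : ∀ x : ℝ, 0 < x → x < a → ∀ t ∈ Set.Icc tc ta, 0 < 1 - x*t := by
    intro x hx hxa t ht
    have : x * t ≤ x * ta := mul_le_mul_of_nonneg_left ht.2 hx.le
    have : x * ta < 1 := by
      rw [hta, mul_one_div, div_lt_one ha]; exact hxa
    nlinarith [ht.2, hx.le]
  have hbase1 := hbase x₁ hx1 hx1a
  have hbase2 := hbase x₂ hx2 hx2a
  set g₁ : ℝ → ℝ := fun t => (1 - x₁*t)^(α-1) with hg1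
  set g₂ : ℝ → ℝ := fun t => (1 - x₂*t)^(α-1) with hg2
  have hcont1 : ContinuousOn g₁ (Set.Icc tc ta) :=
    (continuousOn_const.sub (continuousOn_const.mul continuousOn_id)).rpow_const
      (fun t ht => Or.inl (hbase1 t ht).ne')
  have hcont2 : ContinuousOn g₂ (Set.Icc tc ta) :=
    (continuousOn_const.sub (continuousOn_const.mul continuousOn_id)).rpow_const
      (fun t ht => Or.inl (hbase2 t ht).ne')
  have hIccI : Set.Icc tc tb ⊆ Set.Icc tc ta := Set.Icc_subset_Icc le_rfl htba.le
  have hIccJ : Set.Icc tb ta ⊆ Set.Icc tc ta := Set.Icc_subset_Icc htcb.le le_rfl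
  set B₁ : ℝ := (1 - x₁*tb)^(α-1) with hB1
  set B₂ : ℝ := (1 - x₂*tb)^(α-1) with hB2
  have htbmem : tb ∈ Set.Icc tc ta := ⟨htcb.le, htba.le⟩
  have hB1pos : 0 < B₁ := Real.rpow_pos_of_pos (hbase1 tb htbmem) _
  have hB2pos : 0 < B₂ := Real.rpow_pos_of_pos (hbase2 tb htbmem) _
  set P₁ : ℝ := ∫ t in tc..tb, g₁ t with hP1
  set P₂ : ℝ := ∫ t in tc..tb, g₂ t with hP2
  set Q₁ : ℝ := ∫ t in tb..ta, g₁ t with hQ1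
  set Q₂ : ℝ := ∫ t in tb..ta, g₂ t with hQ2
  -- positivity of integrals
  have hintP1 : IntervalIntegrable g₁ volume tc tb := by
    apply ContinuousOn.intervalIntegrable
    rw [Set.uIcc_of_le htcb.le]; exact hcont1.mono hIccI
  have hintP2 : IntervalIntegrable g₂ volume tc tb := by
    apply ContinuousOn.intervalIntegrable
    rw [Set.uIcc_of_le htcb.le]; exact hcont2.mono hIccI
  have hintQ1 : IntervalIntegrable g₁ volume tb ta := by
    apply ContinuousOn.intervalIntegrable
    rw [Set.uIcc_of_le htba.le]; exact hcont1.mono hIccJ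
  have hintQ2 : IntervalIntegrable g₂ volume tb ta := by
    apply ContinuousOn.intervalIntegrable
    rw [Set.uIcc_of_le htba.le]; exact hcont2.mono hIccJ
  have hP1pos : 0 < P₁ :=
    intervalIntegral_pos_of_pos_on hintP1
      (fun t ht => Real.rpow_pos_of_pos (hbase1 t (hIccI ⟨ht.1.le, ht.2.le⟩)) _) htcb
  have hP2pos : 0 < P₂ :=
    intervalIntegral_pos_of_pos_on hintP2
      (fun t ht => Real.rpow_pos_of_pos (hbase2 t (hIccI ⟨ht.1.le, ht.2.le⟩)) _) htcb
  have hQ1pos : 0 < Q₁ :=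
    intervalIntegral_pos_of_pos_on hintQ1
      (fun t ht => Real.rpow_pos_of_pos (hbase1 t (hIccJ ⟨ht.1.le, ht.2.le⟩)) _) htba
  have hQ2pos : 0 < Q₂ :=
    intervalIntegral_pos_of_pos_on hintQ2
      (fun t ht => Real.rpow_pos_of_pos (hbase2 t (hIccJ ⟨ht.1.le, ht.2.le⟩)) _) htba
  -- strict inequality on I
  have hPB : P₂ * B₁ < P₁ * B₂ := by
    rw [hP1, hP2, ← intervalIntegral.integral_mul_const, ← intervalIntegral.integral_mul_const]
    apply intervalIntegral.integral_lt_integral_of_continuousOn_of_le_of_exists_lt htcb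
      ((hcont2.mono hIccI).mul continuousOn_const)
      ((hcont1.mono hIccI).mul continuousOn_const)
    · intro t ht
      have htm : t ∈ Set.Icc tc ta := hIccI ⟨ht.1.le, ht.2⟩
      exact ptwise_le hα1 hx12 (hbase2 t htm) (hbase1 t htm) (hbase2 tb htbmem)
        (hbase1 tb htbmem) ht.2
    · refine ⟨tc, ⟨le_rfl, htcb.le⟩, ?_⟩
      have htm : tc ∈ Set.Icc tc ta := ⟨le_rfl, (htcb.trans htba).le⟩
      exact ptwise_lt hα1 hx12 (hbase2 tc htm) (hbase1 tc htm) (hbase2 tb htbmem)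
        (hbase1 tb htbmem) htcb
  -- weak inequality on J
  have hQB : B₂ * Q₁ ≤ B₁ * Q₂ := by
    rw [hQ1, hQ2, ← intervalIntegral.integral_const_mul, ← intervalIntegral.integral_const_mul]
    apply intervalIntegral.integral_mono_on htba.le
      (intervalIntegrable_const.mul_continuousOn
        (by rw [Set.uIcc_of_le htba.le]; exact hcont1.mono hIccJ))
      (intervalIntegrable_const.mul_continuousOn
        (by rw [Set.uIcc_of_le htba.le]; exact hcont2.mono hIccJ))
    intro t ht
    have htm : t ∈ Set.Icc tc ta := hIccJ ht
    exact ptwise_le hα1 hx12 (hbase2 tb htbmem) (hbase1 tb htbmem) (hbase2 t htm)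
      (hbase1 t htm) ht.1
  -- FTC identities
  have hIpos1 : ∀ t ∈ Set.Icc tc tb, 0 < 1 - x₁*t := fun t ht => hbase1 t (hIccI ht)
  have hIpos2 : ∀ t ∈ Set.Icc tc tb, 0 < 1 - x₂*t := fun t ht => hbase2 t (hIccI ht)
  have hJpos1 : ∀ t ∈ Set.Icc tb ta, 0 < 1 - x₁*t := fun t ht => hbase1 t (hIccJ ht)
  have hJpos2 : ∀ t ∈ Set.Icc tb ta, 0 < 1 - x₂*t := fun t ht => hbase2 t (hIccJ ht)
  have hN1 : α * x₁ * P₁ = (1 - x₁/c)^α - (1 - x₁/b)^α := by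
    have := ftc15 (α := α) (x := x₁) htcb hIpos1
    rwa [htc, htb, mul_one_div, mul_one_div] at this
  have hN2 : α * x₂ * P₂ = (1 - x₂/c)^α - (1 - x₂/b)^α := by
    have := ftc15 (α := α) (x := x₂) htcb hIpos2
    rwa [htc, htb, mul_one_div, mul_one_div] at this
  have hD1 : α * x₁ * Q₁ = (1 - x₁/b)^α - (1 - x₁/a)^α := by
    have := ftc15 (α := α) (x := x₁) htba hJpos1
    rwa [hta, htb, mul_one_div, mul_one_div] at this
  have hD2 : α * x₂ * Q₂ = (1 - x₂/b)^α - (1 - x₂/a)^α := by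
    have := ftc15 (α := α) (x := x₂) htba hJpos2
    rwa [hta, htb, mul_one_div, mul_one_div] at this
  obtain ⟨_, hDen1⟩ := hpos1 x₁ hx1 hx1a
  obtain ⟨_, hDen2⟩ := hpos1 x₂ hx2 hx2a
  rw [div_lt_div_iff₀ hDen2 hDen1, ← hN1, ← hN2, ← hD1, ← hD2]
  have key : P₂ * Q₁ < P₁ * Q₂ := by
    have h1 : P₂*B₁*(B₂*Q₁) < P₁*B₂*(B₂*Q₁) :=
      mul_lt_mul_of_pos_right hPB (by positivity)
    have h2 : P₁*B₂*(B₂*Q₁) ≤ P₁*B₂*(B₁*Q₂) :=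
      mul_le_mul_of_nonneg_left hQB (by positivity)
    have h3 : P₂*Q₁*(B₁*B₂) < P₁*Q₂*(B₁*B₂) := by nlinarith
    exact lt_of_mul_lt_mul_right h3 (by positivity)
  nlinarith [mul_lt_mul_of_pos_left key (show (0:ℝ) < α*α*x₁*x₂ by positivity)]
end

section
/- Let α ∈ (0,1), T > 0, let 𝒫 be a partition of [0,T] with N subintervals, and let K ∈ ℝ^{N×N} have entries K_{ni} = (1/Γ(α+1))((t_n − t_{i−1})^α − (t_n − t_i)^α) for 1 ≤ i ≤ n ≤ N and K_{ni} = 0 for i > n. Let 𝓗 be a real inner product space, Φ : 𝓗 → ℝ, U_0 ∈ 𝓗, and F_1, …, F_N ∈ 𝓗. Suppose U_1, …, U_N ∈ 𝓗 and V_1, …, V_N ∈ 𝓗 satisfy: (a) U_n = U_0 + Σ_{i=1}^n K_{ni} V_i for every n ∈ {1,…,N}; and (b) the subgradient inequality Φ(U_n) + ⟨F_n − V_n, w − U_n⟩ ≤ Φ(w) for every n ∈ {1,…,N} and every w ∈ 𝓗. Then for every n ∈ {1,…,N}, Φ(U_n) ≤ Φ(U_0) + (1/4) Σ_{i=1}^n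 K_{ni} ‖F_i‖². -/
open scoped RealInnerProductSpace

open MeasureTheory intervalIntegral

lemma Qmono {α : ℝ} (hα0 : 0 < α) (hα1 : α < 1) {a b s1 s2 : ℝ}
    (hab : a ≤ b) (h12 : s1 ≤ s2) (h2a : s2 < a) :
    (a - s2) ^ (1-α) * (b - s2) ^ (α-1) ≤ (a - s1) ^ (1-α) * (b - s1) ^ (α-1) := by
  have hx2 : (0:ℝ) < a - s2 := by linarith
  have hx1 : (0:ℝ) < a - s1 := by linarith
  have hy2 : (0:ℝ) < b - s2 := by linarith
  have hy1 : (0:ℝ) < b - s1 := by linarith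
  have key : ((b - s2)/(a - s2)) ^ (α-1) ≤ ((b - s1)/(a - s1)) ^ (α-1) := by
    apply Real.rpow_le_rpow_of_nonpos (by positivity) ?_ (by linarith)
    rw [div_le_div_iff₀ hx1 hx2]
    nlinarith
  have e : ∀ x y : ℝ, 0 < x → 0 < y → (y/x) ^ (α-1) = x ^ (1-α) * y ^ (α-1) := by
    intro x y hx hy
    rw [Real.div_rpow hy.le hx.le]
    rw [show (1-α) = -(α-1) by ring, Real.rpow_neg hx.le]
    field_simp
  rw [e _ _ hx1 hy1, e _ _ hx2 hy2] at key
  exact key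

lemma Qnonneg {α : ℝ} {a b s : ℝ} (h1 : s ≤ a) (h2 : s ≤ b) :
    0 ≤ (a - s) ^ (1-α) * (b - s) ^ (α-1) := by
  have : (0:ℝ) ≤ a - s := by linarith
  have : (0:ℝ) ≤ b - s := by linarith
  positivity

-- concavity difference lemma : x ↦ x^α - (x-c)^α is antitone
lemma concave_diff {α : ℝ} (hα0 : 0 < α) (hα1 : α < 1) {x y c : ℝ}
    (hc : 0 ≤ c) (hcx : c ≤ x) (hxy : x ≤ y) :
    y ^ α - (y - c) ^ α ≤ x ^ α - (x - c) ^ α := by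
  rcases eq_or_lt_of_le (show x - c ≤ y by linarith) with h | h
  · have hc0 : c = 0 := by linarith
    have hxy' : x = y := by linarith
    simp [hxy', hc0]
  · set A := x - c with hA
    set D := y with hD
    have hA0 : 0 ≤ A := by simp [hA]; linarith
    have hAD : A < D := h
    have hDA : D - A ≠ 0 := by intro hh; simp [sub_eq_zero] at hh; rw [hh] at hAD; linarith
    set l := (D - x)/(D - A) with hl
    have hl0 : 0 ≤ l := by apply div_nonneg <;> [skip; skip] <;> simp [hD, hA] <;> linarith
    have hl1 : 1 - l = (x - A)/(D - A) := by
      rw [hl, eq_div_iff hDA, sub_mul, div_mul_cancel₀ _ hDA]; ring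
    have hl1' : 0 ≤ 1 - l := by rw [hl1]; apply div_nonneg <;> simp [hD, hA] <;> linarith
    have hconc := Real.concaveOn_rpow hα0.le hα1.le
    have hD0 : (0:ℝ) ≤ D := by simp [hD]; linarith
    have hx' : l * A + (1 - l) * D = x := by
      rw [hl1, hl, div_mul_eq_mul_div, div_mul_eq_mul_div, ← add_div,
        div_eq_iff hDA]; ring
    have hyc : (1 - l) * A + l * D = y - c := by
      rw [hl1, hl, div_mul_eq_mul_div, div_mul_eq_mul_div, ← add_div,
        div_eq_iff hDA]; simp [hD, hA]; ring
    have h1 := hconc.2 (Set.mem_Ici.mpr hA0) (Set.mem_Ici.mpr hD0) hl0 hl1' (by ring)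
    have h2 := hconc.2 (Set.mem_Ici.mpr hA0) (Set.mem_Ici.mpr hD0) hl1' hl0 (by ring)
    rw [smul_eq_mul, smul_eq_mul, smul_eq_mul, smul_eq_mul] at h1 h2
    rw [hx'] at h1
    rw [hyc] at h2
    simp only at h1 h2
    have hyc' : (y - c) = D - c := by rw [hD]
    rw [hyc'] at h2
    have hadd := add_le_add h1 h2
    nlinarith [hadd]

-- integral formula
lemma intF {α : ℝ} (hα0 : 0 < α) (a b t' : ℝ) :
    ∫ s in a..b, (t' - s) ^ (α-1) = ((t' - a) ^ α - (t' - b) ^ α) / α := by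
  rw [intervalIntegral.integral_comp_sub_left (fun x => x ^ (α-1)) t']
  rw [integral_rpow (Or.inl (by linarith))]
  have h : α - 1 + 1 = α := by ring
  rw [h]

lemma intInt {α : ℝ} (hα0 : 0 < α) (a b t' : ℝ) :
    IntervalIntegrable (fun s => (t' - s) ^ (α-1)) volume a b := by
  simpa using (intervalIntegrable_rpow' (a := t' - a) (b := t' - b)
    (by linarith : (-1:ℝ) < α - 1)).comp_sub_left t'

-- a.e. helper
lemma ae_Icc_ne (a b : ℝ) (f g : ℝ → ℝ) (h : ∀ x, a ≤ x → x < b → f x ≤ g x) :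
    f ≤ᵐ[volume.restrict (Set.Icc a b)] g := by
  have h1 : ∀ᵐ (x : ℝ), x ≠ b := by
    refine MeasureTheory.ae_iff.mpr ?_
    simpa using Real.volume_singleton
  filter_upwards [MeasureTheory.ae_restrict_mem measurableSet_Icc,
    MeasureTheory.ae_restrict_of_ae h1] with x hx hne
  exact h x hx.1 (lt_of_le_of_ne hx.2 hne)

noncomputable def kkf (α : ℝ) (t : ℕ → ℝ) (m j : ℕ) : ℝ :=
  (t m - t (j-1)) ^ α - (t m - t j) ^ α

noncomputable def theta (α : ℝ) (t : ℕ → ℝ) (n i : ℕ) : ℝ :=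
  (kkf α t n i - ∑ m ∈ (Finset.Ioo i n).attach, theta α t n m.1 * kkf α t m.1 i) / kkf α t i i
termination_by n - i
decreasing_by
  · have := (Finset.mem_Ioo.mp m.2); omega

lemma theta_eq (α : ℝ) (t : ℕ → ℝ) (n i : ℕ) (h : kkf α t i i ≠ 0) :
    kkf α t i i * theta α t n i
      = kkf α t n i - ∑ m ∈ Finset.Ioo i n, theta α t n m * kkf α t m i := by
  rw [theta, ← Finset.sum_attach (Finset.Ioo i n) (fun m => theta α t n m * kkf α t m i)]
  field_simp

noncomputable def Hf (α : ℝ) (t : ℕ → ℝ) (n i : ℕ) (s : ℝ) : ℝ :=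
  (t n - s) ^ (α-1) - ∑ m ∈ Finset.Ioo i n, theta α t n m * (t m - s) ^ (α-1)

noncomputable def Rf (α : ℝ) (t : ℕ → ℝ) (n i : ℕ) (s : ℝ) : ℝ :=
  (t i - s) ^ (1-α) * Hf α t n i s

lemma sum_int {α : ℝ} (hα0 : 0 < α) (t : ℕ → ℝ) (n i : ℕ) (a b : ℝ) :
    IntervalIntegrable
      (fun s => ∑ m ∈ Finset.Ioo i n, theta α t n m * (t m - s) ^ (α-1)) volume a b := by
  have h0 := IntervalIntegrable.sum (μ := volume) (a := a) (b := b) (Finset.Ioo i n)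
    (f := fun m => fun s => theta α t n m * (t m - s) ^ (α-1))
    (fun m _ => (intInt hα0 a b (t m)).const_mul _)
  convert h0 using 1
  · rfl
  funext s
  simp

lemma Hf_int {α : ℝ} (hα0 : 0 < α) (t : ℕ → ℝ) (n i : ℕ) (a b : ℝ) :
    IntervalIntegrable (Hf α t n i) volume a b :=
  (intInt hα0 a b (t n)).sub (sum_int hα0 t n i a b)

lemma intH {α : ℝ} (hα0 : 0 < α) (t : ℕ → ℝ) (n i : ℕ) (a b : ℝ) :
    ∫ s in a..b, Hf α t n i s
      = (((t n - a) ^ α - (t n - b) ^ α)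
        - ∑ m ∈ Finset.Ioo i n, theta α t n m * ((t m - a) ^ α - (t m - b) ^ α)) / α := by
  unfold Hf
  rw [intervalIntegral.integral_sub (intInt hα0 a b (t n)) (sum_int hα0 t n i a b)]
  rw [intervalIntegral.integral_finset_sum (fun m _ => (intInt hα0 a b (t m)).const_mul _)]
  rw [intF hα0]
  have : ∀ m ∈ Finset.Ioo i n, (∫ s in a..b, theta α t n m * (t m - s) ^ (α-1))
      = theta α t n m * (((t m - a) ^ α - (t m - b) ^ α) / α) := by
    intro m _
    rw [intervalIntegral.integral_const_mul, intF hα0]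
  rw [Finset.sum_congr rfl this]
  conv_rhs => rw [sub_div, sub_div, Finset.sum_div]
  congr 1
  · ring
  · apply Finset.sum_congr rfl
    intro m _
    ring

lemma Hf_eq_R {α : ℝ} {t : ℕ → ℝ} {n i : ℕ} {s : ℝ} (h : s < t i) :
    Hf α t n i s = (t i - s) ^ (α-1) * Rf α t n i s := by
  unfold Rf
  rw [← mul_assoc, ← Real.rpow_add (by linarith : (0:ℝ) < t i - s)]
  norm_num

section Grid
variable {α : ℝ} {t : ℕ → ℝ} {N : ℕ}

lemma tlt (hm : ∀ n < N, t n < t (n+1)) :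
    ∀ j, j ≤ N → ∀ i, i < j → t i < t j := by
  intro j
  induction j with
  | zero => intro _ i h; omega
  | succ k ih =>
    intro hk i hij
    have hk' : k < N := by omega
    rcases Nat.lt_or_ge i k with h | h
    · exact (ih (by omega) i h).trans (hm k hk')
    · have : i = k := by omega
      subst this
      exact hm i hk'

lemma tle (hm : ∀ n < N, t n < t (n+1)) {i j : ℕ} (hij : i ≤ j) (hjN : j ≤ N) :
    t i ≤ t j := by
  rcases eq_or_lt_of_le hij with h | h
  · subst h; rfl
  · exact (tlt hm j hjN i h).le

lemma tnn (ht0 : t 0 = 0) (hm : ∀ n < N, t n < t (n+1)) {i : ℕ} (hiN : i ≤ N) :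
    0 ≤ t i := by
  rw [← ht0]; exact tle hm (Nat.zero_le i) hiN

end Grid

section KK
variable {α : ℝ} {t : ℕ → ℝ} {N : ℕ}

lemma kk_pos (hα0 : 0 < α) (hm : ∀ n < N, t n < t (n+1)) {j m : ℕ}
    (h1 : 1 ≤ j) (h2 : j ≤ m) (h3 : m ≤ N) : 0 < kkf α t m j := by
  have hjj : t (j-1) < t j := tlt hm j (by omega) (j-1) (by omega)
  have hjm : t j ≤ t m := tle hm h2 h3
  have hx : (0:ℝ) ≤ t m - t j := by linarith
  have hxy : t m - t j < t m - t (j-1) := by linarith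
  have := Real.rpow_lt_rpow hx hxy hα0
  unfold kkf; linarith

lemma kk_col1_mono (hα0 : 0 < α) (hα1 : α < 1) (ht0 : t 0 = 0)
    (hm : ∀ n < N, t n < t (n+1)) {m n : ℕ}
    (h1 : 1 ≤ m) (h2 : m ≤ n) (h3 : n ≤ N) : kkf α t n 1 ≤ kkf α t m 1 := by
  have e : ∀ k : ℕ, kkf α t k 1 = (t k) ^ α - (t k - t 1) ^ α := by
    intro k; unfold kkf; norm_num [ht0]
  rw [e m, e n]
  have h1N : 1 ≤ N := by omega
  exact concave_diff hα0 hα1 (tnn ht0 hm h1N) (tle hm h1 (by omega)) (tle hm h2 h3)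

/-- The key facts about `theta` given the invariant at level `i`. -/
lemma theta_facts (hα0 : 0 < α) (hα1 : α < 1) (ht0 : t 0 = 0)
    (hm : ∀ n < N, t n < t (n+1)) {n i : ℕ}
    (h1i : 1 ≤ i) (hin : i < n) (hnN : n ≤ N)
    (hInv : ∀ s1 s2 : ℝ, 0 ≤ s1 → s1 ≤ s2 → s2 < t i →
      0 ≤ Rf α t n i s2 ∧ Rf α t n i s2 ≤ Rf α t n i s1) :
    0 ≤ theta α t n i ∧ ∀ s : ℝ, 0 ≤ s → s ≤ t (i-1) → theta α t n i ≤ Rf α t n i s := by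
  have hiN : i ≤ N := by omega
  have hab : t (i-1) ≤ t i := tle hm (by omega) hiN
  have h0a : 0 ≤ t (i-1) := tnn ht0 hm (by omega)
  have kkii : 0 < kkf α t i i := kk_pos hα0 hm h1i le_rfl hiN
  have hDint : ∫ s in (t (i-1))..(t i), Hf α t n i s = (kkf α t i i * theta α t n i)/α := by
    have e := theta_eq α t n i (ne_of_gt kkii)
    simp only [kkf] at e ⊢
    rw [intH hα0, ← e]
  have hRnn : ∀ x : ℝ, t (i-1) ≤ x → x < t i → 0 ≤ Hf α t n i x := by
    intro x hx1 hx2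
    rw [Hf_eq_R hx2]
    have h1 := (hInv x x (by linarith) le_rfl hx2).1
    have h2 : (0:ℝ) ≤ (t i - x) ^ (α-1) := Real.rpow_nonneg (by linarith) _
    positivity
  have hth : 0 ≤ theta α t n i := by
    have h0 : (0:ℝ) ≤ ∫ s in (t (i-1))..(t i), Hf α t n i s := by
      have := intervalIntegral.integral_mono_ae_restrict (f := fun _ => (0:ℝ))
        (g := Hf α t n i) hab intervalIntegrable_const (Hf_int hα0 t n i _ _)
        (ae_Icc_ne _ _ _ _ (fun x hx1 hx2 => hRnn x hx1 hx2))
      simpa using this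
    rw [hDint, le_div_iff₀ hα0] at h0
    nlinarith [kkii]
  refine ⟨hth, ?_⟩
  intro s0 hs00 hs0
  have hcomp : (kkf α t i i * theta α t n i)/α
      ≤ (Rf α t n i s0 * kkf α t i i) / α := by
    have hI2 : ∫ u in (t (i-1))..(t i), Rf α t n i s0 * (t i - u) ^ (α-1)
        = (Rf α t n i s0 * kkf α t i i) / α := by
      rw [intervalIntegral.integral_const_mul, intF hα0]
      rw [mul_div_assoc]
      congr 1
    rw [← hDint, ← hI2]
    apply intervalIntegral.integral_mono_ae_restrict hab (Hf_int hα0 t n i _ _)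
      ((intInt hα0 _ _ (t i)).const_mul _)
    apply ae_Icc_ne
    intro x hx1 hx2
    rw [Hf_eq_R hx2, mul_comm (Rf α t n i s0)]
    apply mul_le_mul_of_nonneg_left _ (Real.rpow_nonneg (by linarith) _)
    exact (hInv s0 x hs00 (by linarith) hx2).2
  rw [div_le_div_iff_of_pos_right hα0] at hcomp
  nlinarith [hcomp, kkii]

end KK

section Inv
variable {α : ℝ} {t : ℕ → ℝ} {N : ℕ}

lemma inv_main (hα0 : 0 < α) (hα1 : α < 1) (ht0 : t 0 = 0)
    (hm : ∀ n < N, t n < t (n+1)) {n : ℕ} (hnN : n ≤ N) :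
    ∀ d i, 1 ≤ i → i < n → n - i ≤ d →
      ∀ s1 s2 : ℝ, 0 ≤ s1 → s1 ≤ s2 → s2 < t i →
        0 ≤ Rf α t n i s2 ∧ Rf α t n i s2 ≤ Rf α t n i s1 := by
  intro d
  induction d with
  | zero => intro i h1 h2 h3; omega
  | succ d ih =>
    intro i h1i hin hd s1 s2 hs1 hs12 hs2
    by_cases hbase : i = n - 1
    · -- base case : Ioo (n-1) n = ∅
      subst hbase
      have hIoo : Finset.Ioo (n-1) n = ∅ := by
        apply Finset.eq_empty_of_forall_notMem
        intro m hmm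
        rw [Finset.mem_Ioo] at hmm
        omega
      have hR : ∀ s : ℝ, Rf α t n (n-1) s = (t (n-1) - s) ^ (1-α) * (t n - s) ^ (α-1) := by
        intro s
        unfold Rf Hf
        rw [hIoo]
        simp
      have hten : t (n-1) ≤ t n := tle hm (by omega) hnN
      constructor
      · rw [hR]; exact Qnonneg (by linarith) (by linarith)
      · rw [hR, hR]; exact Qmono hα0 hα1 hten hs12 hs2
    · -- inductive step
      have hin' : i + 1 < n := by omega
      have hIH : ∀ s1 s2 : ℝ, 0 ≤ s1 → s1 ≤ s2 → s2 < t (i+1) →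
          0 ≤ Rf α t n (i+1) s2 ∧ Rf α t n (i+1) s2 ≤ Rf α t n (i+1) s1 :=
        ih (i+1) (by omega) hin' (by omega)
      obtain ⟨hth0, hthle⟩ := theta_facts hα0 hα1 ht0 hm (by omega : 1 ≤ i+1) hin' hnN hIH
      have hsimp : (i + 1 - 1) = i := by omega
      rw [hsimp] at hthle
      have htiN : t i ≤ t (i+1) := tle hm (by omega) (by omega)
      -- split formula : Hf i = Hf (i+1) - θ_{i+1} * k(t_{i+1} - ·)
      have hsplit : ∀ s : ℝ, Hf α t n i s
          = Hf α t n (i+1) s - theta α t n (i+1) * (t (i+1) - s) ^ (α-1) := by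
        intro s
        unfold Hf
        have hins : Finset.Ioo i n = insert (i+1) (Finset.Ioo (i+1) n) := by
          ext m
          simp only [Finset.mem_Ioo, Finset.mem_insert]
          omega
        rw [hins, Finset.sum_insert (by simp)]
        ring
      have hRfact : ∀ s : ℝ, s < t i → Rf α t n i s
          = ((t i - s) ^ (1-α) * (t (i+1) - s) ^ (α-1))
            * (Rf α t n (i+1) s - theta α t n (i+1)) := by
        intro s hs
        conv_lhs => rw [Rf]
        rw [hsplit s, Hf_eq_R (show s < t (i+1) by linarith)]
        ring
      have hg2 : 0 ≤ Rf α t n (i+1) s2 - theta α t n (i+1) := by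
        have := hthle s2 (by linarith) (by linarith)
        linarith
      have hg12 : Rf α t n (i+1) s2 - theta α t n (i+1)
          ≤ Rf α t n (i+1) s1 - theta α t n (i+1) := by
        have := (hIH s1 s2 hs1 hs12 (by linarith)).2
        linarith
      have hQ2 : 0 ≤ (t i - s2) ^ (1-α) * (t (i+1) - s2) ^ (α-1) :=
        Qnonneg (by linarith) (by linarith)
      have hQ12 : (t i - s2) ^ (1-α) * (t (i+1) - s2) ^ (α-1)
          ≤ (t i - s1) ^ (1-α) * (t (i+1) - s1) ^ (α-1) :=
        Qmono hα0 hα1 htiN hs12 hs2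
      have hQ1 : 0 ≤ (t i - s1) ^ (1-α) * (t (i+1) - s1) ^ (α-1) :=
        Qnonneg (by linarith) (by linarith)
      rw [hRfact s1 (by linarith), hRfact s2 (by linarith)]
      constructor
      · exact mul_nonneg hQ2 hg2
      · exact mul_le_mul hQ12 hg12 hg2 hQ1

lemma theta_props (hα0 : 0 < α) (hα1 : α < 1) (ht0 : t 0 = 0)
    (hm : ∀ n < N, t n < t (n+1)) {n : ℕ} (hn1 : 1 ≤ n) (hnN : n ≤ N) :
    (∀ m ∈ Finset.Icc 1 (n-1), 0 ≤ theta α t n m) ∧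
    (∀ i ∈ Finset.Icc 1 (n-1),
      ∑ m ∈ Finset.Icc i (n-1), theta α t n m * kkf α t m i = kkf α t n i) ∧
    ((∑ m ∈ Finset.Icc 1 (n-1), theta α t n m) ≤ 1) := by
  have hInvAll : ∀ i, 1 ≤ i → i < n →
      ∀ s1 s2 : ℝ, 0 ≤ s1 → s1 ≤ s2 → s2 < t i →
        0 ≤ Rf α t n i s2 ∧ Rf α t n i s2 ≤ Rf α t n i s1 :=
    fun i h1 h2 => inv_main hα0 hα1 ht0 hm hnN n i h1 h2 (by omega)
  have hth0 : ∀ m ∈ Finset.Icc 1 (n-1), 0 ≤ theta α t n m := by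
    intro m hmm
    rw [Finset.mem_Icc] at hmm
    exact (theta_facts hα0 hα1 ht0 hm hmm.1 (by omega) hnN
      (hInvAll m hmm.1 (by omega))).1
  have heq : ∀ i ∈ Finset.Icc 1 (n-1),
      ∑ m ∈ Finset.Icc i (n-1), theta α t n m * kkf α t m i = kkf α t n i := by
    intro i hii
    rw [Finset.mem_Icc] at hii
    have hins : Finset.Icc i (n-1) = insert i (Finset.Ioo i n) := by
      ext m
      simp only [Finset.mem_Icc, Finset.mem_Ioo, Finset.mem_insert]
      omega
    rw [hins, Finset.sum_insert (by simp)]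
    have kkii : 0 < kkf α t i i := kk_pos hα0 hm hii.1 le_rfl (by omega)
    have := theta_eq α t n i (ne_of_gt kkii)
    linarith [this]
  refine ⟨hth0, heq, ?_⟩
  by_cases hn2 : n = 1
  · subst hn2; simp
  · have h1n : (1:ℕ) ∈ Finset.Icc 1 (n-1) := by
      rw [Finset.mem_Icc]; omega
    have heq1 := heq 1 h1n
    have kkn1 : 0 < kkf α t n 1 := kk_pos hα0 hm le_rfl hn1 hnN
    have hb : ∀ m ∈ Finset.Icc 1 (n-1), theta α t n m * kkf α t n 1
        ≤ theta α t n m * kkf α t m 1 := by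
      intro m hmm
      have hmm2 := Finset.mem_Icc.mp hmm
      exact mul_le_mul_of_nonneg_left
        (kk_col1_mono hα0 hα1 ht0 hm hmm2.1 (by omega) hnN) (hth0 m hmm)
    have hsum : (∑ m ∈ Finset.Icc 1 (n-1), theta α t n m) * kkf α t n 1
        ≤ kkf α t n 1 := by
      rw [Finset.sum_mul]
      calc ∑ m ∈ Finset.Icc 1 (n-1), theta α t n m * kkf α t n 1
          ≤ ∑ m ∈ Finset.Icc 1 (n-1), theta α t n m * kkf α t m 1 :=
            Finset.sum_le_sum hb
        _ = kkf α t n 1 := heq1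
    nlinarith [hsum, kkn1]
end Inv

lemma tri_swap {M : Type*} [AddCommMonoid M] (K : ℕ) (g : ℕ → ℕ → M) :
    ∑ m ∈ Finset.Icc 1 K, ∑ i ∈ Finset.Icc 1 m, g m i
      = ∑ i ∈ Finset.Icc 1 K, ∑ m ∈ Finset.Icc i K, g m i := by
  simp_rw [← Finset.Ico_add_one_right_eq_Icc]
  exact (Finset.sum_Ico_Ico_comm 1 (K+1) (fun i j => g j i)).symm

/-- discrete energy bound for the fractional minimizing movements scheme:
if `U_n = U_0 + Σ_{i=1}^n K_{ni} V_i` (so `V` is the discrete Caputo derivative of `U`)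
and `F_n - V_n ∈ ∂Φ(U_n)` for all `n`, then
`Φ(U_n) ≤ Φ(U_0) + (1/4) Σ_{i=1}^n K_{ni} ‖F_i‖²`. -/
theorem stmt17 (α T : ℝ) (hα : α ∈ Set.Ioo (0 : ℝ) 1) (hT : 0 < T)
    (N : ℕ) (hN : 1 ≤ N) (tP : ℕ → ℝ) (htP0 : tP 0 = 0) (htPN : tP N = T)
    (hmono : ∀ n < N, tP n < tP (n + 1))
    (Kf : ℕ → ℕ → ℝ)
    (hKf : ∀ n i, 1 ≤ i → i ≤ n → n ≤ N →
      Kf n i = (Real.Gamma (α + 1))⁻¹ * ((tP n - tP (i - 1)) ^ α - (tP n - tP i) ^ α))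
    {𝓗 : Type*} [NormedAddCommGroup 𝓗] [InnerProductSpace ℝ 𝓗]
    (Φ : 𝓗 → ℝ) (U V F : ℕ → 𝓗)
    (hU : ∀ n, 1 ≤ n → n ≤ N → U n = U 0 + ∑ i ∈ Finset.Icc 1 n, Kf n i • V i)
    (hsub : ∀ n, 1 ≤ n → n ≤ N → ∀ w : 𝓗, Φ (U n) + ⟪F n - V n, w - U n⟫ ≤ Φ w) :
    ∀ n, 1 ≤ n → n ≤ N →
      Φ (U n) ≤ Φ (U 0) + (1 / 4) * ∑ i ∈ Finset.Icc 1 n, Kf n i * ‖F i‖ ^ 2 := by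
  obtain ⟨hα0, hα1⟩ := hα
  have hΓ : 0 < Real.Gamma (α+1) := Real.Gamma_pos_of_pos (by linarith)
  have hc0 : 0 < (Real.Gamma (α+1))⁻¹ := by positivity
  have hKf' : ∀ m i, 1 ≤ i → i ≤ m → m ≤ N →
      Kf m i = (Real.Gamma (α+1))⁻¹ * kkf α tP m i := by
    intro m i h1 h2 h3
    rw [hKf m i h1 h2 h3]
    rfl
  have hKfpos : ∀ m i, 1 ≤ i → i ≤ m → m ≤ N → 0 < Kf m i := by
    intro m i h1 h2 h3
    rw [hKf' m i h1 h2 h3]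
    exact mul_pos hc0 (kk_pos hα0 hmono h1 h2 h3)
  have main : ∀ n, n ≤ N → 1 ≤ n →
      Φ (U n) ≤ Φ (U 0) + (1 / 4) * ∑ i ∈ Finset.Icc 1 n, Kf n i * ‖F i‖ ^ 2 := by
    intro n
    induction n using Nat.strong_induction_on with
    | _ n ih =>
    intro hnN hn1
    obtain ⟨hth0, heqk, hsum1⟩ :=
      theta_props (t := tP) (N := N) hα0 hα1 htP0 hmono hn1 hnN
    have heqK : ∀ i ∈ Finset.Icc 1 (n-1),
        ∑ m ∈ Finset.Icc i (n-1), theta α tP n m * Kf m i = Kf n i := by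
      intro i hii
      have hii2 := Finset.mem_Icc.mp hii
      have e1 : ∑ m ∈ Finset.Icc i (n-1), theta α tP n m * Kf m i
          = (Real.Gamma (α+1))⁻¹ * ∑ m ∈ Finset.Icc i (n-1), theta α tP n m * kkf α tP m i := by
        rw [Finset.mul_sum]
        apply Finset.sum_congr rfl
        intro m hmm
        have hmm2 := Finset.mem_Icc.mp hmm
        rw [hKf' m i hii2.1 hmm2.1 (by omega)]
        ring
      rw [e1, heqk i hii, ← hKf' n i hii2.1 (by omega) hnN]
    have hμ00 : 0 ≤ 1 - ∑ m ∈ Finset.Icc 1 (n-1), theta α tP n m := by linarith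
    have hμsum : (1 - ∑ m ∈ Finset.Icc 1 (n-1), theta α tP n m)
        + ∑ m ∈ Finset.Icc 1 (n-1), theta α tP n m = 1 := by ring
    set μ0 : ℝ := 1 - ∑ m ∈ Finset.Icc 1 (n-1), theta α tP n m with hμ0def
    set θ : ℕ → ℝ := theta α tP n with hθdef
    set ξ : 𝓗 := F n - V n with hξdef
    set W : 𝓗 := μ0 • U 0 + ∑ m ∈ Finset.Icc 1 (n-1), θ m • U m with hWdef
    have hsubn : ∀ w, Φ (U n) + ⟪ξ, w - U n⟫ ≤ Φ w := hsub n hn1 hnN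
    have hstep : ∀ w : 𝓗, Φ (U n) ≤ Φ w + ⟪ξ, U n - w⟫ := by
      intro w
      have h := hsubn w
      have e : ⟪ξ, w - U n⟫ = -⟪ξ, U n - w⟫ := by
        rw [← inner_neg_right]
        congr 1
        abel
      linarith [h, e.le, e.ge]
    -- the convex combination inequality
    have hcomb : Φ (U n) ≤ (μ0 * Φ (U 0) + ∑ m ∈ Finset.Icc 1 (n-1), θ m * Φ (U m))
        + ⟪ξ, U n - W⟫ := by
      have hterm : ∀ m ∈ Finset.Icc 1 (n-1),
          θ m * Φ (U n) ≤ θ m * (Φ (U m) + ⟪ξ, U n - U m⟫) :=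
        fun m hm => mul_le_mul_of_nonneg_left (hstep (U m)) (hth0 m hm)
      have h0term : μ0 * Φ (U n) ≤ μ0 * (Φ (U 0) + ⟪ξ, U n - U 0⟫) :=
        mul_le_mul_of_nonneg_left (hstep (U 0)) hμ00
      have hsumle := Finset.sum_le_sum hterm
      have hinner : μ0 * ⟪ξ, U n - U 0⟫ + ∑ m ∈ Finset.Icc 1 (n-1), θ m * ⟪ξ, U n - U m⟫
          = ⟪ξ, U n - W⟫ := by
        have e2 : U n - W = μ0 • (U n - U 0) + ∑ m ∈ Finset.Icc 1 (n-1), θ m • (U n - U m) := by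
          have e3 : μ0 • (U n - U 0) + ∑ m ∈ Finset.Icc 1 (n-1), θ m • (U n - U m)
              = (μ0 + ∑ m ∈ Finset.Icc 1 (n-1), θ m) • U n - W := by
            simp only [smul_sub, Finset.sum_sub_distrib, add_smul, Finset.sum_smul, hWdef]
            abel
          rw [e3, hμsum, one_smul]
        rw [e2, inner_add_right, inner_sum]
        simp only [real_inner_smul_right]
      have hexp : ∑ m ∈ Finset.Icc 1 (n-1), θ m * (Φ (U m) + ⟪ξ, U n - U m⟫)
          = ∑ m ∈ Finset.Icc 1 (n-1), θ m * Φ (U m)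
            + ∑ m ∈ Finset.Icc 1 (n-1), θ m * ⟪ξ, U n - U m⟫ := by
        rw [← Finset.sum_add_distrib]
        apply Finset.sum_congr rfl
        intro m _
        ring
      have hfull : Φ (U n) = μ0 * Φ (U n) + ∑ m ∈ Finset.Icc 1 (n-1), θ m * Φ (U n) := by
        rw [← Finset.sum_mul]
        linear_combination (-(Φ (U n))) * hμsum
      have h0exp : μ0 * (Φ (U 0) + ⟪ξ, U n - U 0⟫)
          = μ0 * Φ (U 0) + μ0 * ⟪ξ, U n - U 0⟫ := by ring
      linarith [hfull, h0term, hsumle, hexp, hinner, h0exp]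
    -- identify U n - W
    have hicc : Finset.Icc 1 n = insert n (Finset.Icc 1 (n-1)) := by
      ext m
      simp only [Finset.mem_Icc, Finset.mem_insert]
      omega
    have hnmem : n ∉ Finset.Icc 1 (n-1) := by
      simp only [Finset.mem_Icc]
      omega
    have hUnW : U n - W = Kf n n • V n := by
      have e1 : W = μ0 • U 0 + ∑ m ∈ Finset.Icc 1 (n-1),
          θ m • (U 0 + ∑ i ∈ Finset.Icc 1 m, Kf m i • V i) := by
        rw [hWdef]
        congr 1
        apply Finset.sum_congr rfl
        intro m hmm
        have hmm2 := Finset.mem_Icc.mp hmm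
        rw [hU m hmm2.1 (by omega)]
      have e2 : ∑ m ∈ Finset.Icc 1 (n-1),
            θ m • (U 0 + ∑ i ∈ Finset.Icc 1 m, Kf m i • V i)
          = (∑ m ∈ Finset.Icc 1 (n-1), θ m) • U 0
            + ∑ m ∈ Finset.Icc 1 (n-1), ∑ i ∈ Finset.Icc 1 m, (θ m * Kf m i) • V i := by
        rw [Finset.sum_smul, ← Finset.sum_add_distrib]
        apply Finset.sum_congr rfl
        intro m _
        rw [smul_add, Finset.smul_sum]
        congr 1
        apply Finset.sum_congr rfl
        intro i _
        rw [smul_smul]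
      have e3 : ∑ m ∈ Finset.Icc 1 (n-1), ∑ i ∈ Finset.Icc 1 m, (θ m * Kf m i) • V i
          = ∑ i ∈ Finset.Icc 1 (n-1), Kf n i • V i := by
        rw [tri_swap]
        apply Finset.sum_congr rfl
        intro i hii
        rw [← Finset.sum_smul, heqK i hii]
      have e4 : μ0 • U 0 + (∑ m ∈ Finset.Icc 1 (n-1), θ m) • U 0 = U 0 := by
        rw [← add_smul, hμsum, one_smul]
      have hWU : W = U 0 + ∑ i ∈ Finset.Icc 1 (n-1), Kf n i • V i := by
        rw [e1, e2, e3, ← add_assoc, e4]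
      rw [hU n hn1 hnN, hWU, hicc, Finset.sum_insert hnmem]
      abel
    have hVn : ⟪ξ, V n⟫ ≤ ‖F n‖^2 / 4 := by
      have h2 := real_inner_self_eq_norm_sq (V n)
      have h3 := real_inner_le_norm (F n) (V n)
      rw [hξdef, inner_sub_left]
      nlinarith [sq_nonneg (‖F n‖ - 2*‖V n‖), h2, h3]
    have hKnn : 0 < Kf n n := hKfpos n n hn1 le_rfl hnN
    have hIH : ∀ m ∈ Finset.Icc 1 (n-1), θ m * Φ (U m)
        ≤ θ m * (Φ (U 0) + (1/4) * ∑ i ∈ Finset.Icc 1 m, Kf m i * ‖F i‖^2) := by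
      intro m hmm
      have hmm2 := Finset.mem_Icc.mp hmm
      exact mul_le_mul_of_nonneg_left (ih m (by omega) (by omega) hmm2.1) (hth0 m hmm)
    have hsum2 := Finset.sum_le_sum hIH
    have hswap2 : ∑ m ∈ Finset.Icc 1 (n-1),
          θ m * (Φ (U 0) + (1/4) * ∑ i ∈ Finset.Icc 1 m, Kf m i * ‖F i‖^2)
        = (∑ m ∈ Finset.Icc 1 (n-1), θ m) * Φ (U 0)
          + (1/4) * ∑ i ∈ Finset.Icc 1 (n-1), Kf n i * ‖F i‖^2 := by
      have ea : ∀ m ∈ Finset.Icc 1 (n-1),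
          θ m * (Φ (U 0) + (1/4) * ∑ i ∈ Finset.Icc 1 m, Kf m i * ‖F i‖^2)
            = θ m * Φ (U 0)
              + (1/4) * ∑ i ∈ Finset.Icc 1 m, (θ m * Kf m i) * ‖F i‖^2 := by
        intro m _
        have hx : ∑ i ∈ Finset.Icc 1 m, (θ m * Kf m i) * ‖F i‖^2
            = θ m * ∑ i ∈ Finset.Icc 1 m, Kf m i * ‖F i‖^2 := by
          rw [Finset.mul_sum]
          apply Finset.sum_congr rfl
          intro i _
          ring
        rw [hx]
        ring
      rw [Finset.sum_congr rfl ea, Finset.sum_add_distrib, ← Finset.sum_mul]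
      congr 1
      rw [← Finset.mul_sum, tri_swap]
      congr 1
      apply Finset.sum_congr rfl
      intro i hii
      rw [← Finset.sum_mul, heqK i hii]
    have hfin : ∑ i ∈ Finset.Icc 1 n, Kf n i * ‖F i‖^2
        = Kf n n * ‖F n‖^2 + ∑ i ∈ Finset.Icc 1 (n-1), Kf n i * ‖F i‖^2 := by
      rw [hicc, Finset.sum_insert hnmem]
    have hip : ⟪ξ, U n - W⟫ = Kf n n * ⟪ξ, V n⟫ := by
      rw [hUnW, real_inner_smul_right]
    have hKV : Kf n n * ⟪ξ, V n⟫ ≤ Kf n n * (‖F n‖^2/4) :=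
      mul_le_mul_of_nonneg_left hVn hKnn.le
    have hmul : μ0 * Φ (U 0) + (∑ m ∈ Finset.Icc 1 (n-1), θ m) * Φ (U 0) = Φ (U 0) := by
      linear_combination (Φ (U 0)) * hμsum
    linarith [hcomb, hsum2, hswap2, hip, hKV, hfin, hmul]
  intro n h1 h2
  exact main n h2 h1
end
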